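/- arXiv:2307.01170 — 11 statements merged into one kernel-verified Lean document; each statement's English description precedes it below -/
import Mathlib

section
/- Let c : X → Y be a concept and let x ∈ X have positive margin m_c(x) > 0. Then the open ball B(x, m_c(x)/3) is a mutually-labeling set for c, i.e. ρ(x₁, x₂) < m_c(x₁) for all x₁, x₂ ∈ B(x, m_c(x)/3). -/
open scoped ENNReal

/-- The margin of a point `x`: the infimum distance (in `[0,∞]`) to points of a
different class under the concept `c`; `∞` if no such point exists. -/
noncomputable def margin {X Y : Type*} [MetricSpace X] (c : X → Y) (x : X) : ℝ≥0∞ :=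
  ⨅ (x' : X) (_ : c x' ≠ c x), edist x x'

/-- A set `U` is mutually labeling for `c` if `ρ(x,x') < m_c(x)` for all `x, x' ∈ U`. -/
def MutuallyLabeling {X Y : Type*} [MetricSpace X] (c : X → Y) (U : Set X) : Prop :=
  ∀ x ∈ U, ∀ x' ∈ U, edist x x' < margin c x

theorem margin_le {X Y : Type*} [MetricSpace X] (c : X → Y) (x x' : X)
    (h : c x' ≠ c x) : margin c x ≤ edist x x' :=
  iInf₂_le x' h

/-- If `x` has positive margin, the open ball `B(x, m_c(x)/3)` is a mutually-labeling
set, i.e. `ρ(x₁,x₂) < m_c(x₁)` for all `x₁, x₂` in the ball. -/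
theorem ball_mutuallyLabeling {X Y : Type*} [MetricSpace X] (c : X → Y) (x : X)
    (hx : 0 < margin c x) :
    MutuallyLabeling c (EMetric.ball x (margin c x / 3)) := by
  set m := margin c x with hm
  intro x₁ h₁ x₂ h₂
  rw [EMetric.ball, EMetric.mem_ball] at h₁ h₂
  -- c x₁ = c x
  have hc1 : c x₁ = c x := by
    by_contra h
    have hle : m ≤ edist x x₁ := margin_le c x x₁ h
    have : m < m / 3 := lt_of_le_of_lt (by rwa [edist_comm] at hle) h₁
    have hle3 : m / 3 ≤ m := ENNReal.div_le_of_le_mul (by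
      calc m = m * 1 := (mul_one m).symm
        _ ≤ m * 3 := by gcongr; norm_num)
    exact absurd this (not_lt.mpr hle3)
  by_cases hfin : m = ⊤
  · -- no points of different label at all
    have hconst : ∀ x', c x' = c x := by
      intro x'
      by_contra h
      have := margin_le c x x' h
      rw [← hm, hfin] at this
      exact (edist_lt_top x x').ne (top_le_iff.mp this)
    have : margin c x₁ = ⊤ := by
      rw [margin]
      apply le_antisymm le_top
      apply le_iInf₂
      intro x' h'
      exact absurd ((hconst x').trans (hconst x₁).symm) h'
    rw [this]
    exact edist_lt_top x₁ x₂
  · have h3 : (m / 3) + (m / 3 + m / 3) = m := by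
      rw [← ENNReal.add_div, ← ENNReal.add_div]
      have : m + (m + m) = 3 * m := by ring
      rw [this, mul_comm, mul_div_assoc, ENNReal.div_self (by norm_num) (by norm_num), mul_one]
    have hmargin : m / 3 + m / 3 ≤ margin c x₁ := by
      apply le_iInf₂
      intro x' h'
      have h'' : c x' ≠ c x := by rwa [hc1] at h'
      have hle : m ≤ edist x x' := margin_le c x x' h''
      have htri : edist x x' ≤ edist x x₁ + edist x₁ x' := edist_triangle _ _ _
      have : m / 3 + (m / 3 + m / 3) ≤ m / 3 + edist x₁ x' := by
        rw [h3]
        calc m ≤ edist x x₁ + edist x₁ x' := hle.trans htri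
          _ ≤ m / 3 + edist x₁ x' := by
              gcongr
              exact le_of_lt (by rwa [edist_comm] at h₁)
      exact (ENNReal.add_le_add_iff_left (by simp [ENNReal.div_eq_top, hfin])).mp this
    calc edist x₁ x₂ ≤ edist x₁ x + edist x x₂ := edist_triangle _ _ _
      _ < m / 3 + m / 3 := ENNReal.add_lt_add h₁ (by rwa [edist_comm] at h₂)
      _ ≤ margin c x₁ := hmargin
end

section
/- Let U ⊆ X be a mutually-labeling set for a concept c, let (x_s)_{s≥1} be any sequence in X, and suppose x_t ∈ U for some time t. Then for every τ ≥ t and every x ∈ U, every index s ∈ {1, …, τ} satisfying ρ(x, x_s) ≤ ρ(x, x_{s'}) for all s' ∈ {1, …, τ} must satisfy c(x_s) = c(x). In particular, after time t the 1-nearest neighbor rule (with arbitrary tie-breaking) predicts correctly on every point of U. -/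
open scoped ENNReal

/-- Once some instance `x t` of the sequence `(x s)_{s ≥ 1}` lands in a
mutually-labeling set `U`, then for every later time `τ ≥ t` and every point `x ∈ U`,
any nearest neighbor `x s` (`1 ≤ s ≤ τ`) of `x` among `x 1, …, x τ` has the correct
label `c (x s) = c x`; in particular the 1-nearest neighbor rule (with arbitrary
tie-breaking) predicts correctly on all of `U` after time `t`. -/
theorem mutuallyLabeling_locally_learned {X Y : Type*} [MetricSpace X] (c : X → Y)
    (U : Set X) (hU : MutuallyLabeling c U) (x : ℕ → X) (t : ℕ) (ht : 1 ≤ t)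
    (hxt : x t ∈ U) :
    ∀ τ, t ≤ τ → ∀ p ∈ U, ∀ s, 1 ≤ s → s ≤ τ →
      (∀ s', 1 ≤ s' → s' ≤ τ → edist p (x s) ≤ edist p (x s')) →
      c (x s) = c p := by
  intro τ htτ p hp s hs1 hsτ hnear
  by_contra hne
  have h1 : margin c p ≤ edist p (x s) := iInf₂_le (x s) hne
  have h2 : edist p (x s) ≤ edist p (x t) := hnear t ht htτ
  have h3 : edist p (x t) < margin c p := hU p hp (x t) hxt
  exact lt_irrefl _ (h1.trans_lt (h2.trans_lt h3))
end

section
/- Let U_1, …, U_N be mutually-labeling sets for a concept c and let V = U_1 ∪ ⋯ ∪ U_N. Then for every sequence (x_s)_{s≥1} in X, the number of times t ≥ 2 at which x_t ∈ V and the 1-nearest neighbor rule makes a mistake at time t (under worst-case tie-breaking) is at most N. -/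
open scoped ENNReal

/-- The 1-nearest neighbor rule makes a mistake at time `t ≥ 2` on the sequence
`(x s)_{s ≥ 1}` labeled by `c`, under worst-case tie-breaking, if some nearest
neighbor `x s` (`1 ≤ s < t`) of `x t` has the wrong label. -/
def NNMistake {X Y : Type*} [MetricSpace X] (c : X → Y) (x : ℕ → X) (t : ℕ) : Prop :=
  ∃ s, 1 ≤ s ∧ s < t ∧ (∀ s', 1 ≤ s' → s' < t → edist (x t) (x s) ≤ edist (x t) (x s'))
    ∧ c (x s) ≠ c (x t)

/-- At most one mistake can occur in each mutually-labeling set. -/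
lemma no_second_mistake {X Y : Type*} [MetricSpace X] (c : X → Y) (Ui : Set X)
    (hUi : MutuallyLabeling c Ui) (x : ℕ → X) (t₁ t₂ : ℕ) (h1 : 1 ≤ t₁) (h12 : t₁ < t₂)
    (m1 : x t₁ ∈ Ui) (m2 : x t₂ ∈ Ui) (hm : NNMistake c x t₂) : False := by
  obtain ⟨s, hs1, hst, hnn, hne⟩ := hm
  have hlt : edist (x t₂) (x s) < margin c (x t₂) :=
    lt_of_le_of_lt (hnn t₁ h1 h12) (hUi _ m2 _ m1)
  have hle : margin c (x t₂) ≤ edist (x t₂) (x s) :=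
    le_trans (iInf_le _ (x s)) (iInf_le _ hne)
  exact absurd (lt_of_le_of_lt hle hlt) (lt_irrefl _)

/-- If `V` is the union of `N` mutually-labeling sets `U 0, …, U (N-1)` for `c`, then on
any sequence the 1-nearest neighbor rule makes at most `N` mistakes at times `t ≥ 2`
with `x t ∈ V`, even under worst-case tie-breaking. -/
theorem mistakes_le_of_union_mutuallyLabeling {X Y : Type*} [MetricSpace X] (c : X → Y)
    (N : ℕ) (U : Fin N → Set X) (hU : ∀ i, MutuallyLabeling c (U i)) :
    ∀ x : ℕ → X,
      {t : ℕ | 2 ≤ t ∧ x t ∈ (⋃ i, U i) ∧ NNMistake c x t}.encard ≤ N := by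
  intro x
  classical
  set S := {t : ℕ | 2 ≤ t ∧ x t ∈ (⋃ i, U i) ∧ NNMistake c x t} with hS
  rcases S.eq_empty_or_nonempty with he | ⟨t₀, ht₀⟩
  · simp [he]
  have hmem : ∀ t ∈ S, ∃ i, x t ∈ U i := fun t ht => Set.mem_iUnion.mp ht.2.1
  obtain ⟨i₀, _⟩ := hmem t₀ ht₀
  let f : ℕ → Fin N := fun t => if h : ∃ i, x t ∈ U i then h.choose else i₀
  have hf : ∀ t ∈ S, x t ∈ U (f t) := by
    intro t ht
    have h := hmem t ht
    simp only [f, dif_pos h]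
    exact h.choose_spec
  have key : ∀ a ∈ S, ∀ b ∈ S, f a = f b → a < b → False := by
    intro a ha b hb hab hlt
    exact no_second_mistake c (U (f a)) (hU (f a)) x a b (by have := ha.1; omega) hlt
      (hf a ha) (hab ▸ hf b hb) hb.2.2
  have hinj : Set.InjOn f S := by
    intro a ha b hb hab
    rcases lt_trichotomy a b with h | h | h
    · exact absurd (key a ha b hb hab h) not_false
    · exact h
    · exact absurd (key b hb a ha hab.symm h) not_false
  calc S.encard = (f '' S).encard := (hinj.encard_image).symm
    _ ≤ (Set.univ : Set (Fin N)).encard := Set.encard_mono (Set.subset_univ _)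
    _ = N := by simp [Set.encard_univ]
end

section
/- Let (X, ρ) be a totally bounded metric space and let c : X → Y be a concept with positive separation between classes: m := inf { ρ(x, x') : c(x) ≠ c(x') } > 0. Then there is a finite number N (one may take N to be the minimal number of open balls of radius m/3 needed to cover X) such that for every sequence (x_t)_{t≥1} in X, the 1-nearest neighbor rule makes at most N mistakes in total, even under worst-case tie-breaking; in particular it achieves sublinear regret on c. -/
open scoped ENNReal

/-- If `X` is totally bounded and the classes of `c` have positive separation
`m := inf { ρ(x,x') : c x ≠ c x' } > 0`, then there is a finite number `N` — one may
take `N` so that `X` is covered by `N` open balls of radius `m/3` — such that on every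
sequence the 1-nearest neighbor rule makes at most `N` mistakes in total, even under
worst-case tie-breaking; in particular it achieves sublinear regret on `c`. -/
theorem finitely_many_mistakes_of_separation {X Y : Type*} [MetricSpace X]
    (htb : TotallyBounded (Set.univ : Set X)) (c : X → Y) (m : ℝ≥0∞)
    (hm : m = ⨅ (p : X × X) (_ : c p.1 ≠ c p.2), edist p.1 p.2) (hpos : 0 < m) :
    ∃ N : ℕ,
      (∃ S : Finset X, S.card = N ∧ (Set.univ : Set X) ⊆ ⋃ y ∈ S, EMetric.ball y (m / 3)) ∧
      ∀ x : ℕ → X, {t : ℕ | 2 ≤ t ∧ NNMistake c x t}.encard ≤ N := by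

  have hε : (0:ℝ≥0∞) < m / 3 := ENNReal.div_pos hpos.ne' (by norm_num)
  obtain ⟨t0, ht0fin, ht0cov⟩ := EMetric.totallyBounded_iff.mp htb (m/3) hε
  refine ⟨ht0fin.toFinset.card, ⟨ht0fin.toFinset, rfl, by
    intro a _; simpa [EMetric.ball, Metric.mem_eball] using ht0cov (Set.mem_univ a)⟩, ?_⟩
  intro x
  have hc : ∀ a : X, ∃ y, y ∈ t0 ∧ a ∈ EMetric.ball y (m/3) := by
    intro a
    have := ht0cov (Set.mem_univ a)
    simpa [EMetric.ball, Metric.mem_eball] using this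
  choose f hf1 hf2 using hc
  -- points in the same ball are within distance < m
  have hclose : ∀ a b : X, f a = f b → edist a b < m := by
    intro a b hab
    have h1 : edist a (f a) < m / 3 := EMetric.mem_ball.mp (hf2 a)
    have h2 : edist (f b) b < m / 3 := by
      rw [edist_comm]; exact EMetric.mem_ball.mp (hf2 b)
    have hsum : m / 3 + m / 3 ≤ m := by
      have h3 : m / 3 + m / 3 + m / 3 = m := ENNReal.add_thirds m
      calc m / 3 + m / 3 ≤ m / 3 + m / 3 + m / 3 := le_self_add
        _ = m := h3
    calc edist a b ≤ edist a (f a) + edist (f b) b := by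
          rw [hab]; exact edist_triangle a (f b) b
      _ < m / 3 + m / 3 := ENNReal.add_lt_add h1 h2
      _ ≤ m := hsum
  -- separation: differing labels are at distance ≥ m
  have hsep : ∀ a b : X, c a ≠ c b → m ≤ edist a b := by
    intro a b hab
    rw [hm]
    exact iInf₂_le (a, b) hab
  have hinj : Set.InjOn (fun t => f (x t)) {t : ℕ | 2 ≤ t ∧ NNMistake c x t} := by
    have key : ∀ t t', t ∈ {t : ℕ | 2 ≤ t ∧ NNMistake c x t} →
        t' ∈ {t : ℕ | 2 ≤ t ∧ NNMistake c x t} → t < t' → f (x t) ≠ f (x t') := by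
      intro t t' ht ht' hlt heq
      obtain ⟨-, s, hs1, hs2, hmin, hne⟩ := ht'
      have h1 : m ≤ edist (x t') (x s) := by
        have := hsep (x s) (x t') hne
        rwa [edist_comm] at this
      have h2 : m ≤ edist (x t') (x t) :=
        h1.trans (hmin t (le_trans (by norm_num) ht.1) hlt)
      have h3 : edist (x t') (x t) < m := hclose (x t') (x t) heq.symm
      exact absurd h2 h3.not_ge
    intro t ht t' ht' heq
    rcases lt_trichotomy t t' with h | h | h
    · exact absurd heq (key t t' ht ht' h)
    · exact h
    · exact absurd heq.symm (key t' t ht' ht h)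
  calc {t : ℕ | 2 ≤ t ∧ NNMistake c x t}.encard
      = ((fun t => f (x t)) '' {t : ℕ | 2 ≤ t ∧ NNMistake c x t}).encard :=
        (hinj.encard_image).symm
    _ ≤ (↑ht0fin.toFinset : Set X).encard := by
        apply Set.encard_mono
        rintro y ⟨t, -, rfl⟩
        simpa using hf1 (x t)
    _ = ht0fin.toFinset.card := Set.encard_coe_eq_coe_finsetCard _
end

section
/- Let (X, ρ) be a totally bounded metric space and let c : X → Y be a concept with no positive separation between classes: inf { ρ(x, x') : c(x) ≠ c(x') } = 0. Then there exists a sequence (x_t)_{t≥1} in X such that, under worst-case tie-breaking, the 1-nearest neighbor rule fails to achieve sublinear regret; in fact liminf_{T→∞} (1/T) · #{ 2 ≤ t ≤ T : the rule makes a mistake at time t } ≥ 1/2. -/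
open scoped ENNReal

private lemma nn_listlb {α : Type*} (f : α → ℝ) (L : List α) :
    ∃ δ : ℝ, 0 < δ ∧ ∀ p ∈ L, f p ≤ 0 ∨ δ ≤ f p := by
  induction L with
  | nil => exact ⟨1, one_pos, by simp⟩
  | cons q L ih =>
    obtain ⟨δ, hδ, h⟩ := ih
    by_cases hq : f q ≤ 0
    · refine ⟨δ, hδ, ?_⟩
      intro p hp
      rcases List.mem_cons.mp hp with rfl | hp
      · exact Or.inl hq
      · exact h p hp
    · refine ⟨min δ (f q), lt_min hδ (not_le.mp hq), ?_⟩
      intro p hp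
      rcases List.mem_cons.mp hp with rfl | hp
      · exact Or.inr (min_le_right _ _)
      · rcases h p hp with h' | h'
        · exact Or.inl h'
        · exact Or.inr (le_trans (min_le_left _ _) h')

private lemma nn_goodpair {X Y Z : Type*} [MetricSpace X] [MetricSpace Z] {e : X → Z}
    (he : Isometry e) (c : X → Y) (z : Z)
    (P : ∀ δ : ℝ, 0 < δ → ∃ u v : X, c u ≠ c v ∧ dist (e u) z < δ ∧ dist (e v) z < δ)
    (L : List X) :
    ∃ a b : X, c a ≠ c b ∧ ∃ s ∈ a :: L, c s ≠ c b ∧ ∀ p ∈ a :: L, dist b s ≤ dist b p := by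
  obtain ⟨δ, hδ0, hδ⟩ := nn_listlb (fun p => dist (e p) z) L
  obtain ⟨u, v, huv, hu, hv⟩ := P (δ/3) (by positivity)
  have hdlb : ∀ p ∈ L, dist (e p) z ≠ 0 → δ ≤ dist (e p) z := by
    intro p hp hne
    rcases hδ p hp with h | h
    · exact absurd (le_antisymm h dist_nonneg) hne
    · exact h
  by_cases hp0 : ∃ p0 ∈ L, dist (e p0) z = 0
  · obtain ⟨p0, hp0L, hp0z⟩ := hp0
    have huniq : ∀ p ∈ L, dist (e p) z = 0 → p = p0 := by
      intro p hp hpz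
      have h1 : dist p p0 ≤ 0 := by
        rw [← he.dist_eq]
        calc dist (e p) (e p0) ≤ dist (e p) z + dist (e p0) z := dist_triangle_right _ _ _
          _ ≤ 0 := by rw [hpz, hp0z]; norm_num
      exact dist_le_zero.mp h1
    have H : ∀ a b : X, c a ≠ c b → c p0 ≠ c b →
        dist (e a) z < δ/3 → dist (e b) z < δ/3 →
        ∃ s ∈ a :: L, c s ≠ c b ∧ ∀ p ∈ a :: L, dist b s ≤ dist b p := by
      intro a b hab hpb ha hb
      have hba : dist b a < 2*δ/3 := by
        rw [← he.dist_eq]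
        calc dist (e b) (e a) ≤ dist (e b) z + dist (e a) z := dist_triangle_right _ _ _
          _ < δ/3 + δ/3 := by linarith
          _ = 2*δ/3 := by ring
      have hbp0 : dist b p0 < δ/3 := by
        rw [← he.dist_eq]
        calc dist (e b) (e p0) ≤ dist (e b) z + dist (e p0) z := dist_triangle_right _ _ _
          _ < δ/3 + 0 := by rw [hp0z]; linarith
          _ = δ/3 := by ring
      have hfar : ∀ p ∈ L, p ≠ p0 → 2*δ/3 ≤ dist b p := by
        intro p hp hne
        have hz : dist (e p) z ≠ 0 := fun h => hne (huniq p hp h)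
        have h1 : δ ≤ dist (e p) z := hdlb p hp hz
        have h2 : dist (e p) z ≤ dist (e p) (e b) + dist (e b) z := dist_triangle _ _ _
        have h3 : dist b p = dist (e p) (e b) := by rw [← he.dist_eq, dist_comm]
        rw [h3]
        linarith
      by_cases hs : dist b a ≤ dist b p0
      · refine ⟨a, List.mem_cons_self, hab, ?_⟩
        intro p hp
        rcases List.mem_cons.mp hp with rfl | hp
        · exact le_refl _
        · by_cases hpp : p = p0
          · subst hpp; exact hs
          · linarith [hfar p hp hpp]
      · refine ⟨p0, List.mem_cons_of_mem _ hp0L, hpb, ?_⟩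
        intro p hp
        rcases List.mem_cons.mp hp with rfl | hp
        · exact le_of_lt (not_le.mp hs)
        · by_cases hpp : p = p0
          · subst hpp; exact le_refl _
          · linarith [hfar p hp hpp]
    by_cases hc : c p0 = c v
    · have h1 : c p0 ≠ c u := fun h => huv (h.symm.trans hc)
      obtain ⟨s, hs⟩ := H v u (fun h => huv h.symm) h1 hv hu
      exact ⟨v, u, fun h => huv h.symm, s, hs⟩
    · obtain ⟨s, hs⟩ := H u v huv hc hu hv
      exact ⟨u, v, huv, s, hs⟩
  · push_neg at hp0
    refine ⟨u, v, huv, u, List.mem_cons_self, huv, ?_⟩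
    intro p hp
    rcases List.mem_cons.mp hp with rfl | hp
    · exact le_refl _
    · have h1 : δ ≤ dist (e p) z := hdlb p hp (hp0 p hp)
      have hvu : dist v u < 2*δ/3 := by
        rw [← he.dist_eq]
        calc dist (e v) (e u) ≤ dist (e v) z + dist (e u) z := dist_triangle_right _ _ _
          _ < δ/3 + δ/3 := by linarith
          _ = 2*δ/3 := by ring
      have h2 : dist (e p) z ≤ dist (e p) (e v) + dist (e v) z := dist_triangle _ _ _
      have h3 : dist v p = dist (e p) (e v) := by rw [← he.dist_eq, dist_comm]
      rw [h3] at *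
      linarith

/-- If `X` is totally bounded and there is no positive separation between the classes
of `c`, then there is a sequence on which the 1-nearest neighbor rule, under worst-case
tie-breaking, fails to achieve sublinear regret; in fact its asymptotic mistake rate
has liminf at least `1/2`. -/
theorem exists_bad_sequence_of_no_separation {X Y : Type*} [MetricSpace X]
    (htb : TotallyBounded (Set.univ : Set X)) (c : X → Y)
    (hsep : (⨅ (p : X × X) (_ : c p.1 ≠ c p.2), edist p.1 p.2) = 0) :
    ∃ x : ℕ → X,
      (1 : ℝ) / 2 ≤ Filter.liminf
        (fun T : ℕ => (({t : ℕ | 2 ≤ t ∧ t ≤ T ∧ NNMistake c x t}).ncard : ℝ) / T)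
        Filter.atTop := by
  classical
  -- extract pairs of nearby points with different labels at every scale
  have hpair : ∀ δ : ℝ, 0 < δ → ∃ u v : X, c u ≠ c v ∧ dist u v < δ := by
    intro δ hδ
    have h0 : (⨅ (p : X × X) (_ : c p.1 ≠ c p.2), edist p.1 p.2) < ENNReal.ofReal δ := by
      rw [hsep]; exact ENNReal.ofReal_pos.mpr hδ
    rw [iInf_lt_iff] at h0
    obtain ⟨p, hp⟩ := h0
    rw [iInf_lt_iff] at hp
    obtain ⟨hne, hlt⟩ := hp
    exact ⟨p.1, p.2, hne, edist_lt_ofReal.mp hlt⟩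
  obtain ⟨x0, -, -, -⟩ := hpair 1 one_pos
  have hseq : ∀ n : ℕ, ∃ uv : X × X, c uv.1 ≠ c uv.2 ∧ dist uv.1 uv.2 < 1/(n+1) := by
    intro n
    obtain ⟨u, v, h1, h2⟩ := hpair (1/(n+1)) (by positivity)
    exact ⟨(u, v), h1, h2⟩
  choose q hq1 hq2 using hseq
  -- pass to the completion to find a cluster point of the pairs
  set Z := UniformSpace.Completion X with hZ
  set e : X → Z := ((↑) : X → Z) with he_def
  have he : Isometry e := UniformSpace.Completion.coe_isometry
  have hK : IsCompact (closure (e '' Set.univ)) := by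
    rw [isCompact_iff_totallyBounded_isComplete]
    exact ⟨(htb.image he.uniformContinuous).closure, isClosed_closure.isComplete⟩
  have hmem : ∀ n, e (q n).1 ∈ closure (e '' Set.univ) := fun n =>
    subset_closure ⟨(q n).1, Set.mem_univ _, rfl⟩
  obtain ⟨z, -, φ, hφ, hz⟩ := hK.tendsto_subseq hmem
  -- the density property around the cluster point
  have P : ∀ δ : ℝ, 0 < δ → ∃ u v : X, c u ≠ c v ∧ dist (e u) z < δ ∧ dist (e v) z < δ := by
    intro δ hδ
    obtain ⟨N1, hN1⟩ := Metric.tendsto_atTop.mp hz (δ/2) (by positivity)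
    obtain ⟨N2, hN2⟩ := exists_nat_gt (2/δ)
    set n := max N1 N2 with hn
    have hu : dist (e (q (φ n)).1) z < δ/2 := hN1 n (le_max_left _ _)
    have hsmall : dist (q (φ n)).1 (q (φ n)).2 < δ/2 := by
      have h1 : dist (q (φ n)).1 (q (φ n)).2 < 1/((φ n : ℝ)+1) := hq2 (φ n)
      have h2 : (2/δ : ℝ) < (φ n : ℝ) + 1 := by
        have hle : (n : ℝ) ≤ (φ n : ℝ) := Nat.cast_le.mpr hφ.le_apply
        have hle2 : (N2 : ℝ) ≤ (n : ℝ) := Nat.cast_le.mpr (le_max_right _ _)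
        linarith
      have h3 : (0:ℝ) < (φ n : ℝ) + 1 := by positivity
      have h4 : 1/((φ n : ℝ)+1) < δ/2 := by
        rw [div_lt_div_iff₀ h3 (by norm_num : (0:ℝ) < 2)]
        have := (div_lt_iff₀ hδ).mp h2
        nlinarith
      linarith
    refine ⟨(q (φ n)).1, (q (φ n)).2, hq1 (φ n), by linarith, ?_⟩
    calc dist (e (q (φ n)).2) z ≤ dist (e (q (φ n)).2) (e (q (φ n)).1) + dist (e (q (φ n)).1) z :=
          dist_triangle _ _ _
      _ < δ/2 + δ/2 := by
          rw [he.dist_eq, dist_comm]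
          exact add_lt_add hsmall hu
      _ = δ := by ring
  -- choose the adversarial pairs
  choose fa fb hab hspec using nn_goodpair he c z P
  set g : List X → List X := fun L => L ++ [fa L, fb L] with hg
  set h : ℕ → List X := fun n => g^[n] [] with hh
  have hstep : ∀ n, h (n+1) = h n ++ [fa (h n), fb (h n)] := by
    intro n
    show g^[n+1] [] = _
    rw [Function.iterate_succ_apply']
  have hlen : ∀ n, (h n).length = 2*n := by
    intro n
    induction n with
    | zero => rfl
    | succ n ih => rw [hstep n]; simp [ih]; omega
  have hpre : ∀ m n, m ≤ n → h m <+: h n := by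
    intro m n hmn
    induction n with
    | zero => rw [Nat.le_zero.mp hmn]
    | succ n ih =>
      rcases Nat.lt_succ_iff_lt_or_eq.mp (Nat.lt_succ_of_le hmn) with hlt | heq
      · refine (ih (Nat.lt_succ_iff.mp hlt)).trans ?_
        rw [hstep n]; exact List.prefix_append _ _
      · rw [heq]
  have hgetD : ∀ m n i, m ≤ n → i < 2*m → (h n).getD i x0 = (h m).getD i x0 := by
    intro m n i hmn hi
    obtain ⟨t, ht⟩ := hpre m n hmn
    rw [← ht, List.getD_append _ _ _ _ (by rw [hlen]; exact hi)]
  set x : ℕ → X := fun t => (h t).getD (t-1) x0 with hx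
  have hxval : ∀ n i, i < 2*n → x (i+1) = (h n).getD i x0 := by
    intro n i hi
    show (h (i+1)).getD (i+1-1) x0 = _
    simp only [Nat.add_sub_cancel]
    rcases le_total n (i+1) with hc | hc
    · exact hgetD n (i+1) i hc hi
    · exact (hgetD (i+1) n i hc (by omega)).symm
  have hxa : ∀ k, x (2*k+1) = fa (h k) := by
    intro k
    rw [hxval (k+1) (2*k) (by omega), hstep k,
      List.getD_append_right _ _ _ _ (by rw [hlen])]
    rw [hlen]
    simp
  have hxb : ∀ k, x (2*k+2) = fb (h k) := by
    intro k
    have : 2*k+2 = (2*k+1)+1 := rfl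
    rw [this, hxval (k+1) (2*k+1) (by omega), hstep k,
      List.getD_append_right _ _ _ _ (by rw [hlen]; omega)]
    rw [hlen]
    have : 2*k+1 - 2*k = 1 := by omega
    rw [this]
    simp
  -- membership of earlier points
  have hxmem : ∀ k s', 1 ≤ s' → s' < 2*k+2 → x s' ∈ fa (h k) :: h k := by
    intro k s' h1 h2
    have hs' : s' = (s'-1)+1 := by omega
    rcases Nat.lt_or_ge (s'-1) (2*k) with hlt | hge
    · rw [hs', hxval k (s'-1) hlt, List.getD_eq_getElem _ _ (by rw [hlen]; exact hlt)]
      exact List.mem_cons_of_mem _ (List.getElem_mem _)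
    · have : s' = 2*k+1 := by omega
      rw [this, hxa k]
      exact List.mem_cons_self
  -- the rule errs at every even time
  have hmis : ∀ k : ℕ, NNMistake c x (2*k+2) := by
    intro k
    obtain ⟨s, hsmem, hslab, hsmin⟩ := hspec (h k)
    obtain ⟨j, hj1, hj2, hxj⟩ : ∃ j, 1 ≤ j ∧ j < 2*k+2 ∧ x j = s := by
      rcases List.mem_cons.mp hsmem with rfl | hsL
      · exact ⟨2*k+1, by omega, by omega, hxa k⟩
      · obtain ⟨i, hi, hie⟩ := List.getElem_of_mem hsL
        have hi' : i < 2*k := by rw [hlen] at hi; exact hi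
        refine ⟨i+1, by omega, by omega, ?_⟩
        rw [hxval k i hi', List.getD_eq_getElem _ _ hi, hie]
    refine ⟨j, hj1, hj2, ?_, ?_⟩
    · intro s' hs'1 hs'2
      have hmem' := hxmem k s' hs'1 hs'2
      have hd := hsmin (x s') hmem'
      rw [hxb k, hxj]
      rw [edist_dist, edist_dist]
      exact ENNReal.ofReal_le_ofReal hd
    · rw [hxj, hxb k]
      exact hslab
  -- counting mistakes
  refine ⟨x, ?_⟩
  have hfin : ∀ T : ℕ, ({t : ℕ | 2 ≤ t ∧ t ≤ T ∧ NNMistake c x t}).Finite := fun T =>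
    (Set.finite_Icc 2 T).subset (fun t ht => ⟨ht.1, ht.2.1⟩)
  have hcard : ∀ T : ℕ, (T/2 : ℕ) ≤ ({t : ℕ | 2 ≤ t ∧ t ≤ T ∧ NNMistake c x t}).ncard := by
    intro T
    have himg : (fun j => 2*j+2) '' (Set.Iio (T/2)) ⊆ {t : ℕ | 2 ≤ t ∧ t ≤ T ∧ NNMistake c x t} := by
      rintro t ⟨j, hj, rfl⟩
      simp only [Set.mem_Iio] at hj
      show 2 ≤ 2*j+2 ∧ 2*j+2 ≤ T ∧ NNMistake c x (2*j+2)
      exact ⟨by omega, by omega, hmis j⟩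
    calc (T/2 : ℕ) = (Set.Iio (T/2)).ncard := by
          rw [← Finset.coe_range, Set.ncard_coe_finset, Finset.card_range]
      _ = ((fun j => 2*j+2) '' (Set.Iio (T/2))).ncard :=
          (Set.ncard_image_of_injective _ (fun a b hab => by omega)).symm
      _ ≤ _ := Set.ncard_le_ncard himg (hfin T)
  have hub : ∀ T : ℕ, ({t : ℕ | 2 ≤ t ∧ t ≤ T ∧ NNMistake c x t}).ncard ≤ T := by
    intro T
    calc ({t : ℕ | 2 ≤ t ∧ t ≤ T ∧ NNMistake c x t}).ncard
        ≤ (Set.Icc 2 T).ncard :=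
          Set.ncard_le_ncard (fun t ht => ⟨ht.1, ht.2.1⟩) (Set.finite_Icc 2 T)
      _ ≤ T := by
          rw [← Finset.coe_Icc, Set.ncard_coe_finset, Nat.card_Icc]
          omega
  set v : ℕ → ℝ := fun T => (({t : ℕ | 2 ≤ t ∧ t ≤ T ∧ NNMistake c x t}).ncard : ℝ) / T with hv
  have h1 : Filter.Tendsto (fun T : ℕ => 1/2 - 1/(T:ℝ)) Filter.atTop (nhds ((1:ℝ)/2)) := by
    have := Filter.Tendsto.const_sub (1/2 : ℝ) tendsto_one_div_atTop_nhds_zero_nat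
    simpa using this
  have hev : ∀ᶠ T in Filter.atTop, (fun T : ℕ => 1/2 - 1/(T:ℝ)) T ≤ v T := by
    rw [Filter.eventually_atTop]
    refine ⟨1, fun T hT => ?_⟩
    have hT0 : (0:ℝ) < T := by exact_mod_cast hT
    have hn : ((T/2 : ℕ):ℝ) ≤ (({t : ℕ | 2 ≤ t ∧ t ≤ T ∧ NNMistake c x t}).ncard : ℝ) :=
      Nat.cast_le.mpr (hcard T)
    have h2 : ((T:ℝ) - 1)/2 ≤ ((T/2 : ℕ):ℝ) := by
      have h3 : T ≤ 2*(T/2)+1 := by omega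
      have h4 : (T:ℝ) ≤ 2*((T/2 : ℕ):ℝ)+1 := by exact_mod_cast h3
      linarith
    show 1/2 - 1/(T:ℝ) ≤ _ / (T:ℝ)
    rw [le_div_iff₀ hT0]
    have h5 : (1/2 - 1/(T:ℝ))*(T:ℝ) = (T:ℝ)/2 - 1 := by field_simp
    rw [h5]
    linarith
  have hcob : Filter.IsCoboundedUnder (· ≥ ·) Filter.atTop v := by
    refine Filter.isCoboundedUnder_ge_of_le Filter.atTop (x := 1) (fun T => ?_)
    rcases Nat.eq_zero_or_pos T with rfl | hT
    · simp [hv]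
    · have hT0 : (0:ℝ) < T := by exact_mod_cast hT
      show (_ : ℝ) / (T:ℝ) ≤ 1
      rw [div_le_one hT0]
      exact_mod_cast hub T
  calc (1:ℝ)/2 = Filter.liminf (fun T : ℕ => 1/2 - 1/(T:ℝ)) Filter.atTop := (h1.liminf_eq).symm
    _ ≤ Filter.liminf v Filter.atTop :=
        Filter.liminf_le_liminf hev h1.isBoundedUnder_ge hcob
end

section
/- Let (X, ρ) be a length space and c : X → Y a concept. Then for every x ∈ X, the margin equals the distance to the boundary set: m_c(x) = inf { ρ(x, z) : z ∈ ∂X }, where both sides are interpreted in [0, ∞] (an infimum over the empty set being ∞). -/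
open scoped ENNReal

/-- `(X, ρ)` is a length space: the distance between two points is the infimum of the
lengths (total variations) of continuous paths `γ : [0,1] → X` joining them. -/
def IsLengthSpace (X : Type*) [MetricSpace X] : Prop :=
  ∀ x x' : X, edist x x' =
    ⨅ (γ : ℝ → X) (_ : ContinuousOn γ (Set.Icc 0 1)) (_ : γ 0 = x) (_ : γ 1 = x'),
      eVariationOn γ (Set.Icc 0 1)

lemma margin_le_of_boundary {X Y : Type*} [MetricSpace X] (c : X → Y) (x z : X)
    (hz : margin c z = 0) : margin c x ≤ edist x z := by
  by_cases h : c z = c x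
  · refine ENNReal.le_of_forall_pos_le_add (fun ε hε _ => ?_)
    have hlt : margin c z < (ε : ℝ≥0∞) := by
      rw [hz]; exact_mod_cast hε
    rw [margin] at hlt
    obtain ⟨x', hx'⟩ := iInf_lt_iff.mp hlt
    obtain ⟨hne, hlt'⟩ := iInf_lt_iff.mp hx'
    calc margin c x ≤ edist x x' := iInf₂_le x' (h ▸ hne)
      _ ≤ edist x z + edist z x' := edist_triangle _ _ _
      _ ≤ edist x z + ε := add_le_add le_rfl hlt'.le
  · exact iInf₂_le z h

lemma exists_boundary_on_path {X Y : Type*} [MetricSpace X] (c : X → Y)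
    (γ : ℝ → X) (hγ : ContinuousOn γ (Set.Icc 0 1))
    (h0 : c (γ 0) ≠ c (γ 1)) :
    ∃ t ∈ Set.Icc (0:ℝ) 1, margin c (γ t) = 0 := by
  set A := {t ∈ Set.Icc (0:ℝ) 1 | c (γ t) = c (γ 0)} with hA
  have hA0 : (0:ℝ) ∈ A := ⟨⟨le_refl 0, zero_le_one⟩, rfl⟩
  have hAne : A.Nonempty := ⟨0, hA0⟩
  have hAbdd : BddAbove A := ⟨1, fun t ht => ht.1.2⟩
  set T := sSup A with hTdef
  have hT0 : 0 ≤ T := le_csSup hAbdd hA0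
  have hT1 : T ≤ 1 := csSup_le hAne (fun t ht => ht.1.2)
  have hTmem : T ∈ Set.Icc (0:ℝ) 1 := ⟨hT0, hT1⟩
  refine ⟨T, hTmem, ?_⟩
  refine le_antisymm ?_ zero_le
  refine ENNReal.le_of_forall_pos_le_add (fun ε hε _ => ?_)
  rw [zero_add]
  have hc := hγ T hTmem
  rw [Metric.continuousWithinAt_iff] at hc
  obtain ⟨δ, hδ, hδ'⟩ := hc ε (by exact_mod_cast hε)
  by_cases hT : c (γ T) = c (γ 0)
  · have hTlt1 : T < 1 := lt_of_le_of_ne hT1 (fun h => h0 (by rw [← hT, h]))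
    set t := min (T + δ/2) 1 with htdef
    have ht1 : t ≤ 1 := min_le_right _ _
    have htT : T < t := lt_min (by linarith) hTlt1
    have htmem : t ∈ Set.Icc (0:ℝ) 1 := ⟨le_trans hT0 htT.le, ht1⟩
    have htne : c (γ t) ≠ c (γ 0) := by
      intro h
      exact absurd (le_csSup hAbdd ⟨htmem, h⟩) (not_le.mpr htT)
    have hdist : dist t T < δ := by
      rw [Real.dist_eq, abs_of_nonneg (by linarith)]
      have h2 : t ≤ T + δ/2 := min_le_left _ _
      linarith
    have hεd := hδ' htmem hdist
    refine le_trans (iInf₂_le (γ t) ?_) ?_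
    · rw [hT]; exact htne
    · rw [edist_dist, dist_comm]
      calc ENNReal.ofReal (dist (γ t) (γ T)) ≤ ENNReal.ofReal ε :=
            ENNReal.ofReal_le_ofReal hεd.le
        _ = (ε : ℝ≥0∞) := ENNReal.ofReal_coe_nnreal
  · obtain ⟨a, haA, halt⟩ := exists_lt_of_lt_csSup hAne (by linarith : T - δ < T)
    have haT : a ≤ T := le_csSup hAbdd haA
    have hdist : dist a T < δ := by
      rw [Real.dist_eq, abs_of_nonpos (by linarith)]; linarith
    have hεd := hδ' haA.1 hdist
    refine le_trans (iInf₂_le (γ a) ?_) ?_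
    · rw [haA.2]; exact fun h => hT h.symm
    · rw [edist_dist, dist_comm]
      calc ENNReal.ofReal (dist (γ a) (γ T)) ≤ ENNReal.ofReal ε :=
            ENNReal.ofReal_le_ofReal hεd.le
        _ = (ε : ℝ≥0∞) := ENNReal.ofReal_coe_nnreal

/-- In a length space, the margin of a point equals its distance (in `[0,∞]`) to the
boundary set `∂X = {z | m_c(z) = 0}`, the infimum over the empty set being `∞`. -/
theorem margin_eq_edist_boundary {X Y : Type*} [MetricSpace X]
    (hX : IsLengthSpace X) (c : X → Y) :
    ∀ x : X, margin c x = ⨅ (z : X) (_ : margin c z = 0), edist x z := by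
  intro x
  apply le_antisymm
  · exact le_iInf₂ fun z hz => margin_le_of_boundary c x z hz
  · refine le_iInf₂ fun x' hx' => ?_
    rw [hX x x']
    refine le_iInf fun γ => le_iInf fun hγ => le_iInf fun hγ0 => le_iInf fun hγ1 => ?_
    obtain ⟨t, ht, hmt⟩ := exists_boundary_on_path c γ hγ
      (by rw [hγ0, hγ1]; exact fun h => hx' h.symm)
    refine le_trans (iInf₂_le (γ t) hmt) ?_
    have h := eVariationOn.edist_le γ (Set.left_mem_Icc.mpr zero_le_one) ht
    rw [hγ0] at h
    exact h
end

section
/- Let (X, ρ) be a length space and c : X → Y a concept. Then for every r > 0, the set { x ∈ X : m_c(x) < r } equals the open r-thickening of the boundary set: { x ∈ X : ∃ z ∈ ∂X, ρ(x, z) < r }. -/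
open scoped ENNReal

lemma margin_lt_iff' {X Y : Type*} [MetricSpace X] (c : X → Y) (x : X) (r : ℝ≥0∞) :
    margin c x < r ↔ ∃ x', c x' ≠ c x ∧ edist x x' < r := by
  simp [margin, iInf_lt_iff]

lemma margin_le_edist {X Y : Type*} [MetricSpace X] (c : X → Y) {x w : X}
    (h : c w ≠ c x) : margin c x ≤ edist x w :=
  iInf_le_of_le w (iInf_le_of_le h le_rfl)

lemma margin_eq_zero_iff' {X Y : Type*} [MetricSpace X] (c : X → Y) (z : X) :
    margin c z = 0 ↔ ∀ ε : ℝ≥0∞, 0 < ε → ∃ w, c w ≠ c z ∧ edist z w < ε := by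
  constructor
  · intro h ε hε
    rw [← margin_lt_iff', h]; exact hε
  · intro h
    by_contra hne
    obtain ⟨w, hw, hlt⟩ := h _ (pos_iff_ne_zero.mpr hne)
    exact absurd (lt_of_le_of_lt (margin_le_edist c hw) hlt) (lt_irrefl _)

/-- In a length space, for every `r > 0` the set of points of margin less than `r`
is exactly the open `r`-thickening of the boundary set `∂X = {z | m_c(z) = 0}`. -/
theorem margin_lt_iff_near_boundary {X Y : Type*} [MetricSpace X]
    (hX : IsLengthSpace X) (c : X → Y) :
    ∀ r : ℝ≥0∞, 0 < r →
      {x : X | margin c x < r} = {x : X | ∃ z : X, margin c z = 0 ∧ edist x z < r} := by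
  intro r hr
  ext x
  simp only [Set.mem_setOf_eq]
  constructor
  · intro hx
    obtain ⟨x', hne, hlt⟩ := (margin_lt_iff' c x r).mp hx
    rw [hX x x', iInf_lt_iff] at hlt
    obtain ⟨γ, hlt⟩ := hlt
    rw [iInf_lt_iff] at hlt; obtain ⟨hcont, hlt⟩ := hlt
    rw [iInf_lt_iff] at hlt; obtain ⟨h0, hlt⟩ := hlt
    rw [iInf_lt_iff] at hlt; obtain ⟨h1, hlt⟩ := hlt
    set S := {t : ℝ | t ∈ Set.Icc (0:ℝ) 1 ∧ c (γ t) = c x} with hSdef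
    have hS0 : (0:ℝ) ∈ S := ⟨⟨le_refl 0, zero_le_one⟩, by rw [h0]⟩
    have hSne : S.Nonempty := ⟨0, hS0⟩
    have hSbdd : BddAbove S := ⟨1, fun t ht => ht.1.2⟩
    set s := sSup S with hsdef
    have hs0 : 0 ≤ s := le_csSup hSbdd hS0
    have hs1 : s ≤ 1 := csSup_le hSne (fun t ht => ht.1.2)
    have hsmem : s ∈ Set.Icc (0:ℝ) 1 := ⟨hs0, hs1⟩
    refine ⟨γ s, ?_, ?_⟩
    · rw [margin_eq_zero_iff']
      intro ε hε
      have hc : ContinuousWithinAt γ (Set.Icc 0 1) s := hcont s hsmem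
      have htend := hc.tendsto
      rw [EMetric.tendsto_nhds] at htend
      have hev := htend ε hε
      obtain ⟨δ, hδ, hδ'⟩ := Metric.mem_nhdsWithin_iff.mp hev
      by_cases hcs : c (γ s) = c x
      · have hslt : s < 1 := by
          rcases lt_or_eq_of_le hs1 with h | h
          · exact h
          · exact absurd (by rw [← h1, ← h]; exact hcs) hne
        set t := min 1 (s + δ/2) with htdef
        have hts : s < t := lt_min hslt (by linarith)
        have htI : t ∈ Set.Icc (0:ℝ) 1 := ⟨le_trans hs0 hts.le, min_le_left _ _⟩
        have htd : t ∈ Metric.ball s δ := by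
          rw [Metric.mem_ball, Real.dist_eq, abs_of_pos (by linarith)]
          have : t ≤ s + δ/2 := min_le_right _ _
          linarith
        have hedist : edist (γ t) (γ s) < ε := hδ' ⟨htd, htI⟩
        have hct : c (γ t) ≠ c x := by
          intro hct
          have hmem : t ∈ S := ⟨htI, hct⟩
          have := le_csSup hSbdd hmem
          linarith
        exact ⟨γ t, by rw [hcs]; exact hct, by rwa [edist_comm]⟩
      · obtain ⟨t, htS, hts⟩ := exists_lt_of_lt_csSup hSne (show s - δ/2 < s by linarith)
        have hts' : t ≤ s := le_csSup hSbdd htS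
        have htd : t ∈ Metric.ball s δ := by
          rw [Metric.mem_ball, Real.dist_eq, abs_sub_comm, abs_of_nonneg (by linarith)]
          linarith
        have hedist : edist (γ t) (γ s) < ε := hδ' ⟨htd, htS.1⟩
        exact ⟨γ t, fun h => hcs (by rw [← h]; exact htS.2), by rwa [edist_comm]⟩
    · calc edist x (γ s) = edist (γ 0) (γ s) := by rw [h0]
        _ ≤ eVariationOn γ (Set.Icc 0 1) :=
            eVariationOn.edist_le γ ⟨le_refl 0, zero_le_one⟩ hsmem
        _ < r := hlt
  · rintro ⟨z, hz, hlt⟩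
    rw [margin_lt_iff']
    by_cases hcz : c z = c x
    · rcases eq_or_ne r ⊤ with hrt | hrt
      · rw [margin_eq_zero_iff'] at hz
        obtain ⟨w, hw, -⟩ := hz 1 one_pos
        exact ⟨w, by rwa [hcz] at hw, hrt ▸ edist_lt_top x w⟩
      · rw [margin_eq_zero_iff'] at hz
        obtain ⟨w, hw, hwlt⟩ := hz (r - edist x z) (tsub_pos_of_lt hlt)
        refine ⟨w, by rwa [hcz] at hw, ?_⟩
        calc edist x w ≤ edist x z + edist z w := edist_triangle _ _ _
          _ < edist x z + (r - edist x z) :=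
              ENNReal.add_lt_add_left (edist_lt_top x z).ne hwlt
          _ = r := add_tsub_cancel_of_le hlt.le
    · exact ⟨z, hcz, hlt⟩
end

section
/- Let (X, ρ) be a separable metric space, ν a finite Borel measure on X, and c : X → Y a concept whose boundary set is essentially countable: ∂X = N ∪ Z with N countable and ν(Z) = 0. Then there exists a countable family (U_n)_{n∈ℕ} of subsets of X with ν(X \ ⋃_n U_n) = 0 such that for every sequence (x_s)_{s≥1} in X and every n, there is at most one time t ≥ 2 at which x_t ∈ U_n and the 1-nearest neighbor rule makes a mistake at time t under worst-case tie-breaking. -/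
open scoped ENNReal

/-- Key lemma: if `U` is such that any point at least as close to `a ∈ U` as some
`b ∈ U` has the same label as `a`, then `U` witnesses at most one NN mistake. -/
lemma nn_key {X Y : Type*} [MetricSpace X] (c : X → Y) (U : Set X)
    (h : ∀ a ∈ U, ∀ b ∈ U, ∀ p : X, edist a p ≤ edist a b → c p = c a)
    (x : ℕ → X) :
    {t : ℕ | 2 ≤ t ∧ x t ∈ U ∧ NNMistake c x t}.Subsingleton := by
  have main : ∀ t t', t ∈ {t : ℕ | 2 ≤ t ∧ x t ∈ U ∧ NNMistake c x t} →
      t' ∈ {t : ℕ | 2 ≤ t ∧ x t ∈ U ∧ NNMistake c x t} → t < t' → False := by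
    intro t t' ht ht' hlt
    obtain ⟨ht2, htU, -⟩ := ht
    obtain ⟨ht'2, ht'U, s, hs1, hst', hnear, hne⟩ := ht'
    have h1t : 1 ≤ t := le_trans (by norm_num) ht2
    exact hne (h (x t') ht'U (x t) htU (x s) (hnear t h1t hlt))
  intro t ht t' ht'
  rcases lt_trichotomy t t' with hlt | heq | hlt
  · exact (main t t' ht ht' hlt).elim
  · exact heq
  · exact (main t' t ht' ht hlt).elim

/-- If `X` is a separable metric space with a finite Borel measure `ν` and the boundary
set of the concept `c` is essentially countable, then there is a countable family
`(U n)` of subsets covering `ν`-almost all of `X` such that, on any sequence, each `U n`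
witnesses at most one nearest-neighbor mistake (under worst-case tie-breaking). -/
theorem nearestNeighbor_OLC {X Y : Type*} [MetricSpace X]
    [TopologicalSpace.SeparableSpace X] [MeasurableSpace X] [BorelSpace X]
    (ν : MeasureTheory.Measure X) [MeasureTheory.IsFiniteMeasure ν]
    (c : X → Y) (N Z : Set X) (hbd : {x : X | margin c x = 0} = N ∪ Z)
    (hN : N.Countable) (hZ : ν Z = 0) :
    ∃ U : ℕ → Set X, ν (Set.univ \ ⋃ n, U n) = 0 ∧
      ∀ (x : ℕ → X) (n : ℕ),
        {t : ℕ | 2 ≤ t ∧ x t ∈ U n ∧ NNMistake c x t}.Subsingleton := by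
  classical
  rcases isEmpty_or_nonempty X with hX | hX
  · refine ⟨fun _ => ∅, ?_, ?_⟩
    · have : (Set.univ : Set X) = ∅ := Set.univ_eq_empty_iff.mpr hX
      simp [this]
    · intro x n t ht t' ht'
      exact absurd ht.2.1 (Set.notMem_empty _)
  · set d : ℕ → X := TopologicalSpace.denseSeq X with hd_def
    have hd : DenseRange d := TopologicalSpace.denseRange_denseSeq X
    obtain ⟨f, hf⟩ := (hN.insert (d 0)).exists_eq_range (Set.insert_nonempty _ _)
    set r : ℕ → ℝ≥0∞ := fun m => ((m : ℝ≥0∞) + 1)⁻¹ with hr_def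
    have hr0 : ∀ m, r m ≠ 0 := fun m =>
      ENNReal.inv_ne_zero.mpr (by simp [ENNReal.add_eq_top])
    have hrt : ∀ m, r m ≠ ∞ := fun m =>
      ENNReal.inv_ne_top.mpr (by simp)
    set V : ℕ × ℕ → Set X := fun km =>
      {z | edist z (d km.1) < r km.2 ∧ 3 * r km.2 ≤ margin c z} with hV_def
    set e := Denumerable.eqv (ℕ ⊕ ℕ × ℕ) with he_def
    set U : ℕ → Set X := fun n => Sum.elim (fun j => ({f j} : Set X)) V (e.symm n)
      with hU_def
    refine ⟨U, ?_, ?_⟩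
    · -- measure-zero part
      have hsub : Set.univ \ ⋃ n, U n ⊆ Z := by
        intro z hz
        have hz2 : ∀ n, z ∉ U n := by
          intro n hn
          exact hz.2 (Set.mem_iUnion.mpr ⟨n, hn⟩)
        by_cases hm : margin c z = 0
        · have hzNZ : z ∈ N ∪ Z := by
            rw [← hbd]; exact hm
          rcases hzNZ with hzN | hzZ
          · have : z ∈ Set.range f := by
              rw [← hf]; exact Set.mem_insert_of_mem _ hzN
            obtain ⟨j, hj⟩ := this
            have : z ∈ U (e (Sum.inl j)) := by
              simp only [hU_def, Equiv.symm_apply_apply, Sum.elim_inl]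
              exact hj.symm
            exact absurd this (hz2 _)
          · exact hzZ
        · exfalso
          have hm3 : (0 : ℝ≥0∞) < margin c z / 3 :=
            ENNReal.div_pos hm (by norm_num)
          obtain ⟨m, hm'⟩ := ENNReal.exists_inv_nat_lt (ne_of_gt hm3)
          have hrm : r m ≤ (m : ℝ≥0∞)⁻¹ :=
            ENNReal.inv_le_inv.mpr (by simp)
          have hrm' : 3 * r m ≤ margin c z := by
            calc 3 * r m ≤ 3 * (margin c z / 3) :=
                  mul_le_mul_right (le_of_lt (lt_of_le_of_lt hrm hm')) _
              _ = margin c z := ENNReal.mul_div_cancel (by norm_num) (by norm_num)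
          -- find k with edist z (d k) < r m
          have hpos : 0 < (r m).toReal :=
            ENNReal.toReal_pos (hr0 m) (hrt m)
          obtain ⟨k, hk⟩ := Metric.denseRange_iff.mp hd z _ hpos
          have hk' : edist z (d k) < r m := by
            have := edist_lt_ofReal.mpr hk
            rwa [ENNReal.ofReal_toReal (hrt m)] at this
          have : z ∈ U (e (Sum.inr (k, m))) := by
            simp only [hU_def, Equiv.symm_apply_apply, Sum.elim_inr]
            exact ⟨hk', hrm'⟩
          exact absurd this (hz2 _)
      exact MeasureTheory.measure_mono_null hsub hZ
    · -- subsingleton part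
      intro x n
      rcases hs : e.symm n with j | ⟨k, m⟩
      · have hUn : U n = {f j} := by simp [hU_def, hs]
        rw [hUn]
        apply nn_key
        intro a ha b hb p hp
        rw [Set.mem_singleton_iff] at ha hb
        have : edist a b = 0 := by rw [ha, hb, edist_self]
        have hp0 : edist a p = 0 := le_antisymm (this ▸ hp) zero_le
        have : p = a := by rwa [edist_comm, edist_eq_zero] at hp0
        rw [this]
      · have hUn : U n = V (k, m) := by simp [hU_def, hs]
        rw [hUn]
        apply nn_key
        intro a ha b hb p hp
        by_contra hne
        have hma : margin c a ≤ edist a p :=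
          iInf_le_of_le p (iInf_le _ hne)
        have h1 : edist a b < r m + r m := by
          calc edist a b ≤ edist a (d k) + edist (d k) b := edist_triangle _ _ _
            _ < r m + r m := ENNReal.add_lt_add ha.1 (by rw [edist_comm]; exact hb.1)
        have h2 : r m + r m < 3 * r m := by
          have : (3 : ℝ≥0∞) * r m = r m + r m + r m := by ring
          rw [this]
          exact ENNReal.lt_add_right (ENNReal.add_ne_top.mpr ⟨hrt m, hrt m⟩) (hr0 m)
        have : margin c a < margin c a :=
          lt_of_le_of_lt (le_trans hma (le_trans hp (le_of_lt h1)))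
            (lt_of_lt_of_le h2 ha.2)
        exact lt_irrefl _ this
end

section
/- Let (X, ρ) be a separable metric space equipped with its Borel σ-algebra, ν a finite Borel measure on X, Y a countable label set, and c : X → Y a Borel-measurable concept whose boundary set is essentially countable (∂X = N ∪ Z with N countable and ν(Z) = 0). Let (X_t)_{t≥1} be an X-valued process driven by a ν-dominated adversary. Then almost surely, the mistake rate of the 1-nearest neighbor rule under worst-case tie-breaking converges to zero: (1/T) · #{ 2 ≤ t ≤ T : ∃ s < t with ρ(X_t, X_s) ≤ ρ(X_t, X_{s'}) for all s' < t and c(X_s) ≠ c(X_t) } → 0 as T → ∞. -/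
open scoped ENNReal
open MeasureTheory Filter

lemma aux_integrable {Ω : Type*} {mΩ : MeasurableSpace Ω} {P : Measure Ω} [IsProbabilityMeasure P]
    {f : Ω → ℝ} (C : ℝ) (hm : AEStronglyMeasurable f P) (hb : ∀ᵐ ω ∂P, |f ω| ≤ C) :
    Integrable f P :=
  (integrable_const C).mono' hm (by simpa [Real.norm_eq_abs] using hb)

lemma ae_bdd_all {Ω : Type*} {mΩ : MeasurableSpace Ω} {P : Measure Ω} {D : ℕ → Ω → ℝ}
    (hbdd : ∀ t : ℕ, 1 ≤ t → ∀ᵐ ω ∂P, |D t ω| ≤ 1) :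
    ∀ᵐ ω ∂P, ∀ t : ℕ, 1 ≤ t → |D t ω| ≤ 1 := by
  rw [ae_all_iff]
  intro t
  by_cases ht : 1 ≤ t
  · exact (hbdd t ht).mono (fun ω h _ => h)
  · exact Filter.Eventually.of_forall (fun ω ht' => absurd ht' ht)

lemma mart_sq {Ω : Type*} {mΩ : MeasurableSpace Ω} (P : Measure Ω) [IsProbabilityMeasure P]
    (ℱ : Filtration ℕ mΩ) (D : ℕ → Ω → ℝ)
    (hmeasD : ∀ t, 1 ≤ t → StronglyMeasurable[ℱ t] (D t))
    (hbdd : ∀ t, 1 ≤ t → ∀ᵐ ω ∂P, |D t ω| ≤ 1)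
    (hce : ∀ t, 1 ≤ t → P[D t | ℱ (t-1)] =ᵐ[P] 0) :
    ∀ T : ℕ, ∫ ω, (∑ t ∈ Finset.Icc 1 T, D t ω)^2 ∂P ≤ T := by
  have hDa : ∀ t, 1 ≤ t → AEStronglyMeasurable (D t) P := fun t ht =>
    ((hmeasD t ht).mono (ℱ.le t)).aestronglyMeasurable
  have hDint : ∀ t, 1 ≤ t → Integrable (D t) P := fun t ht =>
    aux_integrable 1 (hDa t ht) (hbdd t ht)
  set M : ℕ → Ω → ℝ := fun T ω => ∑ t ∈ Finset.Icc 1 T, D t ω with hM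
  have hMsm : ∀ T, StronglyMeasurable[ℱ T] (M T) := by
    intro T
    apply Finset.stronglyMeasurable_fun_sum
    intro t ht
    rw [Finset.mem_Icc] at ht
    exact (hmeasD t ht.1).mono (ℱ.mono ht.2)
  have hMbd : ∀ T, ∀ᵐ ω ∂P, |M T ω| ≤ T := by
    intro T
    filter_upwards [ae_bdd_all hbdd] with ω hω
    calc |M T ω| ≤ ∑ t ∈ Finset.Icc 1 T, |D t ω| := Finset.abs_sum_le_sum_abs _ _
      _ ≤ ∑ _t ∈ Finset.Icc 1 T, (1:ℝ) := Finset.sum_le_sum (fun t ht => hω t (Finset.mem_Icc.1 ht).1)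
      _ ≤ T := by simp [Nat.Icc_eq_range']
  have hMa : ∀ T, AEStronglyMeasurable (M T) P := fun T =>
    ((hMsm T).mono (ℱ.le T)).aestronglyMeasurable
  have hMint : ∀ T, Integrable (M T) P := fun T => aux_integrable T (hMa T) (hMbd T)
  intro T
  induction T with
  | zero => simp [hM]
  | succ T ih =>
    have hstep : ∀ ω, M (T+1) ω = M T ω + D (T+1) ω := by
      intro ω; simp only [hM]
      exact Finset.sum_Icc_succ_top (Nat.one_le_iff_ne_zero.mpr (Nat.succ_ne_zero T)) _
    -- cross term is zero
    have hprodint : Integrable (fun ω => M T ω * D (T+1) ω) P := by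
      refine aux_integrable (T*1) ((hMa T).mul (hDa (T+1) (Nat.le_add_left 1 T))) ?_
      filter_upwards [hMbd T, hbdd (T+1) (Nat.le_add_left 1 T)] with ω h1 h2
      rw [abs_mul]
      exact mul_le_mul h1 h2 (abs_nonneg _) (Nat.cast_nonneg T)
    have hcross : ∫ ω, M T ω * D (T+1) ω ∂P = 0 := by
      have hT1 : (T + 1) - 1 = T := rfl
      have h1 : P[(fun ω => M T ω * D (T+1) ω) | ℱ T] =ᵐ[P]
          fun ω => M T ω * (P[D (T+1) | ℱ T]) ω := by
        have := condExp_mul_of_stronglyMeasurable_left (μ := P) (m := ℱ T)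
          (hMsm T) hprodint (hDint (T+1) (Nat.le_add_left 1 T))
        exact this
      have h2 : P[D (T+1) | ℱ T] =ᵐ[P] 0 := by
        have := hce (T+1) (Nat.le_add_left 1 T); rwa [hT1] at this
      have h3 : P[(fun ω => M T ω * D (T+1) ω) | ℱ T] =ᵐ[P] 0 := by
        filter_upwards [h1, h2] with ω e1 e2
        simp [e1, e2]
      calc ∫ ω, M T ω * D (T+1) ω ∂P
          = ∫ ω, (P[(fun ω => M T ω * D (T+1) ω) | ℱ T]) ω ∂P :=
            (integral_condExp (ℱ.le T)).symm
        _ = ∫ ω, (0:ℝ) ∂P := integral_congr_ae h3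
        _ = 0 := by simp
    have hsqint : ∀ S : ℕ, Integrable (fun ω => (M S ω)^2) P := by
      intro S
      refine aux_integrable (S*S) (((hMa S).mul (hMa S)).congr
        (Filter.Eventually.of_forall (fun ω => (sq (M S ω)).symm))) ?_
      filter_upwards [hMbd S] with ω h1
      rw [abs_pow, sq]
      exact mul_le_mul h1 h1 (abs_nonneg _) (Nat.cast_nonneg _)
    have hDsqint : Integrable (fun ω => (D (T+1) ω)^2) P := by
      refine aux_integrable 1 (((hDa _ (Nat.le_add_left 1 T)).mul
        (hDa _ (Nat.le_add_left 1 T))).congr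
        (Filter.Eventually.of_forall (fun ω => (sq (D (T+1) ω)).symm))) ?_
      filter_upwards [hbdd (T+1) (Nat.le_add_left 1 T)] with ω h1
      rw [abs_pow, sq]
      simpa using mul_le_mul h1 h1 (abs_nonneg _) zero_le_one
    have hDsq_le : ∫ ω, (D (T+1) ω)^2 ∂P ≤ 1 := by
      have : ∫ ω, (D (T+1) ω)^2 ∂P ≤ ∫ _ω, (1:ℝ) ∂P := by
        refine integral_mono_ae hDsqint (integrable_const 1) ?_
        filter_upwards [hbdd (T+1) (Nat.le_add_left 1 T)] with ω h1
        rw [← sq_abs]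
        nlinarith [abs_nonneg (D (T+1) ω)]
      simpa using this
    have hexpand : ∫ ω, (M (T+1) ω)^2 ∂P
        = ∫ ω, (M T ω)^2 ∂P + 2 * ∫ ω, M T ω * D (T+1) ω ∂P + ∫ ω, (D (T+1) ω)^2 ∂P := by
      have : (fun ω => (M (T+1) ω)^2)
          = fun ω => (M T ω)^2 + 2 * (M T ω * D (T+1) ω) + (D (T+1) ω)^2 := by
        funext ω; rw [hstep ω]; ring
      rw [this, integral_add (f := fun ω => M T ω ^ 2 + 2 * (M T ω * D (T + 1) ω))
          (g := fun ω => D (T+1) ω ^ 2) ((hsqint T).add (hprodint.const_mul 2)) hDsqint,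
        integral_add (f := fun ω => M T ω ^ 2) (g := fun ω => 2 * (M T ω * D (T + 1) ω))
          (hsqint T) (hprodint.const_mul 2), MeasureTheory.integral_const_mul]
    calc ∫ ω, (M (T+1) ω)^2 ∂P
        = ∫ ω, (M T ω)^2 ∂P + 2 * ∫ ω, M T ω * D (T+1) ω ∂P + ∫ ω, (D (T+1) ω)^2 ∂P := hexpand
      _ ≤ T + 2 * 0 + 1 := by
          refine add_le_add (add_le_add ih (by rw [hcross])) hDsq_le
      _ = (T+1 : ℕ) := by push_cast; ring

lemma lln {Ω : Type*} {mΩ : MeasurableSpace Ω} (P : Measure Ω) [IsProbabilityMeasure P]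
    (ℱ : Filtration ℕ mΩ) (D : ℕ → Ω → ℝ)
    (hmeasD : ∀ t, 1 ≤ t → StronglyMeasurable[ℱ t] (D t))
    (hbdd : ∀ t, 1 ≤ t → ∀ᵐ ω ∂P, |D t ω| ≤ 1)
    (hce : ∀ t, 1 ≤ t → P[D t | ℱ (t-1)] =ᵐ[P] 0)
    (η : ℝ) (hη : 0 < η) :
    ∀ᵐ ω ∂P, ∀ᶠ k : ℕ in atTop, |∑ t ∈ Finset.Icc 1 (k*k), D t ω| ≤ η * (k*k) := by
  have hDa : ∀ t, 1 ≤ t → AEStronglyMeasurable (D t) P := fun t ht =>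
    ((hmeasD t ht).mono (ℱ.le t)).aestronglyMeasurable
  set M : ℕ → Ω → ℝ := fun T ω => ∑ t ∈ Finset.Icc 1 T, D t ω with hM
  have hMa : ∀ T, AEStronglyMeasurable (M T) P := by
    intro T
    apply Finset.aestronglyMeasurable_fun_sum
    intro t ht
    exact hDa t (Finset.mem_Icc.1 ht).1
  -- square-integrability with bound
  have hsq := mart_sq P ℱ D hmeasD hbdd hce
  -- the bad events
  set s : ℕ → Set Ω := fun k => {ω | η * (k*k) ≤ |M (k*k) ω|} with hs
  have hmain : ∀ k : ℕ, 1 ≤ k → P (s k) ≤ ENNReal.ofReal ((1/η^2) * (1/(k:ℝ)^2)) := by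
    intro k hk
    have hkpos : (0:ℝ) < (k:ℝ) := by exact_mod_cast hk
    have hser : (0:ℝ) < η * (k*k) := by positivity
    -- Markov on M²
    have hMsqbd : ∀ T, ∀ᵐ ω ∂P, |M T ω| ≤ T := by
      intro T
      have hb : ∀ᵐ ω ∂P, ∀ t : ℕ, 1 ≤ t → |D t ω| ≤ 1 := by
        rw [ae_all_iff]
        intro t
        by_cases ht : 1 ≤ t
        · exact (hbdd t ht).mono (fun ω h _ => h)
        · exact Filter.Eventually.of_forall (fun ω ht' => absurd ht' ht)
      filter_upwards [hb] with ω hω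
      calc |M T ω| ≤ ∑ t ∈ Finset.Icc 1 T, |D t ω| := Finset.abs_sum_le_sum_abs _ _
        _ ≤ ∑ _t ∈ Finset.Icc 1 T, (1:ℝ) := Finset.sum_le_sum (fun t ht => hω t (Finset.mem_Icc.1 ht).1)
        _ ≤ T := by simp [Nat.Icc_eq_range']
    have hint : Integrable (fun ω => (M (k*k) ω)^2) P := by
      refine ((integrable_const (((k*k):ℕ)*((k*k):ℕ) : ℝ)).mono'
        (((hMa (k*k)).mul (hMa (k*k))).congr
          (Filter.Eventually.of_forall (fun ω => (sq (M (k*k) ω)).symm))) ?_)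
      filter_upwards [hMsqbd (k*k)] with ω h1
      rw [Real.norm_eq_abs, abs_pow, sq]
      exact mul_le_mul h1 h1 (abs_nonneg _) (Nat.cast_nonneg _)
    have hmarkov := mul_meas_ge_le_integral_of_nonneg
      (f := fun ω => (M (k*k) ω)^2) (μ := P)
      (Filter.Eventually.of_forall (fun ω => sq_nonneg _)) hint ((η * (k*k))^2)
    have hsub : s k ⊆ {ω | (η * (k*k))^2 ≤ (M (k*k) ω)^2} := by
      intro ω hω
      simp only [hs, Set.mem_setOf_eq] at hω ⊢
      calc (η * (k*k))^2 ≤ |M (k*k) ω|^2 := by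
            apply pow_le_pow_left₀ (le_of_lt hser) hω
        _ = (M (k*k) ω)^2 := sq_abs _
    have h1 : P (s k) ≤ P {ω | (η * (k*k))^2 ≤ (M (k*k) ω)^2} := measure_mono hsub
    have h2 : (P {ω | (η * (k*k))^2 ≤ (M (k*k) ω)^2}).toReal ≤ (1/η^2) * (1/(k:ℝ)^2) := by
      have hb := hmarkov.trans (hsq (k*k))
      have hkk : ((k*k : ℕ) : ℝ) = (k:ℝ)*(k:ℝ) := by push_cast; ring
      rw [hkk] at hb
      have hposq : (0:ℝ) < (η * ((k:ℝ)*(k:ℝ)))^2 := by positivity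
      have h3 : (P {ω | (η * (k*k))^2 ≤ (M (k*k) ω)^2}).toReal
          ≤ ((k:ℝ)*(k:ℝ)) / (η * ((k:ℝ)*(k:ℝ)))^2 := by
        rw [le_div_iff₀ hposq]
        simp only [measureReal_def] at hb
        nlinarith [hb]
      refine h3.trans (le_of_eq ?_)
      field_simp
    calc P (s k) ≤ P {ω | (η * (k*k))^2 ≤ (M (k*k) ω)^2} := h1
      _ ≤ ENNReal.ofReal ((1/η^2) * (1/(k:ℝ)^2)) := by
          rw [ENNReal.le_ofReal_iff_toReal_le (measure_ne_top _ _) (by positivity)]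
          exact h2
  -- Borel–Cantelli
  have hsum : (∑' k : ℕ, P (s (k+1))) ≠ ⊤ := by
    have hsummable : Summable (fun k : ℕ => (1/η^2) * (1/((k:ℝ)+1)^2)) := by
      apply Summable.mul_left
      have h := (Real.summable_one_div_nat_pow (p := 2)).2 (by norm_num)
      have := (summable_nat_add_iff (f := fun n : ℕ => 1/(n:ℝ)^2) 1).2 h
      refine this.congr (fun n => by push_cast; ring)
    have hle : (∑' k : ℕ, P (s (k+1))) ≤ ∑' k : ℕ, ENNReal.ofReal ((1/η^2) * (1/((k:ℝ)+1)^2)) := by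
      apply ENNReal.tsum_le_tsum
      intro k
      have := hmain (k+1) (Nat.le_add_left 1 k)
      refine this.trans (le_of_eq ?_)
      norm_num
    refine ne_top_of_le_ne_top ?_ hle
    rw [← ENNReal.ofReal_tsum_of_nonneg (fun n => by positivity) hsummable]
    exact ENNReal.ofReal_ne_top
  have hbc := ae_eventually_notMem (μ := P) (s := fun k => s (k+1)) hsum
  filter_upwards [hbc] with ω hω
  rw [Filter.eventually_atTop] at hω ⊢
  obtain ⟨K, hK⟩ := hω
  refine ⟨K + 1, fun k hk => ?_⟩
  obtain ⟨k', rfl⟩ : ∃ k', k = k' + 1 := ⟨k - 1, by omega⟩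
  have := hK k' (by omega)
  simp only [hs, Set.mem_setOf_eq, not_le] at this
  exact le_of_lt this

lemma count_le {X Y : Type*} [MetricSpace X] (c : X → Y) (x : ℕ → X) (B : Set X) (n : ℕ)
    (Cond : ℕ → ℕ → Prop)
    (huniq : ∀ i t t', Cond i t → Cond i t' → t = t')
    (hkey : ∀ t, 2 ≤ t → NNMistake c x t → x t ∈ B ∨ ∃ i, i < n ∧ Cond i t) :
    ∀ T : ℕ, (({t : ℕ | 2 ≤ t ∧ t ≤ T ∧ NNMistake c x t}).ncard : ℝ)
      ≤ (∑ t ∈ Finset.Icc 1 T, B.indicator (fun _ => (1:ℝ)) (x t)) + n := by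
  classical
  intro T
  have hind : (∑ t ∈ Finset.Icc 1 T, B.indicator (fun _ => (1:ℝ)) (x t))
      = (((Finset.Icc 1 T).filter (fun t => x t ∈ B)).card : ℝ) := by
    rw [← Finset.sum_boole]
    exact Finset.sum_congr rfl (fun t _ => Set.indicator_apply B _ (x t))
  rw [hind]
  have main : ({t : ℕ | 2 ≤ t ∧ t ≤ T ∧ NNMistake c x t}).ncard
      ≤ ((Finset.Icc 1 T).filter (fun t => x t ∈ B)).card + n := ?_
  · exact_mod_cast main
  have hset : {t : ℕ | 2 ≤ t ∧ t ≤ T ∧ NNMistake c x t}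
      = ↑((Finset.Icc 2 T).filter (fun t => NNMistake c x t)) := by
    ext t
    simp [Finset.mem_filter, Finset.mem_Icc, and_assoc]
  rw [hset, Set.ncard_coe_finset]
  set G := (Finset.Icc 2 T).filter (fun t => NNMistake c x t) with hG
  set F1 := (Finset.Icc 1 T).filter (fun t => x t ∈ B) with hF1
  set F2 := G.filter (fun t => ∃ i, i < n ∧ Cond i t) with hF2
  have hsub : G ⊆ F1 ∪ F2 := by
    intro t ht
    have ht' := ht
    rw [hG, Finset.mem_filter, Finset.mem_Icc] at ht'
    rcases hkey t ht'.1.1 ht'.2 with h | h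
    · apply Finset.mem_union_left
      rw [hF1, Finset.mem_filter, Finset.mem_Icc]
      exact ⟨⟨by omega, ht'.1.2⟩, h⟩
    · exact Finset.mem_union_right _ (by rw [hF2, Finset.mem_filter]; exact ⟨ht, h⟩)
  have hF2card : F2.card ≤ n := by
    have : ∀ t ∈ F2, ∃ i, i < n ∧ Cond i t := fun t ht => (Finset.mem_filter.1 ht).2
    set f : ℕ → ℕ := fun t => if h : ∃ i, i < n ∧ Cond i t then Nat.find h else 0 with hf
    have hmap : ∀ t ∈ F2, f t ∈ Finset.range n := by
      intro t ht
      obtain h := this t ht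
      rw [hf]; simp only [h, dif_pos]
      exact Finset.mem_range.2 (Nat.find_spec h).1
    have hinj : Set.InjOn f ↑F2 := by
      intro t ht t' ht' he
      obtain h := this t ht
      obtain h' := this t' ht'
      rw [hf] at he
      simp only [h, h', dif_pos] at he
      exact huniq (Nat.find h) t t' (Nat.find_spec h).2 (he ▸ (Nat.find_spec h').2)
    calc F2.card ≤ (Finset.range n).card := Finset.card_le_card_of_injOn f hmap hinj
      _ = n := Finset.card_range n
  calc G.card ≤ (F1 ∪ F2).card := Finset.card_le_card hsub
    _ ≤ F1.card + F2.card := Finset.card_union_le _ _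
    _ ≤ F1.card + n := by omega

lemma margin_lt_meas {X Y : Type*} [MetricSpace X] [MeasurableSpace X] [BorelSpace X]
    [Countable Y] [MeasurableSpace Y] [MeasurableSingletonClass Y]
    {c : X → Y} (hc : Measurable c) (q : ℝ≥0∞) :
    MeasurableSet {x : X | margin c x < q} := by
  have heq : {x : X | margin c x < q}
      = ⋃ y : Y, ({x | c x = y} ∩ {x | EMetric.infEdist x {x' | c x' ≠ y} < q}) := by
    ext x
    simp only [Set.mem_setOf_eq, Set.mem_iUnion, Set.mem_inter_iff]
    constructor
    · intro h
      exact ⟨c x, rfl, h⟩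
    · rintro ⟨y, rfl, h⟩
      exact h
  rw [heq]
  refine MeasurableSet.iUnion (fun y => (hc (MeasurableSet.singleton y)).inter ?_)
  exact measurableSet_lt (EMetric.continuous_infEdist.measurable) measurable_const

lemma exists_bad_set {X Y : Type*} [MetricSpace X] [TopologicalSpace.SeparableSpace X]
    [MeasurableSpace X] [BorelSpace X] [Countable Y]
    [MeasurableSpace Y] [MeasurableSingletonClass Y]
    (ν : Measure X) [IsFiniteMeasure ν] (c : X → Y)
    (hc : Measurable c) (N Z : Set X) (hbd : {x : X | margin c x = 0} = N ∪ Z)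
    (hN : N.Countable) (hZ : ν Z = 0) (δ : ℝ≥0∞) (hδ : 0 < δ) :
    ∃ (B : Set X) (n : ℕ) (S : ℕ → Set X),
      MeasurableSet B ∧ ν B < δ ∧
      ∀ (x : ℕ → X) (t : ℕ), 2 ≤ t → NNMistake c x t → x t ∉ B →
        ∃ i, i < n ∧ x t ∈ S i ∧ ∀ s, 1 ≤ s → s < t → x s ∉ S i := by
  rcases isEmpty_or_nonempty X with hX | hX
  · exact ⟨∅, 0, fun _ => ∅, MeasurableSet.empty, by simpa using hδ,
      fun x t _ _ _ => (IsEmpty.false (x 0)).elim⟩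
  have hδ3 : (0:ℝ≥0∞) < δ/3 := ENNReal.div_pos hδ.ne' (by norm_num)
  -- enumeration of N
  obtain ⟨e, he⟩ : ∃ e : ℕ → X, N ⊆ Set.range e := by
    rcases N.eq_empty_or_nonempty with h | h
    · exact ⟨fun _ => Classical.arbitrary X, by simp [h]⟩
    · obtain ⟨f, hf⟩ := hN.exists_eq_range h
      exact ⟨f, hf.le⟩
  -- small margin sets
  set A : ℕ → Set X := fun j => {x | margin c x < ((j:ℝ≥0∞)+1)⁻¹} \ N with hA
  have hAmeas : ∀ j, MeasurableSet (A j) :=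
    fun j => (margin_lt_meas hc _).diff hN.measurableSet
  have hAanti : Antitone A := by
    intro j j' hj
    apply Set.diff_subset_diff_left
    intro x hx
    simp only [Set.mem_setOf_eq] at hx ⊢
    refine lt_of_lt_of_le hx ?_
    exact ENNReal.inv_le_inv.2 (by exact_mod_cast add_le_add_left (by exact_mod_cast hj) 1)
  have hAint : ν (⋂ j, A j) = 0 := by
    have hsub : (⋂ j, A j) ⊆ Z := by
      intro x hx
      simp only [Set.mem_iInter, hA, Set.mem_diff, Set.mem_setOf_eq] at hx
      have hx0 : margin c x = 0 := by
        by_contra h0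
        obtain ⟨j, hj⟩ := ENNReal.exists_inv_nat_lt h0
        rcases j with _ | j
        · exact absurd hj (by simp)
        · have h1 := (hx j).1
          have hc1 : (((j+1):ℕ):ℝ≥0∞)⁻¹ = ((j:ℝ≥0∞)+1)⁻¹ := by push_cast; rfl
          rw [hc1] at hj
          exact absurd (h1.trans hj) (lt_irrefl _)
      have hmem : x ∈ N ∪ Z := by
        rw [← hbd]; exact hx0
      rcases hmem with h | h
      · exact absurd h (hx 0).2
      · exact h
    exact le_antisymm ((measure_mono hsub).trans hZ.le) zero_le
  obtain ⟨j0, hj0⟩ : ∃ j0, ν (A j0) < δ/3 := by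
    have ht := tendsto_measure_iInter_atTop (μ := ν)
      (fun j => (hAmeas j).nullMeasurableSet) hAanti ⟨0, measure_ne_top ν _⟩
    rw [hAint] at ht
    exact (ht.eventually_lt_const hδ3).exists
  set γ : ℝ≥0∞ := ((j0:ℝ≥0∞)+1)⁻¹ with hγ
  have hγ0 : γ ≠ 0 := by simp [hγ]
  have hγt : γ ≠ ⊤ := by simp [hγ]
  -- ball cells
  set d : ℕ → X := TopologicalSpace.denseSeq X with hd
  set C : ℕ → Set X := fun i => EMetric.ball (d i) (γ/4) with hC
  set W1 : ℕ → Set X := fun n => ⋂ (i : ℕ) (_ : i < n), (C i)ᶜ with hW1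
  have hW1meas : ∀ n, MeasurableSet (W1 n) :=
    fun n => MeasurableSet.iInter fun i => MeasurableSet.iInter fun _ =>
      EMetric.isOpen_ball.measurableSet.compl
  have hW1anti : Antitone W1 := by
    intro n n' h
    intro x hx
    simp only [hW1, Set.mem_iInter] at hx ⊢
    exact fun i hi => hx i (lt_of_lt_of_le hi h)
  have hg4 : γ/4 ≠ 0 := by
    simp only [ne_eq, ENNReal.div_eq_zero_iff]
    push_neg
    exact ⟨hγ0, by norm_num⟩
  have hg4t : γ/4 ≠ ⊤ := (ENNReal.div_lt_top hγt (by norm_num)).ne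
  have hW1int : (⋂ n, W1 n) = ∅ := by
    ext x
    simp only [Set.mem_iInter, Set.mem_empty_iff_false, iff_false, not_forall]
    have hpos : 0 < (γ/4).toReal := ENNReal.toReal_pos hg4 hg4t
    obtain ⟨i, hi⟩ := (TopologicalSpace.denseRange_denseSeq X).exists_dist_lt x hpos
    refine ⟨i+1, ?_⟩
    simp only [hW1, Set.mem_iInter, not_forall]
    refine ⟨i, Nat.lt_succ_self i, ?_⟩
    simp only [Set.mem_compl_iff, not_not, hC, EMetric.mem_ball]
    calc edist x (d i) = ENNReal.ofReal (dist x (d i)) := edist_dist _ _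
      _ < ENNReal.ofReal ((γ/4).toReal) := (ENNReal.ofReal_lt_ofReal_iff hpos).2 hi
      _ = γ/4 := ENNReal.ofReal_toReal hg4t
  obtain ⟨n1, hn1⟩ : ∃ n1, ν (W1 n1) < δ/3 := by
    have ht := tendsto_measure_iInter_atTop (μ := ν)
      (fun n => (hW1meas n).nullMeasurableSet) hW1anti ⟨0, measure_ne_top ν _⟩
    rw [hW1int, measure_empty] at ht
    exact (ht.eventually_lt_const hδ3).exists
  -- tail of N
  set W2 : ℕ → Set X := fun n => N \ (e '' Set.Iio n) with hW2
  have hW2meas : ∀ n, MeasurableSet (W2 n) := fun n =>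
    hN.measurableSet.diff (((Set.finite_Iio n).image e).countable.measurableSet)
  have hW2anti : Antitone W2 := fun n n' h =>
    Set.diff_subset_diff_right (Set.image_mono (fun i (hi : i < n) => lt_of_lt_of_le hi h))
  have hW2int : (⋂ n, W2 n) = ∅ := by
    ext z
    simp only [Set.mem_iInter, Set.mem_empty_iff_false, iff_false, not_forall]
    by_cases hz : z ∈ N
    · obtain ⟨i, hi⟩ := he hz
      exact ⟨i+1, fun hmem => hmem.2 ⟨i, Nat.lt_succ_self i, hi⟩⟩
    · exact ⟨0, fun hmem => hz hmem.1⟩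
  obtain ⟨n2, hn2⟩ : ∃ n2, ν (W2 n2) < δ/3 := by
    have ht := tendsto_measure_iInter_atTop (μ := ν)
      (fun n => (hW2meas n).nullMeasurableSet) hW2anti ⟨0, measure_ne_top ν _⟩
    rw [hW2int, measure_empty] at ht
    exact (ht.eventually_lt_const hδ3).exists
  -- assemble
  refine ⟨A j0 ∪ W1 n1 ∪ W2 n2, n1 + n2,
    fun i => if i < n1 then C i else {e (i - n1)}, ?_, ?_, ?_⟩
  · exact ((hAmeas j0).union (hW1meas n1)).union (hW2meas n2)
  · calc ν (A j0 ∪ W1 n1 ∪ W2 n2) ≤ ν (A j0 ∪ W1 n1) + ν (W2 n2) := measure_union_le _ _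
      _ ≤ ν (A j0) + ν (W1 n1) + ν (W2 n2) :=
          add_le_add_left (measure_union_le _ _) _
      _ < δ/3 + δ/3 + δ/3 := by
          exact ENNReal.add_lt_add (ENNReal.add_lt_add hj0 hn1) hn2
      _ = δ := ENNReal.add_thirds δ
  · intro x t ht hmist hB
    obtain ⟨s0, hs01, hs0t, hnn, hne⟩ := hmist
    simp only [Set.mem_union, not_or] at hB
    obtain ⟨⟨hB1, hB2⟩, hB3⟩ := hB
    -- helper: a nearby earlier point forces small margin / identical point
    by_cases hxN : x t ∈ N
    · -- exact-repetition case
      have hxe : x t ∈ e '' Set.Iio n2 := by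
        by_contra h
        exact hB3 ⟨hxN, h⟩
      obtain ⟨i, hi, hei⟩ := hxe
      have hi' : i < n2 := hi
      refine ⟨n1 + i, by omega, ?_, ?_⟩
      · have : ¬ (n1 + i < n1) := by omega
        simp only [this, if_false, Nat.add_sub_cancel_left, hei, Set.mem_singleton_iff]
      · intro s hs1 hst hmem
        have : ¬ (n1 + i < n1) := by omega
        simp only [this, if_false, Nat.add_sub_cancel_left, hei, Set.mem_singleton_iff] at hmem
        -- x s = x t, so nearest neighbor distance is 0, so the bad neighbor equals x t
        have h0 : edist (x t) (x s0) ≤ edist (x t) (x s) := hnn s hs1 hst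
        rw [hmem] at h0
        simp only [edist_self] at h0
        have h0' : edist (x t) (x s0) = 0 := le_antisymm h0 zero_le
        have : x t = x s0 := by
          rwa [edist_eq_zero] at h0'
        exact hne (this ▸ rfl)
    · -- positive-margin case
      have hmar : ¬ margin c (x t) < ((j0:ℝ≥0∞)+1)⁻¹ := by
        intro h
        exact hB1 ⟨h, hxN⟩
      push_neg at hmar
      have hxC : ∃ i, i < n1 ∧ x t ∈ C i := by
        by_contra h
        push_neg at h
        refine hB2 ?_
        simp only [hW1, Set.mem_iInter, Set.mem_compl_iff]
        exact fun i hi => h i hi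
      obtain ⟨i, hi, hCi⟩ := hxC
      refine ⟨i, by omega, ?_, ?_⟩
      · simp only [hi, if_true]; exact hCi
      · intro s hs1 hst hmem
        simp only [hi, if_true] at hmem
        -- both in the same ball of radius γ/4
        have hclose : edist (x t) (x s) < γ/2 := by
          calc edist (x t) (x s) ≤ edist (x t) (d i) + edist (d i) (x s) := edist_triangle _ _ _
            _ < γ/4 + γ/4 := by
                refine ENNReal.add_lt_add ?_ ?_
                · exact EMetric.mem_ball.1 hCi
                · rw [edist_comm]; exact EMetric.mem_ball.1 hmem
            _ = γ/2 := by
                rw [ENNReal.div_add_div_same, show (γ + γ) = γ * 2 by ring,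
                  show (4:ℝ≥0∞) = 2 * 2 by norm_num,
                  ENNReal.mul_div_mul_right _ _ (by norm_num) (by norm_num)]
        have hm2 : margin c (x t) ≤ edist (x t) (x s0) := by
          refine iInf_le_of_le (x s0) ?_
          exact iInf_le_of_le hne (le_refl _)
        have hm3 : edist (x t) (x s0) ≤ edist (x t) (x s) := hnn s hs1 hst
        have : margin c (x t) < γ := by
          calc margin c (x t) ≤ edist (x t) (x s) := hm2.trans hm3
            _ < γ/2 := hclose
            _ < γ := ENNReal.half_lt_self hγ0 hγt
        rw [hγ] at this
        exact absurd this (not_lt.2 hmar)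

/-- Against a `ν`-dominated adversary, if the boundary set of the Borel concept `c` is
essentially countable, the mistake rate of the 1-nearest neighbor rule (under
worst-case tie-breaking) converges to zero almost surely. -/
theorem nearestNeighbor_mistake_rate_to_zero
    {X Y Ω : Type*} [MetricSpace X] [TopologicalSpace.SeparableSpace X]
    [MeasurableSpace X] [BorelSpace X]
    [Countable Y] [MeasurableSpace Y] [MeasurableSingletonClass Y]
    {mΩ : MeasurableSpace Ω} (P : Measure Ω) [IsProbabilityMeasure P]
    (ℱ : Filtration ℕ mΩ)
    (ν : Measure X) [IsFiniteMeasure ν]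
    (c : X → Y) (hc : Measurable c)
    -- the boundary set is essentially countable
    (N Z : Set X) (hbd : {x : X | margin c x = 0} = N ∪ Z)
    (hN : N.Countable) (hZ : ν Z = 0)
    -- the adapted process of instances
    (Xp : ℕ → Ω → X) (hadapt : ∀ t, 1 ≤ t → Measurable[ℱ t] (Xp t))
    -- the adversary: `μa t ω` is the conditional law of `Xp t` given `ℱ (t-1)`
    (μa : ℕ → Ω → Measure X) (hprob : ∀ t ω, IsProbabilityMeasure (μa t ω))
    (hmeas : ∀ t, 1 ≤ t → ∀ A : Set X, MeasurableSet A →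
      Measurable[ℱ (t - 1)] fun ω => μa t ω A)
    (hcond : ∀ t, 1 ≤ t → ∀ A : Set X, MeasurableSet A →
      (fun ω => (μa t ω A).toReal) =ᵐ[P]
        MeasureTheory.condExp (ℱ (t - 1)) P
          ((Xp t ⁻¹' A).indicator fun _ => (1 : ℝ)))
    -- the adversary is `ν`-dominated
    (hdom : ∀ ε : ℝ≥0∞, 0 < ε → ∃ δ : ℝ≥0∞, 0 < δ ∧
      ∀ A : Set X, MeasurableSet A → ν A < δ → ∀ t, 1 ≤ t →
        ∀ᵐ ω ∂P, μa t ω A < ε) :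
    ∀ᵐ ω ∂P, Tendsto
      (fun T : ℕ =>
        (({t : ℕ | 2 ≤ t ∧ t ≤ T ∧ NNMistake c (fun s => Xp s ω) t}).ncard : ℝ) / T)
      atTop (nhds 0) := by
  -- It suffices to beat every ε > 0 eventually, almost surely.
  suffices key : ∀ εr : ℝ, 0 < εr → ∀ᵐ ω ∂P, ∀ᶠ T : ℕ in atTop,
      (({t : ℕ | 2 ≤ t ∧ t ≤ T ∧ NNMistake c (fun s => Xp s ω) t}).ncard : ℝ) / T < εr by
    have h := ae_all_iff.2 (fun m : ℕ => key (1/((m:ℝ)+1)) (by positivity))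
    filter_upwards [h] with ω hω
    rw [NormedAddCommGroup.tendsto_nhds_zero]
    intro ε hε
    obtain ⟨m, hm⟩ := exists_nat_one_div_lt hε
    filter_upwards [hω m] with T hT
    rw [Real.norm_eq_abs, abs_of_nonneg (by positivity)]
    exact hT.trans hm
  intro εr hεr
  set ε' : ℝ := εr/16 with hε'def
  have hε' : 0 < ε' := by positivity
  obtain ⟨δ, hδ, hdomδ⟩ := hdom (ENNReal.ofReal ε') (ENNReal.ofReal_pos.2 hε')
  obtain ⟨B, n, S, hBmeas, hBν, hkeyB⟩ := exists_bad_set ν c hc N Z hbd hN hZ δ hδ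
  -- the indicator process and its compensator
  set Yf : ℕ → Ω → ℝ := fun t ω => Set.indicator (Xp t ⁻¹' B) (fun _ => (1:ℝ)) ω with hYf
  set g : ℕ → Ω → ℝ := fun t => P[Yf t | ℱ (t-1)] with hg
  set D : ℕ → Ω → ℝ := fun t ω => Yf t ω - g t ω with hD
  have hY01 : ∀ t ω, 0 ≤ Yf t ω ∧ Yf t ω ≤ 1 := by
    intro t ω
    by_cases h : ω ∈ Xp t ⁻¹' B <;>
      simp [hYf, Set.indicator_of_mem, Set.indicator_of_notMem, h]
  have hYsm : ∀ t, 1 ≤ t → StronglyMeasurable[ℱ t] (Yf t) := fun t ht =>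
    stronglyMeasurable_const.indicator ((hadapt t ht) hBmeas)
  have hYint : ∀ t, 1 ≤ t → Integrable (Yf t) P := by
    intro t ht
    refine aux_integrable 1 ((hYsm t ht).mono (ℱ.le t)).aestronglyMeasurable
      (Filter.Eventually.of_forall (fun ω => ?_))
    rw [abs_le]; constructor <;> linarith [(hY01 t ω).1, (hY01 t ω).2]
  have hgle : ∀ t, 1 ≤ t → g t ≤ᵐ[P] fun _ => (1:ℝ) := by
    intro t ht
    have h1 : P[(fun _ => (1:ℝ)) | ℱ (t-1)] = fun _ => (1:ℝ) := condExp_const (ℱ.le _) 1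
    have := condExp_mono (μ := P) (m := ℱ (t-1)) (hYint t ht) (integrable_const 1)
      (Filter.Eventually.of_forall (fun ω => (hY01 t ω).2))
    rw [h1] at this
    exact this
  have hg0 : ∀ t, (fun _ => (0:ℝ)) ≤ᵐ[P] g t := fun t =>
    condExp_nonneg (Filter.Eventually.of_forall (fun ω => (hY01 t ω).1))
  have hDsm : ∀ t, 1 ≤ t → StronglyMeasurable[ℱ t] (D t) := by
    intro t ht
    exact (hYsm t ht).sub (stronglyMeasurable_condExp.mono (ℱ.mono (Nat.sub_le t 1)))
  have hDbdd : ∀ t, 1 ≤ t → ∀ᵐ ω ∂P, |D t ω| ≤ 1 := by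
    intro t ht
    filter_upwards [hgle t ht, hg0 t] with ω h1 h0
    simp only [hD]
    rw [abs_le]
    constructor <;> linarith [(hY01 t ω).1, (hY01 t ω).2]
  have hDce : ∀ t, 1 ≤ t → P[D t | ℱ (t-1)] =ᵐ[P] 0 := by
    intro t ht
    have hsub := condExp_sub (μ := P) (m := ℱ (t-1)) (f := Yf t) (g := g t)
      (hYint t ht) (integrable_condExp (f := Yf t) (m := ℱ (t-1)))
    have hgg : P[g t | ℱ (t-1)] = g t :=
      condExp_of_stronglyMeasurable (ℱ.le _) stronglyMeasurable_condExp integrable_condExp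
    have : P[(fun ω => Yf t ω - g t ω) | ℱ (t-1)] =ᵐ[P] fun ω => g t ω - g t ω := by
      refine hsub.trans ?_
      rw [hgg]
      exact Filter.EventuallyEq.rfl
    exact this.trans (Filter.Eventually.of_forall (fun ω => sub_self (g t ω)))
  -- the compensator is a.s. at most ε'
  have hgε : ∀ᵐ ω ∂P, ∀ t, 1 ≤ t → g t ω ≤ ε' := by
    rw [ae_all_iff]
    intro t
    by_cases ht : 1 ≤ t
    · have h1 := hcond t ht B hBmeas
      have h2 := hdomδ B hBmeas hBν t ht
      filter_upwards [h1, h2] with ω he hlt hh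
      haveI := hprob t ω
      calc g t ω = (μa t ω B).toReal := he.symm
        _ ≤ ε' := ((ENNReal.lt_ofReal_iff_toReal_lt (measure_ne_top _ _)).1 hlt).le
    · exact Filter.Eventually.of_forall (fun ω ht' => absurd ht' ht)
  -- the martingale LLN
  have hlln := lln P ℱ D hDsm hDbdd hDce ε' hε'
  filter_upwards [hlln, hgε] with ω hM hgb
  -- deterministic counting for this ω
  set x : ℕ → X := fun s => Xp s ω with hx
  set Cond : ℕ → ℕ → Prop := fun i t => 2 ≤ t ∧ x t ∈ S i ∧ ∀ s, 1 ≤ s → s < t → x s ∉ S i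
    with hCond
  have huniq : ∀ i t t', Cond i t → Cond i t' → t = t' := by
    intro i t t' h h'
    by_contra hne
    rcases Nat.lt_or_ge t t' with hlt | hge
    · exact h'.2.2 t (by omega) hlt h.2.1
    · have : t' < t := by omega
      exact h.2.2 t' (by omega) this h'.2.1
  have hkey' : ∀ t, 2 ≤ t → NNMistake c x t → x t ∈ B ∨ ∃ i, i < n ∧ Cond i t := by
    intro t ht hm
    by_cases hmem : x t ∈ B
    · exact Or.inl hmem
    · obtain ⟨i, hi, h1, h2⟩ := hkeyB x t ht hm hmem
      exact Or.inr ⟨i, hi, ht, h1, h2⟩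
  have hcount := count_le c x B n Cond huniq hkey'
  -- sum identities
  have hsum_eq : ∀ T : ℕ, (∑ t ∈ Finset.Icc 1 T, B.indicator (fun _ => (1:ℝ)) (x t))
      = ∑ t ∈ Finset.Icc 1 T, Yf t ω := by
    intro T
    refine Finset.sum_congr rfl (fun t _ => ?_)
    classical
    show B.indicator (fun _ => (1:ℝ)) (Xp t ω) = (Xp t ⁻¹' B).indicator (fun _ => (1:ℝ)) ω
    rw [Set.indicator_apply, Set.indicator_apply, Set.mem_preimage]
  have hsum_split : ∀ T : ℕ, (∑ t ∈ Finset.Icc 1 T, Yf t ω)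
      = (∑ t ∈ Finset.Icc 1 T, D t ω) + ∑ t ∈ Finset.Icc 1 T, g t ω := by
    intro T
    rw [← Finset.sum_add_distrib]
    exact Finset.sum_congr rfl (fun t _ => by simp [hD])
  have hSmono : ∀ T T' : ℕ, T ≤ T' → (∑ t ∈ Finset.Icc 1 T, Yf t ω)
      ≤ ∑ t ∈ Finset.Icc 1 T', Yf t ω := by
    intro T T' h
    refine Finset.sum_le_sum_of_subset_of_nonneg (Finset.Icc_subset_Icc_right h) ?_
    exact fun t _ _ => (hY01 t ω).1
  -- eventual regime
  rw [Filter.eventually_atTop] at hM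
  obtain ⟨K, hK⟩ := hM
  set T0 : ℕ := max ((max K 1) * (max K 1)) (Nat.ceil (2*(n:ℝ)/εr) + 1) with hT0
  rw [Filter.eventually_atTop]
  refine ⟨max T0 1, fun T hT => ?_⟩
  have hT1 : 1 ≤ T := le_trans (le_max_right _ _) hT
  have hTpos : (0:ℝ) < T := by exact_mod_cast hT1
  have hT0T : T0 ≤ T := le_trans (le_max_left _ _) hT
  set k : ℕ := Nat.sqrt T with hk
  have hkK : max K 1 ≤ k := Nat.le_sqrt.2 (le_trans (le_max_left _ _) hT0T)
  have hk1 : 1 ≤ k := le_trans (le_max_right _ _) hkK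
  have hTk : T ≤ (k+1)*(k+1) := le_of_lt (Nat.lt_succ_sqrt T)
  have hkT : k*k ≤ T := Nat.sqrt_le T
  -- bound the visiting sum
  have hDb : |∑ t ∈ Finset.Icc 1 ((k+1)*(k+1)), D t ω| ≤ ε' * (((k:ℝ)+1)*((k:ℝ)+1)) := by
    have := hK (k+1) (by omega)
    push_cast at this
    exact this
  have hgsum : (∑ t ∈ Finset.Icc 1 ((k+1)*(k+1)), g t ω) ≤ ε' * (((k:ℝ)+1)*((k:ℝ)+1)) := by
    calc (∑ t ∈ Finset.Icc 1 ((k+1)*(k+1)), g t ω)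
        ≤ ∑ _t ∈ Finset.Icc 1 ((k+1)*(k+1)), ε' :=
          Finset.sum_le_sum (fun t ht => hgb t (Finset.mem_Icc.1 ht).1)
      _ = ε' * (((k:ℝ)+1)*((k:ℝ)+1)) := by
          rw [Finset.sum_const, Nat.card_Icc]
          push_cast
          ring_nf
  have hSS : (∑ t ∈ Finset.Icc 1 T, Yf t ω) ≤ 2 * ε' * (((k:ℝ)+1)*((k:ℝ)+1)) := by
    calc (∑ t ∈ Finset.Icc 1 T, Yf t ω)
        ≤ ∑ t ∈ Finset.Icc 1 ((k+1)*(k+1)), Yf t ω := hSmono _ _ hTk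
      _ = (∑ t ∈ Finset.Icc 1 ((k+1)*(k+1)), D t ω) + ∑ t ∈ Finset.Icc 1 ((k+1)*(k+1)), g t ω :=
          hsum_split _
      _ ≤ ε' * (((k:ℝ)+1)*((k:ℝ)+1)) + ε' * (((k:ℝ)+1)*((k:ℝ)+1)) := by
          refine add_le_add ((le_abs_self _).trans hDb) hgsum
      _ = 2 * ε' * (((k:ℝ)+1)*((k:ℝ)+1)) := by ring
  have hksq : (((k:ℝ)+1)*((k:ℝ)+1)) ≤ 4 * T := by
    have h2k : ((k:ℝ)+1) ≤ 2*k := by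
      have : (1:ℝ) ≤ k := by exact_mod_cast hk1
      linarith
    have hkk : ((k:ℝ))*((k:ℝ)) ≤ T := by exact_mod_cast hkT
    nlinarith [Nat.cast_nonneg (α := ℝ) k]
  have hSS2 : (∑ t ∈ Finset.Icc 1 T, Yf t ω) ≤ (εr/2) * T := by
    calc (∑ t ∈ Finset.Icc 1 T, Yf t ω) ≤ 2 * ε' * (((k:ℝ)+1)*((k:ℝ)+1)) := hSS
      _ ≤ 2 * ε' * (4 * T) := by
          refine mul_le_mul_of_nonneg_left hksq (by positivity)
      _ = (εr/2) * T := by rw [hε'def]; ring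
  -- bound n
  have hnT : (n:ℝ) < (εr/2) * T := by
    have hceil : (2*(n:ℝ)/εr) < T0 := by
      have h1 : (2*(n:ℝ)/εr) ≤ (Nat.ceil (2*(n:ℝ)/εr) : ℝ) := Nat.le_ceil _
      have h2 : (Nat.ceil (2*(n:ℝ)/εr) : ℝ) < (Nat.ceil (2*(n:ℝ)/εr) + 1 : ℕ) := by
        push_cast; linarith
      have h3n : (Nat.ceil (2*(n:ℝ)/εr) + 1) ≤ T0 := by
        rw [hT0]; exact le_max_right _ _
      have h3 : ((Nat.ceil (2*(n:ℝ)/εr) + 1 : ℕ) : ℝ) ≤ (T0:ℝ) := by exact_mod_cast h3n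
      linarith
    have hTT : (2*(n:ℝ)/εr) < T := by
      have : (T0:ℝ) ≤ T := by exact_mod_cast hT0T
      linarith
    rw [div_lt_iff₀ hεr] at hTT
    linarith
  -- conclude
  have hfinal := hcount T
  rw [hsum_eq] at hfinal
  rw [div_lt_iff₀ hTpos]
  calc (({t : ℕ | 2 ≤ t ∧ t ≤ T ∧ NNMistake c (fun s => Xp s ω) t}).ncard : ℝ)
      = (({t : ℕ | 2 ≤ t ∧ t ≤ T ∧ NNMistake c x t}).ncard : ℝ) := by rw [hx]
    _ ≤ (∑ t ∈ Finset.Icc 1 T, Yf t ω) + n := hfinal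
    _ < (εr/2) * T + (εr/2) * T := by
        exact add_lt_add_of_le_of_lt hSS2 hnT
    _ = εr * T := by ring
end

section
/- Let X be a measurable space, ν a finite measure on X, Y a countable label set, and c : X → Y a measurable concept. Let ℓ : X × Y × Y → ℝ be a measurable loss with 0 ≤ ℓ ≤ C for some constant C and ℓ(x, y, y) = 0 for all x, y. Let 𝒜 be a prediction strategy mapping each finite history ((x_1, y_1), …, (x_{t-1}, y_{t-1})) ∈ (X × Y)^{t-1} to a measurable hypothesis h_t : X → Y. Suppose 𝒜 is online locally consistent for c: there is a countable family (U_n)_{n∈ℕ} of measurable subsets of X with ν(X \ ⋃_n U_n) = 0 such that for every n and every sequence (x_t)_{t≥1} in X (with hypotheses h_t produced by 𝒜 from the history ((x_1, c(x_1)), …, (x_{t-1}, c(x_{t-1})))), either the set { t : x_t ∈ U_n } is finite, or for every ε > 0 there exists T such that for all t ≥ T, sup_{x ∈ U_n} ℓ(x, c(x), h_t(x)) < ε. Let (X_t)_{t≥1} be an X-valued process driven by a ν-dominated adversary, and let h_t denote the hypothesis produced by 𝒜 from the history ((X_1, c(X_1)), …, (X_{t-1}, c(X_{t-1}))). Then almost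 surely, (1/T) Σ_{t=1}^T ℓ(X_t, c(X_t), h_t(X_t)) → 0 as T → ∞. -/
open scoped ENNReal
open MeasureTheory Filter

/-- The history `((x 1, c (x 1)), …, (x (t-1), c (x (t-1))))` available to an online
learner at time `t` on the stream `(x s)_{s ≥ 1}` labeled by the concept `c`. -/
def history {X Y : Type*} (c : X → Y) (x : ℕ → X) (t : ℕ) : List (X × Y) :=
  (List.range (t - 1)).map fun i => (x (i + 1), c (x (i + 1)))

lemma freq_bound {Ω : Type*} {mΩ : MeasurableSpace Ω} (P : Measure Ω) [IsProbabilityMeasure P]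
    (ℱ : Filtration ℕ mΩ) (W : ℕ → Ω → ℝ)
    (hWmeas : ∀ t, 1 ≤ t → Measurable[ℱ t] (W t))
    (hW0 : ∀ t ω, 0 ≤ W t ω) (hW1 : ∀ t ω, W t ω ≤ 1)
    {ε : ℝ} (hε : 0 < ε)
    (hcondW : ∀ t, 1 ≤ t → ∀ᵐ ω ∂P, (P[W t | ℱ (t-1)]) ω ≤ ε) :
    ∀ᵐ ω ∂P, ∀ᶠ T : ℕ in atTop, (∑ t ∈ Finset.Icc 1 T, W t ω) / T ≤ 8 * ε := by
  have hWm : ∀ t, 1 ≤ t → Measurable (W t) := fun t ht s hs => ℱ.le t _ (hWmeas t ht hs)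
  have hWint : ∀ t, 1 ≤ t → Integrable (W t) P := fun t ht =>
    (integrable_const (1:ℝ)).mono' (hWm t ht).aestronglyMeasurable
      (ae_of_all _ fun ω => by
        rw [Real.norm_eq_abs, abs_le]; exact ⟨by linarith [hW0 t ω], hW1 t ω⟩)
  set Z : ℕ → Ω → ℝ := fun t => P[W t | ℱ (t-1)] with hZ
  set Y : ℕ → Ω → ℝ := fun t ω => W t ω - Z t ω with hY
  set S : ℕ → Ω → ℝ := fun T ω => ∑ t ∈ Finset.Icc 1 T, Y t ω with hS
  have hZsm : ∀ t, StronglyMeasurable[ℱ (t-1)] (Z t) := fun t => stronglyMeasurable_condExp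
  have hZm : ∀ t, Measurable (Z t) := fun t =>
    ((hZsm t).mono (ℱ.le (t-1))).measurable
  have hZint : ∀ t, Integrable (Z t) P := fun t => integrable_condExp
  have hZ01 : ∀ t, 1 ≤ t → ∀ᵐ ω ∂P, 0 ≤ Z t ω ∧ Z t ω ≤ 1 := by
    intro t ht
    have h0 : ∀ᵐ ω ∂P, 0 ≤ Z t ω := condExp_nonneg (ae_of_all _ (hW0 t))
    have h1 : Z t ≤ᵐ[P] P[(fun _ => (1:ℝ)) | ℱ (t-1)] :=
      condExp_mono (hWint t ht) (integrable_const 1) (ae_of_all _ (hW1 t))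
    have h2 : P[(fun _ => (1:ℝ)) | ℱ (t-1)] = fun _ => (1:ℝ) := condExp_const (ℱ.le (t-1)) 1
    filter_upwards [h0, h1] with ω h0 h1
    exact ⟨h0, by simpa [h2] using h1⟩
  have hYm : ∀ t, 1 ≤ t → Measurable (Y t) := fun t ht => (hWm t ht).sub (hZm t)
  have hYint : ∀ t, 1 ≤ t → Integrable (Y t) P := fun t ht => (hWint t ht).sub (hZint t)
  have hYabs : ∀ t, 1 ≤ t → ∀ᵐ ω ∂P, |Y t ω| ≤ 1 := by
    intro t ht
    filter_upwards [hZ01 t ht] with ω hZω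
    rw [abs_le]
    constructor <;> simp only [hY] <;> [linarith [hW0 t ω, hZω.2]; linarith [hW1 t ω, hZω.1]]
  have hYcond : ∀ t, 1 ≤ t → P[Y t | ℱ (t-1)] =ᵐ[P] 0 := by
    intro t ht
    have h1 : P[Y t | ℱ (t-1)] =ᵐ[P] P[W t | ℱ (t-1)] - P[Z t | ℱ (t-1)] :=
      condExp_sub (hWint t ht) (hZint t) _
    have h2 : P[Z t | ℱ (t-1)] = Z t :=
      condExp_of_stronglyMeasurable (ℱ.le (t-1)) (hZsm t) (hZint t)
    filter_upwards [h1] with ω h1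
    simp [h1, h2]
    exact sub_self _
  have hProdInt : ∀ s t, 1 ≤ s → 1 ≤ t → Integrable (fun ω => Y s ω * Y t ω) P := by
    intro s t hs ht
    refine (integrable_const (1:ℝ)).mono' ((hYm s hs).mul (hYm t ht)).aestronglyMeasurable ?_
    filter_upwards [hYabs s hs, hYabs t ht] with ω h1 h2
    rw [Real.norm_eq_abs, abs_mul]
    calc |Y s ω| * |Y t ω| ≤ 1 * 1 := by
          apply mul_le_mul h1 h2 (abs_nonneg _) zero_le_one
      _ = 1 := one_mul 1
  have hcross : ∀ s t, 1 ≤ s → s < t → ∫ ω, Y s ω * Y t ω ∂P = 0 := by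
    intro s t hs hst
    have ht : 1 ≤ t := hs.trans hst.le
    have hYs_sm : StronglyMeasurable[ℱ (t-1)] (Y s) := by
      refine StronglyMeasurable.sub ?_ ?_
      · exact ((hWmeas s hs).stronglyMeasurable).mono (ℱ.mono (by omega))
      · exact (hZsm s).mono (ℱ.mono (by omega))
    have hmul : P[(fun ω => Y s ω * Y t ω) | ℱ (t-1)] =ᵐ[P] fun ω => Y s ω * (P[Y t | ℱ (t-1)]) ω := by
      have := condExp_mul_of_stronglyMeasurable_left (μ := P) (m := ℱ (t-1)) hYs_sm
        (hProdInt s t hs ht) (hYint t ht)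
      exact this
    calc ∫ ω, Y s ω * Y t ω ∂P
        = ∫ ω, (P[(fun ω => Y s ω * Y t ω) | ℱ (t-1)]) ω ∂P :=
          (integral_condExp (ℱ.le (t-1))).symm
      _ = 0 := by
          rw [integral_congr_ae (hmul.trans ?_), integral_zero]
          filter_upwards [hYcond t ht] with ω h
          simp [h]
  have hdiag : ∀ t, 1 ≤ t → ∫ ω, Y t ω * Y t ω ∂P ≤ 1 := by
    intro t ht
    have : ∫ ω, Y t ω * Y t ω ∂P ≤ ∫ _ω, (1:ℝ) ∂P := by
      refine integral_mono_ae (hProdInt t t ht ht) (integrable_const 1) ?_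
      filter_upwards [hYabs t ht] with ω h
      have := abs_le.mp h
      nlinarith [this.1, this.2]
    simpa using this
  have hSsq : ∀ T : ℕ, ∫ ω, S T ω * S T ω ∂P ≤ (T : ℝ) := by
    intro T
    have hmem : ∀ t ∈ Finset.Icc 1 T, 1 ≤ t := fun t htm => (Finset.mem_Icc.mp htm).1
    have hexp : ∀ ω, S T ω * S T ω =
        ∑ s ∈ Finset.Icc 1 T, ∑ t ∈ Finset.Icc 1 T, Y s ω * Y t ω := by
      intro ω
      show (∑ t ∈ Finset.Icc 1 T, Y t ω) * (∑ t ∈ Finset.Icc 1 T, Y t ω) = _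
      rw [Finset.sum_mul_sum]
    have hint : ∫ ω, S T ω * S T ω ∂P =
        ∑ s ∈ Finset.Icc 1 T, ∑ t ∈ Finset.Icc 1 T, ∫ ω, Y s ω * Y t ω ∂P := by
      rw [integral_congr_ae (ae_of_all _ hexp)]
      rw [integral_finset_sum _ fun s hsm => integrable_finset_sum _
        fun t htm => hProdInt s t (hmem s hsm) (hmem t htm)]
      exact Finset.sum_congr rfl fun s hsm =>
        integral_finset_sum _ fun t htm => hProdInt s t (hmem s hsm) (hmem t htm)
    rw [hint]
    have hinner : ∀ s ∈ Finset.Icc 1 T,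
        ∑ t ∈ Finset.Icc 1 T, ∫ ω, Y s ω * Y t ω ∂P ≤ 1 := by
      intro s hsm
      have hs1 := hmem s hsm
      have : ∑ t ∈ Finset.Icc 1 T, ∫ ω, Y s ω * Y t ω ∂P = ∫ ω, Y s ω * Y s ω ∂P := by
        refine Finset.sum_eq_single s (fun t htm hts => ?_) (fun h => absurd hsm h)
        rcases lt_or_gt_of_ne hts with h | h
        · have : ∫ ω, Y s ω * Y t ω ∂P = ∫ ω, Y t ω * Y s ω ∂P := by
            congr 1; ext ω; ring
          rw [this]; exact hcross t s (hmem t htm) h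
        · exact hcross s t hs1 h
      rw [this]; exact hdiag s hs1
    calc ∑ s ∈ Finset.Icc 1 T, ∑ t ∈ Finset.Icc 1 T, ∫ ω, Y s ω * Y t ω ∂P
        ≤ ∑ s ∈ Finset.Icc 1 T, (1:ℝ) := Finset.sum_le_sum hinner
      _ = (T : ℝ) := by simp [Nat.card_Icc]
  have hSm : ∀ n, Measurable (S n) := fun n => by
    rw [hS]
    refine Finset.measurable_sum _ fun t htm => hYm t (Finset.mem_Icc.mp htm).1
  have hS2int : ∀ n, Integrable (fun ω => S n ω * S n ω) P := fun n => by
    refine (integrable_const ((n:ℝ)*(n:ℝ))).mono'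
      ((hSm n).mul (hSm n)).aestronglyMeasurable ?_
    have hae : ∀ᵐ ω ∂P, ∀ t : ℕ, 1 ≤ t → |Y t ω| ≤ 1 := by
      rw [ae_all_iff]
      intro t
      by_cases ht : 1 ≤ t
      · filter_upwards [hYabs t ht] with ω h _; exact h
      · filter_upwards with ω h1; exact absurd h1 ht
    filter_upwards [hae] with ω h
    have hs : |S n ω| ≤ (n:ℝ) := by
      calc |S n ω| ≤ ∑ t ∈ Finset.Icc 1 n, |Y t ω| := by
            rw [hS]; exact Finset.abs_sum_le_sum_abs _ _
        _ ≤ ∑ t ∈ Finset.Icc 1 n, (1:ℝ) :=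
            Finset.sum_le_sum fun t htm => h t (Finset.mem_Icc.mp htm).1
        _ = (n:ℝ) := by simp [Nat.card_Icc]
    rw [Real.norm_eq_abs, abs_mul]
    exact mul_le_mul hs hs (abs_nonneg _) (Nat.cast_nonneg _)
  set A : ℕ → Set Ω := fun k =>
    {ω | (ε * ((k:ℝ)+1)^2)^2 ≤ S ((k+1)^2) ω * S ((k+1)^2) ω} with hA
  have hPA : ∀ k, P (A k) ≤ ENNReal.ofReal ((1/ε^2) * (1/((k:ℝ)+1)^2)) := by
    intro k
    have hpos : (0:ℝ) < (ε * ((k:ℝ)+1)^2)^2 := by positivity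
    have hmark := mul_meas_ge_le_integral_of_nonneg
      (μ := P) (f := fun ω => S ((k+1)^2) ω * S ((k+1)^2) ω)
      (ae_of_all _ fun ω => mul_self_nonneg _) (hS2int _) ((ε * ((k:ℝ)+1)^2)^2)
    have hub := hSsq ((k+1)^2)
    have h1 : (P (A k)).toReal ≤ (((k+1)^2 : ℕ) : ℝ) / (ε * ((k:ℝ)+1)^2)^2 := by
      rw [le_div_iff₀ hpos]
      calc (P (A k)).toReal * (ε * ((k:ℝ)+1)^2)^2
          = (ε * ((k:ℝ)+1)^2)^2 * (P (A k)).toReal := by ring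
        _ ≤ _ := hmark.trans hub
    refine (ENNReal.le_ofReal_iff_toReal_le (measure_ne_top _ _) (by positivity)).mpr ?_
    refine h1.trans_eq ?_
    push_cast
    field_simp
  have hsummable : Summable (fun k : ℕ => (1/ε^2) * (1/((k:ℝ)+1)^2)) := by
    apply Summable.mul_left
    have h2 := (summable_nat_add_iff 1).mpr
      (Real.summable_one_div_nat_pow.mpr (by norm_num : 1 < 2))
    have : (fun n : ℕ => 1 / ((n:ℝ)+1)^2) = fun n : ℕ => 1 / (((n+1 : ℕ)):ℝ)^2 := by
      funext n; push_cast; ring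
    rw [this]
    exact h2
  have hsum : ∑' k, P (A k) ≠ ∞ := by
    refine ne_top_of_le_ne_top ?_ (ENNReal.tsum_le_tsum hPA)
    rw [← ENNReal.ofReal_tsum_of_nonneg (fun k => by positivity) hsummable]
    exact ENNReal.ofReal_ne_top
  have hBC : ∀ᵐ ω ∂P, {k : ℕ | ω ∈ A k}.Finite := ae_finite_setOf_mem hsum
  have hZae : ∀ᵐ ω ∂P, ∀ t : ℕ, 1 ≤ t → Z t ω ≤ ε := by
    rw [ae_all_iff]
    intro t
    by_cases ht : 1 ≤ t
    · filter_upwards [hcondW t ht] with ω h _; exact h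
    · filter_upwards with ω h1; exact absurd h1 ht
  filter_upwards [hBC, hZae] with ω hfin hZω
  obtain ⟨K, hK⟩ := hfin.bddAbove
  have hnotA : ∀ j, K + 1 ≤ j → ω ∉ A j := by
    intro j hj hmem
    have := hK hmem
    omega
  rw [eventually_atTop]
  refine ⟨(K+2)^2, fun T hT => ?_⟩
  set k := Nat.sqrt T with hk
  have hsq : Nat.sqrt ((K+2)^2) = K+2 := Nat.sqrt_eq' (K+2)
  have hk2 : K + 2 ≤ k := by
    have := Nat.sqrt_le_sqrt hT
    omega
  have hkk : k ^ 2 ≤ T := Nat.sqrt_le' T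
  have hT4 : T < (k+1) ^ 2 := Nat.lt_succ_sqrt' T
  have hSb : S ((k+1)^2) ω < ε * ((k:ℝ)+1)^2 := by
    have hnot := hnotA k (by omega)
    rw [hA] at hnot
    simp only [Set.mem_setOf_eq, not_le] at hnot
    by_contra hcon
    push_neg at hcon
    have hp : (0:ℝ) < ε * ((k:ℝ)+1)^2 := by positivity
    nlinarith
  have hsplit : ∑ t ∈ Finset.Icc 1 ((k+1)^2), W t ω
      ≤ S ((k+1)^2) ω + ε * ((k:ℝ)+1)^2 := by
    have h1 : ∑ t ∈ Finset.Icc 1 ((k+1)^2), W t ω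
        = S ((k+1)^2) ω + ∑ t ∈ Finset.Icc 1 ((k+1)^2), Z t ω := by
      rw [hS, ← Finset.sum_add_distrib]
      exact Finset.sum_congr rfl fun t _ => by simp [hY]
    rw [h1]
    have h2 : ∑ t ∈ Finset.Icc 1 ((k+1)^2), Z t ω
        ≤ ∑ t ∈ Finset.Icc 1 ((k+1)^2), ε :=
      Finset.sum_le_sum fun t htm => hZω t (Finset.mem_Icc.mp htm).1
    have h3 : ∑ _t ∈ Finset.Icc 1 ((k+1)^2), (ε:ℝ) = ((k:ℝ)+1)^2 * ε := by
      rw [Finset.sum_const, Nat.card_Icc]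
      push_cast
      ring
    nlinarith [h2, h3]
  have hmono : ∑ t ∈ Finset.Icc 1 T, W t ω
      ≤ ∑ t ∈ Finset.Icc 1 ((k+1)^2), W t ω :=
    Finset.sum_le_sum_of_subset_of_nonneg
      (Finset.Icc_subset_Icc le_rfl hT4.le) (fun t _ _ => hW0 t ω)
  have hT1 : 1 ≤ T := le_trans (by nlinarith) hT
  have hTpos : (0:ℝ) < (T:ℝ) := by exact_mod_cast Nat.lt_of_lt_of_le Nat.zero_lt_one hT1
  rw [div_le_iff₀ hTpos]
  have hkR : (1:ℝ) ≤ (k:ℝ) := by exact_mod_cast (by omega : 1 ≤ k)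
  have hkkR : (k:ℝ) ^ 2 ≤ (T:ℝ) := by exact_mod_cast hkk
  calc ∑ t ∈ Finset.Icc 1 T, W t ω
      ≤ S ((k+1)^2) ω + ε * ((k:ℝ)+1)^2 := hmono.trans hsplit
    _ ≤ 2 * (ε * ((k:ℝ)+1)^2) := by nlinarith
    _ ≤ 8 * ε * (T:ℝ) := by
        have h4 : ((k:ℝ)+1)^2 ≤ 4 * (k:ℝ)^2 := by nlinarith
        nlinarith [mul_le_mul_of_nonneg_left h4 hε.le,
          mul_le_mul_of_nonneg_left hkkR hε.le]

/-- Any online locally consistent prediction strategy achieves vanishing average loss,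
almost surely, against a `ν`-dominated adversary. -/
theorem OLC_average_loss_to_zero
    {X Y Ω : Type*} [MeasurableSpace X]
    [Countable Y] [MeasurableSpace Y] [MeasurableSingletonClass Y]
    {mΩ : MeasurableSpace Ω} (P : Measure Ω) [IsProbabilityMeasure P]
    (ℱ : Filtration ℕ mΩ)
    (ν : Measure X) [IsFiniteMeasure ν]
    (c : X → Y) (hc : Measurable c)
    -- the bounded measurable loss
    (ℓ : X × Y × Y → ℝ) (hℓmeas : Measurable ℓ) (C : ℝ)
    (hℓ0 : ∀ q : X × Y × Y, 0 ≤ ℓ q) (hℓC : ∀ q : X × Y × Y, ℓ q ≤ C)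
    (hℓdiag : ∀ (p : X) (y : Y), ℓ (p, y, y) = 0)
    -- the prediction strategy, mapping histories to measurable hypotheses
    (alg : List (X × Y) → X → Y) (halg : ∀ l, Measurable (alg l))
    -- the strategy is online locally consistent for `c`
    (U : ℕ → Set X) (hUmeas : ∀ n, MeasurableSet (U n))
    (hUcover : ν (Set.univ \ ⋃ n, U n) = 0)
    (hOLC : ∀ (n : ℕ) (x : ℕ → X),
      ({t : ℕ | 1 ≤ t ∧ x t ∈ U n}).Finite ∨
      ∀ ε : ℝ, 0 < ε → ∃ T : ℕ, ∀ t, T ≤ t →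
        ∀ p ∈ U n, ℓ (p, c p, alg (history c x t) p) < ε)
    -- the adapted process of instances
    (Xp : ℕ → Ω → X) (hadapt : ∀ t, 1 ≤ t → Measurable[ℱ t] (Xp t))
    -- the adversary: `μa t ω` is the conditional law of `Xp t` given `ℱ (t-1)`
    (μa : ℕ → Ω → Measure X) (hprob : ∀ t ω, IsProbabilityMeasure (μa t ω))
    (hmeas : ∀ t, 1 ≤ t → ∀ A : Set X, MeasurableSet A →
      Measurable[ℱ (t - 1)] fun ω => μa t ω A)
    (hcond : ∀ t, 1 ≤ t → ∀ A : Set X, MeasurableSet A →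
      (fun ω => (μa t ω A).toReal) =ᵐ[P]
        MeasureTheory.condExp (ℱ (t - 1)) P
          ((Xp t ⁻¹' A).indicator fun _ => (1 : ℝ)))
    -- the adversary is `ν`-dominated
    (hdom : ∀ ε : ℝ≥0∞, 0 < ε → ∃ δ : ℝ≥0∞, 0 < δ ∧
      ∀ A : Set X, MeasurableSet A → ν A < δ → ∀ t, 1 ≤ t →
        ∀ᵐ ω ∂P, μa t ω A < ε) :
    ∀ᵐ ω ∂P, Tendsto
      (fun T : ℕ =>
        (∑ t ∈ Finset.Icc 1 T,
          ℓ (Xp t ω, c (Xp t ω),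
            alg (history c (fun s => Xp s ω) t) (Xp t ω))) / T)
      atTop (nhds 0) := by
  classical
  haveI hne : Nonempty Ω := by
    by_contra h
    rw [not_nonempty_iff] at h
    have h1 := measure_univ (μ := P)
    rw [Set.univ_eq_empty_iff.mpr h, measure_empty] at h1
    exact zero_ne_one h1
  obtain ⟨ω0⟩ := hne
  have hC : 0 ≤ C := le_trans (hℓ0 (Xp 0 ω0, c (Xp 0 ω0), c (Xp 0 ω0))) (hℓC _)
  set Utot : Set X := ⋃ n, U n with hUtot
  have hUtotm : MeasurableSet Utot := MeasurableSet.iUnion hUmeas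
  set Acomp : Set X := Set.univ \ Utot with hAcomp
  have hAcm : MeasurableSet Acomp := MeasurableSet.univ.diff hUtotm
  -- Step A : a.s. the adversary puts zero mass on the complement of the cover
  have hmuA0 : ∀ t, 1 ≤ t → ∀ᵐ ω ∂P, μa t ω Acomp = 0 := by
    intro t ht
    have h1 : ∀ᵐ ω ∂P, ∀ j : ℕ, μa t ω Acomp < ((j : ℝ≥0∞)+1)⁻¹ := by
      rw [ae_all_iff]
      intro j
      obtain ⟨δ, hδpos, hδ⟩ := hdom ((j : ℝ≥0∞)+1)⁻¹
        (ENNReal.inv_pos.mpr (by simp))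
      exact hδ Acomp hAcm (by rw [hUcover]; exact hδpos) t ht
    filter_upwards [h1] with ω hω
    by_contra hne0
    obtain ⟨n, hn⟩ := ENNReal.exists_inv_nat_lt hne0
    have h2 : ((n : ℝ≥0∞)+1)⁻¹ ≤ (n : ℝ≥0∞)⁻¹ :=
      ENNReal.inv_le_inv.mpr (by simp)
    exact lt_asymm hn ((hω n).trans_le h2)
  -- Step A' : a.s. every instance lands in the cover
  have hXA : ∀ t, 1 ≤ t → ∀ᵐ ω ∂P, Xp t ω ∈ Utot := by
    intro t ht
    have hXm : Measurable (Xp t) := fun s hs => ℱ.le t _ (hadapt t ht hs)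
    have hpre : MeasurableSet (Xp t ⁻¹' Acomp) := hXm hAcm
    have e1 : ∫ ω, ((Xp t ⁻¹' Acomp).indicator (fun _ => (1:ℝ))) ω ∂P
        = ∫ ω, (MeasureTheory.condExp (ℱ (t-1)) P
            ((Xp t ⁻¹' Acomp).indicator fun _ => (1:ℝ))) ω ∂P :=
      (integral_condExp (ℱ.le (t-1))).symm
    have e2 : ∫ ω, (MeasureTheory.condExp (ℱ (t-1)) P
          ((Xp t ⁻¹' Acomp).indicator fun _ => (1:ℝ))) ω ∂P
        = ∫ ω, (μa t ω Acomp).toReal ∂P :=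
      integral_congr_ae (hcond t ht Acomp hAcm).symm
    have e3 : ∫ ω, (μa t ω Acomp).toReal ∂P = 0 := by
      rw [integral_congr_ae (g := fun _ => (0:ℝ)) ?_, integral_zero]
      filter_upwards [hmuA0 t ht] with ω h
      simp [h]
    have e4 : ∫ ω, ((Xp t ⁻¹' Acomp).indicator (fun _ => (1:ℝ))) ω ∂P
        = (P (Xp t ⁻¹' Acomp)).toReal := by
      rw [integral_indicator_const (1:ℝ) hpre]
      simp [Measure.real]
    have h5 : P (Xp t ⁻¹' Acomp) = 0 := by
      have h6 : (P (Xp t ⁻¹' Acomp)).toReal = 0 := by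
        rw [← e4]; rw [e1, e2, e3]
      exact ((ENNReal.toReal_eq_zero_iff _).mp h6).resolve_right (measure_ne_top _ _)
    have h7 : ∀ᵐ ω ∂P, ω ∉ Xp t ⁻¹' Acomp := by
      rw [ae_iff]
      simpa using (show P {a | Xp t a ∈ Acomp} = 0 from h5)
    filter_upwards [h7] with ω hω
    by_contra hcon
    exact hω ⟨Set.mem_univ _, hcon⟩
  -- the residual sets
  set V : ℕ → Set X := fun M => ⋃ n ∈ Finset.range (M+1), U n with hV
  set B : ℕ → Set X := fun M => Utot \ V M with hB
  have hVm : ∀ M, MeasurableSet (V M) :=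
    fun M => Finset.measurableSet_biUnion _ (fun n _ => hUmeas n)
  have hBm : ∀ M, MeasurableSet (B M) := fun M => hUtotm.diff (hVm M)
  have hBanti : Antitone B := by
    intro M M' hMM' p hp
    refine ⟨hp.1, fun hv => hp.2 ?_⟩
    rw [Set.mem_iUnion₂] at hv ⊢
    obtain ⟨n, hn, hpn⟩ := hv
    exact ⟨n, Finset.mem_range.mpr (by have := Finset.mem_range.mp hn; omega), hpn⟩
  have hBinter : ⋂ M, B M = ∅ := by
    ext p
    simp only [Set.mem_iInter, Set.mem_empty_iff_false, iff_false]
    intro h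
    obtain ⟨hU1, -⟩ := h 0
    obtain ⟨n, hn⟩ := Set.mem_iUnion.mp hU1
    exact (h n).2 (Set.mem_biUnion (Finset.mem_range.mpr (Nat.lt_succ_self n)) hn)
  have hνB : Tendsto (fun M => ν (B M)) atTop (nhds 0) := by
    have h := tendsto_measure_iInter_atTop (μ := ν)
      (fun M => (hBm M).nullMeasurableSet) hBanti ⟨0, measure_ne_top _ _⟩
    rw [hBinter, measure_empty] at h
    exact h
  -- for each k, pick a level N k with small conditional mass on the residual
  have hkey : ∀ k : ℕ, ∃ M : ℕ, ∀ t, 1 ≤ t →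
      ∀ᵐ ω ∂P, (μa t ω (B M)).toReal ≤ 1/((k:ℝ)+1) := by
    intro k
    have hεpos : (0:ℝ) < 1/((k:ℝ)+1) := by positivity
    obtain ⟨δ, hδpos, hδ⟩ := hdom (ENNReal.ofReal (1/((k:ℝ)+1)))
      (ENNReal.ofReal_pos.mpr hεpos)
    obtain ⟨M, hM⟩ := (hνB.eventually (gt_mem_nhds hδpos)).exists
    refine ⟨M, fun t ht => ?_⟩
    filter_upwards [hδ (B M) (hBm M) hM t ht] with ω hω
    haveI := hprob t ω
    exact (ENNReal.toReal_lt_of_lt_ofReal hω).le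
  choose N hN using hkey
  -- the frequency bounds
  have hfreq : ∀ k : ℕ, ∀ᵐ ω ∂P, ∀ᶠ T : ℕ in atTop,
      (∑ t ∈ Finset.Icc 1 T,
        (Xp t ⁻¹' B (N k)).indicator (fun _ => (1:ℝ)) ω) / T
        ≤ 8 * (1/((k:ℝ)+1)) := by
    intro k
    refine freq_bound P ℱ
      (fun t => (Xp t ⁻¹' B (N k)).indicator (fun _ => (1:ℝ))) ?_ ?_ ?_
      (by positivity) ?_
    · intro t ht
      exact measurable_const.indicator ((hadapt t ht) (hBm (N k)))
    · intro t ω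
      exact Set.indicator_nonneg (fun _ _ => zero_le_one) _
    · intro t ω
      by_cases h : ω ∈ Xp t ⁻¹' B (N k) <;> simp [Set.indicator_apply, h]
    · intro t ht
      filter_upwards [hN k t ht, hcond t ht (B (N k)) (hBm (N k))] with ω h1 h2
      rw [← h2]
      exact h1
  have hXAall : ∀ᵐ ω ∂P, ∀ t, 1 ≤ t → Xp t ω ∈ Utot := by
    rw [ae_all_iff]
    intro t
    by_cases ht : 1 ≤ t
    · filter_upwards [hXA t ht] with ω h _; exact h
    · filter_upwards with ω h1; exact absurd h1 ht
  have hfreqall : ∀ᵐ ω ∂P, ∀ k : ℕ, ∀ᶠ T : ℕ in atTop,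
      (∑ t ∈ Finset.Icc 1 T,
        (Xp t ⁻¹' B (N k)).indicator (fun _ => (1:ℝ)) ω) / T
        ≤ 8 * (1/((k:ℝ)+1)) := ae_all_iff.mpr hfreq
  filter_upwards [hXAall, hfreqall] with ω hωU hωF
  set x : ℕ → X := fun s => Xp s ω with hx
  rw [Metric.tendsto_atTop]
  intro εt hεt
  obtain ⟨k, hk⟩ := exists_nat_one_div_lt
    (show (0:ℝ) < εt/(2*(8*C+1)) by positivity)
  -- OLC thresholds for the finitely many relevant U n
  have hthresh : ∀ n : ℕ, ∃ Tn : ℕ, ∀ t, Tn ≤ t → 1 ≤ t → x t ∈ U n →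
      ℓ (x t, c (x t), alg (history c x t) (x t)) < 1/((k:ℝ)+1) := by
    intro n
    rcases hOLC n x with hfin | hconv
    · obtain ⟨M, hM⟩ := hfin.bddAbove
      exact ⟨M+1, fun t hts h1t hmem =>
        absurd (hM (Set.mem_setOf_eq ▸ ⟨h1t, hmem⟩ : t ∈ {t : ℕ | 1 ≤ t ∧ x t ∈ U n}))
          (by omega)⟩
    · obtain ⟨Tn, hTn⟩ := hconv _ (by positivity : (0:ℝ) < 1/((k:ℝ)+1))
      exact ⟨Tn, fun t hts h1t hmem => hTn t hts _ hmem⟩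
  choose Tn hTn using hthresh
  set Tstar : ℕ := (Finset.range (N k + 1)).sup Tn + 1 with hTstar
  -- pointwise bound for large t
  have hpt : ∀ t, 1 ≤ t → Tstar ≤ t →
      ℓ (x t, c (x t), alg (history c x t) (x t)) ≤
        C * (Xp t ⁻¹' B (N k)).indicator (fun _ => (1:ℝ)) ω + 1/((k:ℝ)+1) := by
    intro t h1t hts
    by_cases hmemB : Xp t ω ∈ B (N k)
    · rw [Set.indicator_of_mem (Set.mem_preimage.mpr hmemB)]
      have h1 := hℓC (x t, c (x t), alg (history c x t) (x t))
      have h2 : (0:ℝ) < 1/((k:ℝ)+1) := by positivity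
      linarith
    · rw [Set.indicator_of_notMem (fun hcc => hmemB (Set.mem_preimage.mp hcc))]
      have hUt : x t ∈ Utot := hωU t h1t
      have hVt : x t ∈ V (N k) := by
        by_contra h
        exact hmemB ⟨hUt, h⟩
      rw [hV] at hVt
      simp only [Finset.mem_range, Set.mem_iUnion, exists_prop] at hVt
      obtain ⟨n, hnlt, hUn⟩ := hVt
      have hTle : Tn n ≤ t := by
        have hsup : Tn n ≤ (Finset.range (N k + 1)).sup Tn :=
          Finset.le_sup (Finset.mem_range.mpr hnlt)
        omega
      have := hTn n t hTle h1t hUn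
      rw [mul_zero, zero_add]
      exact this.le
  -- summed bound
  have hsum3 : ∀ T : ℕ,
      ∑ t ∈ Finset.Icc 1 T, ℓ (x t, c (x t), alg (history c x t) (x t))
      ≤ C * (∑ t ∈ Finset.Icc 1 T,
          (Xp t ⁻¹' B (N k)).indicator (fun _ => (1:ℝ)) ω)
        + (1/((k:ℝ)+1)) * T + C * Tstar := by
    intro T
    have h1 : ∀ t ∈ Finset.Icc 1 T,
        ℓ (x t, c (x t), alg (history c x t) (x t)) ≤
          C * (Xp t ⁻¹' B (N k)).indicator (fun _ => (1:ℝ)) ω + 1/((k:ℝ)+1)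
            + (if t < Tstar then C else 0) := by
      intro t htm
      obtain ⟨h1t, _⟩ := Finset.mem_Icc.mp htm
      by_cases hts : Tstar ≤ t
      · rw [if_neg (by omega)]
        have := hpt t h1t hts
        linarith
      · rw [if_pos (by omega)]
        have hind : (0:ℝ) ≤ (Xp t ⁻¹' B (N k)).indicator (fun _ => (1:ℝ)) ω :=
          Set.indicator_nonneg (fun _ _ => zero_le_one) _
        have h2 := hℓC (x t, c (x t), alg (history c x t) (x t))
        have h3 : (0:ℝ) < 1/((k:ℝ)+1) := by positivity
        nlinarith
    have h2 : ∑ t ∈ Finset.Icc 1 T, (if t < Tstar then C else 0) ≤ C * Tstar := by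
      rw [← Finset.sum_filter]
      rw [Finset.sum_const]
      have hcard : ((Finset.Icc 1 T).filter (· < Tstar)).card ≤ Tstar := by
        have hsub : (Finset.Icc 1 T).filter (· < Tstar) ⊆ Finset.range Tstar := by
          intro t htm
          simp only [Finset.mem_filter] at htm
          exact Finset.mem_range.mpr htm.2
        exact le_trans (Finset.card_le_card hsub) (by simp)
      calc (((Finset.Icc 1 T).filter (· < Tstar)).card : ℕ) • C
          = (((Finset.Icc 1 T).filter (· < Tstar)).card : ℝ) * C := by
            rw [nsmul_eq_mul]
        _ ≤ (Tstar : ℝ) * C := by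
            have : (((Finset.Icc 1 T).filter (· < Tstar)).card : ℝ) ≤ (Tstar : ℝ) := by
              exact_mod_cast hcard
            nlinarith
        _ = C * Tstar := by ring
    calc ∑ t ∈ Finset.Icc 1 T, ℓ (x t, c (x t), alg (history c x t) (x t))
        ≤ ∑ t ∈ Finset.Icc 1 T,
            (C * (Xp t ⁻¹' B (N k)).indicator (fun _ => (1:ℝ)) ω + 1/((k:ℝ)+1)
              + (if t < Tstar then C else 0)) := Finset.sum_le_sum h1
      _ = C * (∑ t ∈ Finset.Icc 1 T,
            (Xp t ⁻¹' B (N k)).indicator (fun _ => (1:ℝ)) ω)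
          + (1/((k:ℝ)+1)) * T
          + ∑ t ∈ Finset.Icc 1 T, (if t < Tstar then C else 0) := by
          rw [Finset.sum_add_distrib, Finset.sum_add_distrib, Finset.mul_sum]
          rw [Finset.sum_const, Nat.card_Icc, nsmul_eq_mul]
          push_cast
          ring
      _ ≤ _ := by linarith
  -- eventual bounds and conclusion
  have hev2 : ∀ᶠ T : ℕ in atTop, C * (Tstar:ℝ) / T < εt/2 :=
    (tendsto_const_div_atTop_nhds_zero_nat (C * Tstar)).eventually_lt_const
      (half_pos hεt)
  rw [eventually_atTop] at hev2
  have hev1 := hωF k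
  rw [eventually_atTop] at hev1
  obtain ⟨T1, hT1⟩ := hev1
  obtain ⟨T2, hT2⟩ := hev2
  refine ⟨max (max T1 T2) 1, fun T hT => ?_⟩
  have h1T : 1 ≤ T := le_trans (le_max_right _ _) hT
  have hTpos : (0:ℝ) < (T:ℝ) := by exact_mod_cast h1T
  have hsumnn : (0:ℝ) ≤ ∑ t ∈ Finset.Icc 1 T,
      ℓ (x t, c (x t), alg (history c x t) (x t)) :=
    Finset.sum_nonneg fun t _ => hℓ0 _
  rw [Real.dist_eq, sub_zero, abs_of_nonneg (by positivity)]
  rw [div_lt_iff₀ hTpos]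
  have hfr := hT1 T (le_trans (le_trans (le_max_left _ _) (le_max_left _ _)) hT)
  have hot := hT2 T (le_trans (le_trans (le_max_right _ _) (le_max_left _ _)) hT)
  rw [div_le_iff₀ hTpos] at hfr
  rw [div_lt_iff₀ hTpos] at hot
  have hmain := hsum3 T
  have hindnn : (0:ℝ) ≤ ∑ t ∈ Finset.Icc 1 T,
      (Xp t ⁻¹' B (N k)).indicator (fun _ => (1:ℝ)) ω :=
    Finset.sum_nonneg fun t _ => Set.indicator_nonneg (fun _ _ => zero_le_one) _
  -- C * ∑ind ≤ C * (8 εk T)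
  have hCfr : C * (∑ t ∈ Finset.Icc 1 T,
      (Xp t ⁻¹' B (N k)).indicator (fun _ => (1:ℝ)) ω)
      ≤ C * (8 * (1/((k:ℝ)+1)) * T) := mul_le_mul_of_nonneg_left hfr hC
  have hεk : (0:ℝ) < 1/((k:ℝ)+1) := by positivity
  -- (8C+1) εk < εt/2
  have hsmall : (8*C+1) * (1/((k:ℝ)+1)) < εt/2 := by
    have h8 : (0:ℝ) < 8*C+1 := by linarith
    calc (8*C+1) * (1/((k:ℝ)+1)) < (8*C+1) * (εt/(2*(8*C+1))) :=
          mul_lt_mul_of_pos_left hk h8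
      _ = εt/2 := by field_simp
  have hsmallT : (8*C+1) * (1/((k:ℝ)+1)) * T ≤ (εt/2) * T :=
    mul_le_mul_of_nonneg_right hsmall.le hTpos.le
  nlinarith
end

section
/- Let (X, ρ) be a separable metric space with Borel σ-algebra, ν a finite Borel measure on X, Y a countable label set, and c : X → Y a Borel-measurable concept with ν(∂X) = 0. Let (X_t)_{t≥1} be an X-valued process driven by an adversary with smoothness rate ε : [0, ∞) → [0, 1], meaning that for every Borel A ⊆ X, every t ≥ 1, and P-almost every ω, μ_t(ω)(A) ≤ ε(ν(A)). Let M_T denote the number of times 2 ≤ t ≤ T at which the 1-nearest neighbor rule makes a mistake under worst-case tie-breaking (i.e. some s < t with ρ(X_t, X_s) ≤ ρ(X_t, X_{s'}) for all s' < t has c(X_s) ≠ c(X_t)). Then for every p ∈ (0, 1), with probability at least 1 − p the following holds simultaneously for all T ≥ 1: M_T ≤ min{ T , inf_{V ⊆ X Borel} [ N_ML(V) + T · ε(ν(X \ V)) + sqrt(2 T log(2T/p)) ] }. -/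
open scoped ENNReal
open MeasureTheory Filter

/-- The mutually-labeling covering number `N_ML(V)`: the minimal cardinality of a
family of mutually-labeling sets for `c` whose union contains `V`, as a value in
`[0,∞]` (`∞` if no finite such family exists). -/
noncomputable def NML {X Y : Type*} [MetricSpace X] (c : X → Y) (V : Set X) : ℝ≥0∞ :=
  ⨅ (𝒰 : Finset (Set X)) (_ : ∀ U ∈ 𝒰, MutuallyLabeling c U)
    (_ : V ⊆ ⋃ U ∈ 𝒰, U), (𝒰.card : ℝ≥0∞)

noncomputable def zSum {Ω : Type*} (Z c : ℕ → Ω → ℝ) (T : ℕ) (ω : Ω) : ℝ :=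
  ∑ t ∈ Finset.Icc 2 T, (Z t ω - c t ω)


lemma integrable_of_bdd {Ω : Type*} {mΩ : MeasurableSpace Ω} {P : Measure Ω}
    [IsFiniteMeasure P] {f : Ω → ℝ} (hf : Measurable f) (C : ℝ) (h : ∀ ω, |f ω| ≤ C) :
    Integrable f P := by
  refine Integrable.mono' (integrable_const C) hf.aestronglyMeasurable ?_
  exact Filter.Eventually.of_forall fun ω => by simpa using h ω


lemma hoeffNN_scalar (c l : ℝ) (hc0 : 0 ≤ c) (hc1 : c ≤ 1) (hl : 0 ≤ l) :
    Real.exp (-(l * c)) * (1 + (Real.exp l - 1) * c) ≤ Real.exp (l ^ 2 / 8) := by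
  set D : ℝ → ℝ := fun x => 1 + (Real.exp x - 1) * c with hDdef
  have hD : ∀ x : ℝ, 0 ≤ x → 1 ≤ D x := by
    intro x hx
    have h1 := Real.one_le_exp hx
    have : 0 ≤ (Real.exp x - 1) * c := by nlinarith
    simp only [hDdef]; linarith
  have hDpos : ∀ x : ℝ, 0 ≤ x → 0 < D x := fun x hx => lt_of_lt_of_le one_pos (hD x hx)
  set f : ℝ → ℝ := fun x => Real.log (D x) - x * c - x ^ 2 / 8 with hfdef
  set f' : ℝ → ℝ := fun x => Real.exp x * c / D x - c - x / 4 with hf'def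
  set f'' : ℝ → ℝ := fun x => Real.exp x * c * (1 - c) / (D x) ^ 2 - 1 / 4 with hf''def
  have hDderiv : ∀ x : ℝ, HasDerivAt D (Real.exp x * c) x := by
    intro x
    exact (((Real.hasDerivAt_exp x).sub_const 1).mul_const c).const_add 1
  have hfderiv : ∀ x : ℝ, 0 ≤ x → HasDerivAt f (f' x) x := by
    intro x hx
    have h1 : HasDerivAt (fun y => Real.log (D y)) (Real.exp x * c / D x) x :=
      (hDderiv x).log (hDpos x hx).ne'
    have h2 : HasDerivAt f (Real.exp x * c / D x - 1 * c - (2 * x ^ 1) / 8) x :=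
      (h1.sub ((hasDerivAt_id x).mul_const c)).sub (((hasDerivAt_pow 2 x)).div_const 8)
    have h3 : Real.exp x * c / D x - 1 * c - (2 * x ^ 1) / 8 = f' x := by
      simp only [hf'def]; ring
    rwa [h3] at h2
  have hf'deriv : ∀ x : ℝ, 0 ≤ x → HasDerivAt f' (f'' x) x := by
    intro x hx
    have h1 : HasDerivAt (fun y => Real.exp y * c / D y)
        ((Real.exp x * c * D x - Real.exp x * c * (Real.exp x * c)) / (D x) ^ 2) x :=
      ((Real.hasDerivAt_exp x).mul_const c).div (hDderiv x) (hDpos x hx).ne'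
    have h2 : HasDerivAt f'
        ((Real.exp x * c * D x - Real.exp x * c * (Real.exp x * c)) / (D x) ^ 2 - 1 / 4) x :=
      (h1.sub_const c).sub ((hasDerivAt_id x).div_const 4)
    have h3 : (Real.exp x * c * D x - Real.exp x * c * (Real.exp x * c)) / (D x) ^ 2 - 1 / 4
        = f'' x := by
      simp only [hf''def, hDdef]
      have hne : (1 + (Real.exp x - 1) * c) ≠ 0 := by
        have := hDpos x hx; simpa [hDdef] using this.ne'
      field_simp
      ring
    rwa [h3] at h2
  have hf''nonpos : ∀ x : ℝ, 0 ≤ x → f'' x ≤ 0 := by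
    intro x hx
    have hDx : (0:ℝ) < 1 + (Real.exp x - 1) * c := by
      have := hDpos x hx; simpa [hDdef] using this
    have key : 4 * (Real.exp x * c * (1 - c)) ≤ (1 + (Real.exp x - 1) * c) ^ 2 := by
      nlinarith [sq_nonneg ((1 - c) - Real.exp x * c)]
    have h2 : Real.exp x * c * (1 - c) / (1 + (Real.exp x - 1) * c) ^ 2 ≤ 1 / 4 := by
      rw [div_le_div_iff₀ (by positivity) (by norm_num)]
      linarith
    simp only [hf''def, hDdef]; linarith
  have hf'anti : AntitoneOn f' (Set.Ici (0:ℝ)) := by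
    apply antitoneOn_of_deriv_nonpos (convex_Ici 0)
    · intro x hx
      exact (hf'deriv x hx).continuousAt.continuousWithinAt
    · intro x hx
      rw [interior_Ici] at hx
      exact (hf'deriv x (le_of_lt hx)).differentiableAt.differentiableWithinAt
    · intro x hx
      rw [interior_Ici] at hx
      rw [(hf'deriv x (le_of_lt hx)).deriv]
      exact hf''nonpos x (le_of_lt hx)
  have hf'0 : f' 0 = 0 := by simp [hf'def, hDdef]
  have hf'nonpos : ∀ x : ℝ, 0 ≤ x → f' x ≤ 0 := by
    intro x hx
    have := hf'anti (Set.self_mem_Ici) hx hx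
    rw [hf'0] at this; exact this
  have hfanti : AntitoneOn f (Set.Ici (0:ℝ)) := by
    apply antitoneOn_of_deriv_nonpos (convex_Ici 0)
    · intro x hx
      exact (hfderiv x hx).continuousAt.continuousWithinAt
    · intro x hx
      rw [interior_Ici] at hx
      exact (hfderiv x (le_of_lt hx)).differentiableAt.differentiableWithinAt
    · intro x hx
      rw [interior_Ici] at hx
      rw [(hfderiv x (le_of_lt hx)).deriv]
      exact hf'nonpos x (le_of_lt hx)
  have hf0 : f 0 = 0 := by simp [hfdef, hDdef]
  have hfl : f l ≤ 0 := by
    have := hfanti (Set.self_mem_Ici) hl hl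
    rw [hf0] at this; exact this
  have hkey : Real.log (D l) - l * c ≤ l ^ 2 / 8 := by
    simp only [hfdef] at hfl; linarith
  calc Real.exp (-(l * c)) * (1 + (Real.exp l - 1) * c)
      = Real.exp (Real.log (D l) - l * c) := by
        rw [show Real.log (D l) - l * c = Real.log (D l) + -(l * c) from by ring,
          Real.exp_add, Real.exp_log (hDpos l hl)]
        simp only [hDdef]; ring
    _ ≤ Real.exp (l ^ 2 / 8) := Real.exp_le_exp.mpr hkey

lemma azuma_mgf {Ω : Type*} {mΩ : MeasurableSpace Ω} (P : Measure Ω) [IsProbabilityMeasure P]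
    (ℱ : Filtration ℕ mΩ) (Z cf : ℕ → Ω → ℝ)
    (hZmeas : ∀ t, 2 ≤ t → Measurable[ℱ t] (Z t))
    (hZ01 : ∀ t ω, Z t ω = 0 ∨ Z t ω = 1)
    (hcmeas : ∀ t, 2 ≤ t → Measurable[ℱ (t - 1)] (cf t))
    (hc01 : ∀ t ω, 0 ≤ cf t ω ∧ cf t ω ≤ 1)
    (hadj : ∀ t, 2 ≤ t → ∀ f : Ω → ℝ, Measurable[ℱ (t - 1)] f → (∃ C, ∀ ω, |f ω| ≤ C) →
      ∫ ω, f ω * Z t ω ∂P = ∫ ω, f ω * cf t ω ∂P)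
    (l : ℝ) (hl : 0 ≤ l) (T : ℕ) :
    ∫ ω, Real.exp (l * zSum Z cf T ω) ∂P ≤ Real.exp ((T - 1 : ℕ) * (l ^ 2 / 8)) := by
  -- abbreviations
  have hZabs : ∀ t ω, |Z t ω - cf t ω| ≤ 1 := by
    intro t ω
    rcases hZ01 t ω with h | h <;> rcases hc01 t ω with ⟨h0, h1⟩ <;> rw [h] <;>
      rw [abs_le] <;> constructor <;> linarith
  have hzb : ∀ T ω, |zSum Z cf T ω| ≤ (T : ℝ) := by
    intro T ω
    calc |zSum Z cf T ω| ≤ ∑ t ∈ Finset.Icc 2 T, |Z t ω - cf t ω| :=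
          Finset.abs_sum_le_sum_abs _ _
      _ ≤ ∑ t ∈ Finset.Icc 2 T, 1 := Finset.sum_le_sum fun t _ => hZabs t ω
      _ ≤ (T : ℝ) := by
          rw [Finset.sum_const, nsmul_eq_mul, mul_one, Nat.card_Icc]
          exact Nat.cast_le.mpr (by omega)
  have hzmeas : ∀ T, Measurable[ℱ T] (zSum Z cf T) := by
    intro T
    apply Finset.measurable_sum
    intro t ht
    rw [Finset.mem_Icc] at ht
    have h1 : Measurable[ℱ T] (Z t) := (hZmeas t ht.1).mono (ℱ.mono ht.2) le_rfl
    have h2 : Measurable[ℱ T] (cf t) :=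
      (hcmeas t ht.1).mono (ℱ.mono (le_trans (Nat.sub_le _ _) ht.2)) le_rfl
    exact h1.sub h2
  induction T with
  | zero => simp [zSum]
  | succ T ih =>
    by_cases hT : T = 0
    · subst hT
      simp [zSum, Finset.Icc_eq_empty_of_lt]
    have hT1 : 1 ≤ T := Nat.one_le_iff_ne_zero.mpr hT
    have ht2 : 2 ≤ T + 1 := by omega
    have hsplit : Finset.Icc 2 (T + 1) = insert (T + 1) (Finset.Icc 2 T) :=
      (Finset.insert_Icc_right_eq_Icc_add_one ht2).symm
    have hnotmem : T + 1 ∉ Finset.Icc 2 T := by simp [Finset.mem_Icc]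
    have hzsucc : ∀ ω, zSum Z cf (T + 1) ω = zSum Z cf T ω + (Z (T+1) ω - cf (T+1) ω) := by
      intro ω
      rw [zSum, hsplit, Finset.sum_insert hnotmem]
      rw [zSum]; ring
    set g : Ω → ℝ := fun ω => Real.exp (l * zSum Z cf T ω - l * cf (T + 1) ω) with hg
    have hgmeas : Measurable[ℱ T] g := by
      apply Measurable.exp
      have h2 : Measurable[ℱ T] (cf (T + 1)) := by
        have := hcmeas (T + 1) ht2
        simpa using this
      exact ((hzmeas T).const_mul l).sub (h2.const_mul l)
    have hgbd : ∀ ω, |g ω| ≤ Real.exp (l * T) := by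
      intro ω
      rw [abs_of_pos (Real.exp_pos _), Real.exp_le_exp]
      have h1 := (abs_le.mp (hzb T ω)).2
      have h2 := (hc01 (T + 1) ω).1
      nlinarith
    have hgmeas0 : Measurable g := hgmeas.mono (ℱ.le T) le_rfl
    have hZm0 : Measurable (Z (T+1)) := (hZmeas _ ht2).mono (ℱ.le _) le_rfl
    have hcm0 : Measurable (cf (T+1)) := by
      have := (hcmeas _ ht2).mono (ℱ.le _) le_rfl
      simpa using this
    -- identity exp(l * zSum (T+1)) = g * (1 + (exp l - 1) * Z (T+1))
    have hid : ∀ ω, Real.exp (l * zSum Z cf (T + 1) ω)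
        = g ω + (Real.exp l - 1) * (g ω * Z (T + 1) ω) := by
      intro ω
      rw [hzsucc ω]
      rcases hZ01 (T + 1) ω with h | h
      · rw [h]; simp only [hg]
        rw [show l * (zSum Z cf T ω + (0 - cf (T+1) ω))
            = l * zSum Z cf T ω - l * cf (T+1) ω by ring]
        ring
      · rw [h]; simp only [hg]
        rw [show l * (zSum Z cf T ω + (1 - cf (T+1) ω))
            = (l * zSum Z cf T ω - l * cf (T+1) ω) + l by ring, Real.exp_add]
        ring
    have hexpl1 : (1:ℝ) ≤ Real.exp l := Real.one_le_exp hl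
    have hg_int : Integrable g P := integrable_of_bdd hgmeas0 _ hgbd
    have hgZ_int : Integrable (fun ω => g ω * Z (T+1) ω) P := by
      refine integrable_of_bdd (hgmeas0.mul hZm0) (Real.exp (l * T)) ?_
      intro ω
      rw [abs_mul]
      have h1 : |Z (T+1) ω| ≤ 1 := by rcases hZ01 (T+1) ω with h|h <;> rw [h] <;> norm_num
      calc |g ω| * |Z (T+1) ω| ≤ Real.exp (l * T) * 1 :=
            mul_le_mul (hgbd ω) h1 (abs_nonneg _) (Real.exp_pos _).le
        _ = Real.exp (l * T) := mul_one _
    have hgc_int : Integrable (fun ω => g ω * cf (T+1) ω) P := by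
      refine integrable_of_bdd (hgmeas0.mul hcm0) (Real.exp (l * T)) ?_
      intro ω
      rw [abs_mul]
      have h1 : |cf (T+1) ω| ≤ 1 := by
        rcases hc01 (T+1) ω with ⟨h0, h1⟩; rw [abs_of_nonneg h0]; exact h1
      calc |g ω| * |cf (T+1) ω| ≤ Real.exp (l * T) * 1 :=
            mul_le_mul (hgbd ω) h1 (abs_nonneg _) (Real.exp_pos _).le
        _ = Real.exp (l * T) := mul_one _
    have hprod_int : Integrable (fun ω => g ω * (1 + (Real.exp l - 1) * cf (T+1) ω)) P := by
      refine integrable_of_bdd (hgmeas0.mul ((measurable_const.add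
        (hcm0.const_mul _)))) (Real.exp (l * T) * Real.exp l) ?_
      intro ω
      rw [abs_mul]
      have h1 : |1 + (Real.exp l - 1) * cf (T+1) ω| ≤ Real.exp l := by
        rcases hc01 (T+1) ω with ⟨h0, h1⟩
        rw [abs_of_nonneg (by nlinarith)]
        nlinarith
      exact mul_le_mul (hgbd ω) h1 (abs_nonneg _) (Real.exp_pos _).le
    have hzS_int : Integrable (fun ω => Real.exp (l * zSum Z cf T ω)) P := by
      refine integrable_of_bdd ((((hzmeas T).mono (ℱ.le T) le_rfl).const_mul l).exp)
        (Real.exp (l * T)) ?_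
      intro ω
      rw [abs_of_pos (Real.exp_pos _), Real.exp_le_exp]
      have := (abs_le.mp (hzb T ω)).2
      nlinarith
    have hstep : ∫ ω, Real.exp (l * zSum Z cf (T + 1) ω) ∂P
        ≤ Real.exp (l ^ 2 / 8) * ∫ ω, Real.exp (l * zSum Z cf T ω) ∂P := by
      calc ∫ ω, Real.exp (l * zSum Z cf (T + 1) ω) ∂P
          = ∫ ω, (g ω + (Real.exp l - 1) * (g ω * Z (T+1) ω)) ∂P := by
            exact integral_congr_ae (Filter.Eventually.of_forall hid)
        _ = (∫ ω, g ω ∂P) + (Real.exp l - 1) * ∫ ω, g ω * Z (T+1) ω ∂P := by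
            rw [integral_add hg_int (hgZ_int.const_mul _), integral_const_mul]
        _ = (∫ ω, g ω ∂P) + (Real.exp l - 1) * ∫ ω, g ω * cf (T+1) ω ∂P := by
            rw [hadj (T+1) ht2 g hgmeas ⟨Real.exp (l * T), hgbd⟩]
        _ = ∫ ω, g ω * (1 + (Real.exp l - 1) * cf (T+1) ω) ∂P := by
            rw [← integral_const_mul, ← integral_add hg_int (hgc_int.const_mul _)]
            exact integral_congr_ae (Filter.Eventually.of_forall fun ω => by ring)
        _ ≤ ∫ ω, Real.exp (l ^ 2 / 8) * Real.exp (l * zSum Z cf T ω) ∂P := by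
            refine integral_mono hprod_int (hzS_int.const_mul _) ?_
            intro ω
            have harg : l * zSum Z cf T ω - l * cf (T+1) ω
                = l * zSum Z cf T ω + -(l * cf (T+1) ω) := by ring
            simp only [hg, harg, Real.exp_add]
            calc Real.exp (l * zSum Z cf T ω) * Real.exp (-(l * cf (T+1) ω)) *
                  (1 + (Real.exp l - 1) * cf (T+1) ω)
                = Real.exp (l * zSum Z cf T ω) * (Real.exp (-(l * cf (T+1) ω)) *
                  (1 + (Real.exp l - 1) * cf (T+1) ω)) := by ring
              _ ≤ Real.exp (l * zSum Z cf T ω) * Real.exp (l ^ 2 / 8) := by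
                  refine mul_le_mul_of_nonneg_left ?_ (Real.exp_pos _).le
                  exact hoeffNN_scalar (cf (T+1) ω) l (hc01 _ ω).1 (hc01 _ ω).2 hl
              _ = Real.exp (l ^ 2 / 8) * Real.exp (l * zSum Z cf T ω) := by ring
        _ = Real.exp (l ^ 2 / 8) * ∫ ω, Real.exp (l * zSum Z cf T ω) ∂P := by
            rw [integral_const_mul]
    calc ∫ ω, Real.exp (l * zSum Z cf (T + 1) ω) ∂P
        ≤ Real.exp (l ^ 2 / 8) * ∫ ω, Real.exp (l * zSum Z cf T ω) ∂P := hstep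
      _ ≤ Real.exp (l ^ 2 / 8) * Real.exp ((T - 1 : ℕ) * (l ^ 2 / 8)) :=
          mul_le_mul_of_nonneg_left ih (Real.exp_pos _).le
      _ = Real.exp ((T + 1 - 1 : ℕ) * (l ^ 2 / 8)) := by
          rw [← Real.exp_add]
          congr 1
          have h1 : ((T - 1 : ℕ) : ℝ) = (T : ℝ) - 1 := by
            rw [Nat.cast_sub hT1]; norm_num
          have h2 : ((T + 1 - 1 : ℕ) : ℝ) = (T : ℝ) := by norm_num
          rw [h1, h2]; ring



lemma azuma_tail {Ω : Type*} {mΩ : MeasurableSpace Ω} (P : Measure Ω) [IsProbabilityMeasure P]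
    (ℱ : Filtration ℕ mΩ) (Z cf : ℕ → Ω → ℝ)
    (hZmeas : ∀ t, 2 ≤ t → Measurable[ℱ t] (Z t))
    (hZ01 : ∀ t ω, Z t ω = 0 ∨ Z t ω = 1)
    (hcmeas : ∀ t, 2 ≤ t → Measurable[ℱ (t - 1)] (cf t))
    (hc01 : ∀ t ω, 0 ≤ cf t ω ∧ cf t ω ≤ 1)
    (hadj : ∀ t, 2 ≤ t → ∀ f : Ω → ℝ, Measurable[ℱ (t - 1)] f → (∃ C, ∀ ω, |f ω| ≤ C) →
      ∫ ω, f ω * Z t ω ∂P = ∫ ω, f ω * cf t ω ∂P)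
    (T : ℕ) (hT : 2 ≤ T) (b : ℝ) (hb : 0 ≤ b) :
    P {ω | b ≤ zSum Z cf T ω} ≤
      ENNReal.ofReal (Real.exp (-(2 * b ^ 2 / ((T : ℝ) - 1)))) := by
  have hmpos : (0:ℝ) < (T : ℝ) - 1 := by
    have : (2:ℝ) ≤ (T:ℝ) := by exact_mod_cast hT
    linarith
  set m : ℝ := (T : ℝ) - 1 with hm
  set l : ℝ := 4 * b / m with hldef
  have hl : 0 ≤ l := by positivity
  -- measurability and boundedness of zSum
  have hzmeas : Measurable (zSum Z cf T) := by
    apply Finset.measurable_sum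
    intro t ht
    rw [Finset.mem_Icc] at ht
    have h1 : Measurable (Z t) := ((hZmeas t ht.1).mono (ℱ.le t) le_rfl)
    have h2 : Measurable (cf t) := ((hcmeas t ht.1).mono (ℱ.le _) le_rfl)
    exact h1.sub h2
  have hzb : ∀ ω, |zSum Z cf T ω| ≤ (T : ℝ) := by
    intro ω
    have hZabs : ∀ t, |Z t ω - cf t ω| ≤ 1 := by
      intro t
      rcases hZ01 t ω with h | h <;> rcases hc01 t ω with ⟨h0, h1⟩ <;> rw [h] <;>
        rw [abs_le] <;> constructor <;> linarith
    calc |zSum Z cf T ω| ≤ ∑ t ∈ Finset.Icc 2 T, |Z t ω - cf t ω| :=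
          Finset.abs_sum_le_sum_abs _ _
      _ ≤ ∑ t ∈ Finset.Icc 2 T, 1 := Finset.sum_le_sum fun t _ => hZabs t
      _ ≤ (T : ℝ) := by
          rw [Finset.sum_const, nsmul_eq_mul, mul_one, Nat.card_Icc]
          exact Nat.cast_le.mpr (by omega)
  have hint : Integrable (fun ω => Real.exp (l * zSum Z cf T ω)) P := by
    refine integrable_of_bdd ((hzmeas.const_mul l).exp) (Real.exp (l * T)) ?_
    intro ω
    rw [abs_of_pos (Real.exp_pos _), Real.exp_le_exp]
    have := (abs_le.mp (hzb ω)).2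
    nlinarith
  have hch := ProbabilityTheory.measure_ge_le_exp_mul_mgf (X := zSum Z cf T) (μ := P) b hl hint
  have hmgf : ProbabilityTheory.mgf (zSum Z cf T) P l ≤ Real.exp ((T - 1 : ℕ) * (l ^ 2 / 8)) :=
    azuma_mgf P ℱ Z cf hZmeas hZ01 hcmeas hc01 hadj l hl T
  have hcast : ((T - 1 : ℕ) : ℝ) = m := by
    rw [Nat.cast_sub (by omega)]; simp [hm]
  have hfinal : (P {ω | b ≤ zSum Z cf T ω}).toReal ≤ Real.exp (-(2 * b ^ 2 / m)) := by
    calc (P {ω | b ≤ zSum Z cf T ω}).toReal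
        ≤ Real.exp (-l * b) * ProbabilityTheory.mgf (zSum Z cf T) P l := hch
      _ ≤ Real.exp (-l * b) * Real.exp ((T - 1 : ℕ) * (l ^ 2 / 8)) :=
          mul_le_mul_of_nonneg_left hmgf (Real.exp_pos _).le
      _ = Real.exp (-l * b + (T - 1 : ℕ) * (l ^ 2 / 8)) := (Real.exp_add _ _).symm
      _ = Real.exp (-(2 * b ^ 2 / m)) := by
          congr 1
          rw [hcast, hldef]
          field_simp
          ring
  calc P {ω | b ≤ zSum Z cf T ω}
      = ENNReal.ofReal ((P {ω | b ≤ zSum Z cf T ω}).toReal) :=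
        (ENNReal.ofReal_toReal (measure_ne_top P _)).symm
    _ ≤ ENNReal.ofReal (Real.exp (-(2 * b ^ 2 / m))) := ENNReal.ofReal_le_ofReal hfinal


lemma NN_mistakes_card_le {X Y : Type*} [MetricSpace X] (c : X → Y) (x : ℕ → X) (T : ℕ) :
    {t : ℕ | 2 ≤ t ∧ t ≤ T ∧ NNMistake c x t}.ncard ≤ T - 1 := by
  have h : {t : ℕ | 2 ≤ t ∧ t ≤ T ∧ NNMistake c x t} ⊆ Set.Icc 2 T :=
    fun t ht => Set.mem_Icc.mpr ⟨ht.1, ht.2.1⟩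
  calc _ ≤ (Set.Icc 2 T).ncard := Set.ncard_le_ncard h (Set.finite_Icc 2 T)
    _ ≤ T - 1 := by
      rw [← Finset.coe_Icc, Set.ncard_coe_finset, Nat.card_Icc]
      omega


lemma NN_pathwise {X Y : Type*} [MetricSpace X] (c : X → Y) (x : ℕ → X) (V : Set X)
    (𝒰 : Finset (Set X)) (hU : ∀ U ∈ 𝒰, MutuallyLabeling c U)
    (hcov : V ⊆ ⋃ U ∈ 𝒰, U) (T : ℕ) :
    ({t : ℕ | 2 ≤ t ∧ t ≤ T ∧ NNMistake c x t}).ncard ≤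
      𝒰.card + ({t : ℕ | 2 ≤ t ∧ t ≤ T ∧ x t ∉ V}).ncard := by
  classical
  set S := {t : ℕ | 2 ≤ t ∧ t ≤ T ∧ NNMistake c x t} with hS
  set Sin := {t : ℕ | t ∈ S ∧ x t ∈ V} with hSin
  set Sout := {t : ℕ | 2 ≤ t ∧ t ≤ T ∧ x t ∉ V} with hSout
  have hfin : ∀ s : Set ℕ, s ⊆ Set.Icc 2 T → s.Finite := fun s hs => (Set.finite_Icc 2 T).subset hs
  have hSfin : S.Finite := hfin S fun t ht => Set.mem_Icc.mpr ⟨ht.1, ht.2.1⟩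
  have hSoutfin : Sout.Finite := hfin Sout fun t ht => Set.mem_Icc.mpr ⟨ht.1, ht.2.1⟩
  have hsub : S ⊆ Sin ∪ Sout := by
    intro t ht
    by_cases hxt : x t ∈ V
    · exact Or.inl ⟨ht, hxt⟩
    · exact Or.inr ⟨ht.1, ht.2.1, hxt⟩
  have hch : ∀ t : ℕ, x t ∈ V → ∃ U, U ∈ 𝒰 ∧ x t ∈ U := by
    intro t ht
    have := hcov ht
    simpa using this
  set f : ℕ → Set X := fun t => if h : x t ∈ V then (hch t h).choose else ∅ with hf
  have hfmem : ∀ t, (h : x t ∈ V) → f t ∈ 𝒰 ∧ x t ∈ f t := by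
    intro t h
    simp only [hf, dif_pos h]
    exact ⟨(hch t h).choose_spec.1, (hch t h).choose_spec.2⟩
  -- key: no mistake at t' if some earlier point in same ML set
  have key : ∀ s t : ℕ, 1 ≤ s → s < t → ∀ U : Set X, MutuallyLabeling c U →
      x s ∈ U → x t ∈ U → ¬ NNMistake c x t := by
    intro s t hs hst U hML hxs hxt hmis
    obtain ⟨s₀, hs₀1, hs₀t, hnear, hlab⟩ := hmis
    have h1 : edist (x t) (x s₀) ≤ edist (x t) (x s) := hnear s hs hst
    have h2 : edist (x t) (x s) < margin c (x t) := hML (x t) hxt (x s) hxs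
    have h3 : margin c (x t) ≤ edist (x t) (x s₀) := by
      unfold margin
      exact iInf₂_le (x s₀) hlab
    exact absurd (h3.trans_lt (h1.trans_lt h2)) (lt_irrefl _)
  have hinj : Set.InjOn f Sin := by
    intro t ht t' ht' hft
    by_contra hne
    rcases lt_or_gt_of_ne hne with hlt | hlt
    · have h1 := hfmem t ht.2
      have h2 := hfmem t' ht'.2
      rw [hft] at h1
      exact key t t' (le_trans (by norm_num) ht.1.1) hlt (f t') (hU _ h2.1) h1.2 h2.2 ht'.1.2.2
    · have h1 := hfmem t ht.2
      have h2 := hfmem t' ht'.2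
      rw [hft] at h1
      exact key t' t (le_trans (by norm_num) ht'.1.1) hlt (f t') (hU _ h2.1) h2.2 h1.2 ht.1.2.2
  have hmaps : ∀ t ∈ Sin, f t ∈ (𝒰 : Set (Set X)) := fun t ht => (hfmem t ht.2).1
  have hSin_card : Sin.ncard ≤ 𝒰.card := by
    have := Set.ncard_le_ncard_of_injOn f hmaps hinj (𝒰 : Set (Set X)).toFinite
    simpa using this
  calc S.ncard ≤ (Sin ∪ Sout).ncard :=
        Set.ncard_le_ncard hsub ((hfin Sin fun t ht => Set.mem_Icc.mpr ⟨ht.1.1, ht.1.2.1⟩).union hSoutfin)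
    _ ≤ Sin.ncard + Sout.ncard := Set.ncard_union_le _ _
    _ ≤ 𝒰.card + Sout.ncard := by omega

lemma NML_attained {X Y : Type*} [MetricSpace X] (c : X → Y) (V : Set X) (n : ℕ)
    (h : NML c V < (n : ℝ≥0∞)) : ∃ k : ℕ, k < n ∧ NML c V = (k : ℝ≥0∞) := by
  classical
  set S : Set ℕ := {m : ℕ | ∃ 𝒰 : Finset (Set X), (∀ U ∈ 𝒰, MutuallyLabeling c U) ∧
    (V ⊆ ⋃ U ∈ 𝒰, U) ∧ 𝒰.card = m} with hS
  obtain ⟨𝒰₀, h1, h2, h3⟩ : ∃ 𝒰 : Finset (Set X), ∃ _ : (∀ U ∈ 𝒰, MutuallyLabeling c U),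
      ∃ _ : (V ⊆ ⋃ U ∈ 𝒰, U), (𝒰.card : ℝ≥0∞) < (n : ℝ≥0∞) := by
    rw [NML] at h
    simpa only [iInf_lt_iff] using h
  have hSne : S.Nonempty := ⟨𝒰₀.card, 𝒰₀, h1, h2, rfl⟩
  set k := sInf S with hk
  obtain ⟨𝒰₁, hg1, hg2, hg3⟩ : k ∈ S := Nat.sInf_mem hSne
  have hle : NML c V ≤ (k : ℝ≥0∞) := by
    rw [NML]
    refine iInf_le_of_le 𝒰₁ (iInf_le_of_le hg1 (iInf_le_of_le hg2 ?_))
    rw [hg3]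
  have hge : (k : ℝ≥0∞) ≤ NML c V := by
    rw [NML]
    refine le_iInf fun 𝒰 => le_iInf fun hu1 => le_iInf fun hu2 => ?_
    exact Nat.cast_le.mpr (Nat.sInf_le ⟨𝒰, hu1, hu2, rfl⟩)
  refine ⟨k, ?_, le_antisymm hle hge⟩
  have hkcard : k ≤ 𝒰₀.card := Nat.sInf_le ⟨𝒰₀, h1, h2, rfl⟩
  have hcn : 𝒰₀.card < n := by exact_mod_cast h3
  omega


lemma NN_tele_eq : ∀ N : ℕ, 2 ≤ N →
    ∑ T ∈ Finset.range N, (if 2 ≤ T then (1/((T:ℝ)-1) - 1/(T:ℝ)) else 0)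
      = 1 - 1/((N:ℝ)-1) := by
  intro N
  induction N with
  | zero => omega
  | succ N ih =>
    intro h
    by_cases hN : 2 ≤ N
    · rw [Finset.sum_range_succ, ih hN, if_pos hN]
      have h2 : (2:ℝ) ≤ (N:ℝ) := by exact_mod_cast hN
      have hne1 : (N:ℝ) - 1 ≠ 0 := by linarith
      have hne2 : (N:ℝ) ≠ 0 := by linarith
      push_cast
      rw [show ((N:ℝ) + 1 - 1) = N by ring]
      ring
    · have hN1 : N = 1 := by omega
      subst hN1
      norm_num [Finset.sum_range_succ]


lemma NN_core {X Y Ω : Type*} [MetricSpace X]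
    [MeasurableSpace X] [BorelSpace X]
    {mΩ : MeasurableSpace Ω} (P : Measure Ω) [IsProbabilityMeasure P]
    (ℱ : Filtration ℕ mΩ) (ν : Measure X)
    (c : X → Y)
    (Xp : ℕ → Ω → X) (hadapt : ∀ t, 1 ≤ t → Measurable[ℱ t] (Xp t))
    (μa : ℕ → Ω → Measure X) (hprob : ∀ t ω, IsProbabilityMeasure (μa t ω))
    (hmeas : ∀ t, 1 ≤ t → ∀ A : Set X, MeasurableSet A →
      Measurable[ℱ (t - 1)] fun ω => μa t ω A)
    (hcond : ∀ t, 1 ≤ t → ∀ A : Set X, MeasurableSet A →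
      (fun ω => (μa t ω A).toReal) =ᵐ[P]
        MeasureTheory.condExp (ℱ (t - 1)) P
          ((Xp t ⁻¹' A).indicator fun _ => (1 : ℝ)))
    (eps : ℝ≥0∞ → ℝ≥0∞) (heps : ∀ v, eps v ≤ 1)
    (hsmooth : ∀ A : Set X, MeasurableSet A → ∀ t, 1 ≤ t →
      ∀ᵐ ω ∂P, μa t ω A ≤ eps (ν A))
    (p : ℝ) (hp0 : 0 < p) (hp1 : p < 1) (T k : ℕ) (hT : 2 ≤ T) :
    P {ω : Ω | ¬ ((({t : ℕ | 2 ≤ t ∧ t ≤ T ∧ NNMistake c (fun s => Xp s ω) t}).ncard : ℝ≥0∞) ≤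
        (k : ℝ≥0∞) + (T : ℝ≥0∞) * (⨅ (V : Set X) (_ : MeasurableSet V)
          (_ : NML c V ≤ (k : ℝ≥0∞)), eps (ν (Set.univ \ V))) +
        ENNReal.ofReal (Real.sqrt (2 * T * Real.log (2 * T / p))))}
      ≤ ENNReal.ofReal (p ^ 4 / (16 * (T : ℝ) ^ 4)) := by
  classical
  set E : ℝ≥0∞ := ⨅ (V : Set X) (_ : MeasurableSet V)
      (_ : NML c V ≤ (k : ℝ≥0∞)), eps (ν (Set.univ \ V)) with hE
  set a : ℝ := Real.sqrt (2 * T * Real.log (2 * T / p)) with ha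
  have hTR : (2:ℝ) ≤ (T:ℝ) := by exact_mod_cast hT
  have hT0 : (0:ℝ) < T := by linarith
  have hx1 : 1 < 2 * (T:ℝ) / p := (one_lt_div hp0).mpr (by linarith)
  have hlog : 0 < Real.log (2 * T / p) := Real.log_pos hx1
  have harg : 0 < 2 * (T:ℝ) * Real.log (2 * T / p) := by positivity
  have ha0 : 0 < a := Real.sqrt_pos.mpr harg
  have hsq : a ^ 2 = 2 * T * Real.log (2 * T / p) := Real.sq_sqrt harg.le
  by_cases hEtop : E = ⊤
  · have hempty : {ω : Ω | ¬ ((({t : ℕ | 2 ≤ t ∧ t ≤ T ∧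
        NNMistake c (fun s => Xp s ω) t}).ncard : ℝ≥0∞) ≤
        (k : ℝ≥0∞) + (T : ℝ≥0∞) * E + ENNReal.ofReal a)} = ∅ := by
      apply Set.eq_empty_iff_forall_notMem.mpr
      intro ω hω
      apply hω
      rw [hEtop, ENNReal.mul_top (by exact_mod_cast (by omega : T ≠ 0))]
      simp
    rw [hempty]
    simp
  -- key step: for every positive δ with T·δ ≤ a
  have key : ∀ δ : ℝ, 0 < δ → (T:ℝ) * δ ≤ a →
      P {ω : Ω | ¬ ((({t : ℕ | 2 ≤ t ∧ t ≤ T ∧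
          NNMistake c (fun s => Xp s ω) t}).ncard : ℝ≥0∞) ≤
          (k : ℝ≥0∞) + (T : ℝ≥0∞) * E + ENNReal.ofReal a)}
        ≤ ENNReal.ofReal (Real.exp (-(2 * (a - T * δ) ^ 2 / ((T:ℝ) - 1)))) := by
    intro δ hδ hδa
    have hlt : E < E + ENNReal.ofReal δ :=
      ENNReal.lt_add_right hEtop (ENNReal.ofReal_pos.mpr hδ).ne'
    obtain ⟨V, hVmeas, hVk, hVe⟩ : ∃ V, ∃ _ : MeasurableSet V, ∃ _ : NML c V ≤ (k:ℝ≥0∞),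
        eps (ν (Set.univ \ V)) < E + ENNReal.ofReal δ := by
      have h2 := hlt
      conv_lhs at h2 => rw [hE]
      simpa only [iInf_lt_iff] using h2
    obtain ⟨𝒰, hUml, hUcov, hUcard⟩ : ∃ 𝒰 : Finset (Set X),
        (∀ U ∈ 𝒰, MutuallyLabeling c U) ∧ (V ⊆ ⋃ U ∈ 𝒰, U) ∧ 𝒰.card ≤ k := by
      have hk1 : NML c V < ((k + 1 : ℕ) : ℝ≥0∞) :=
        lt_of_le_of_lt hVk (by exact_mod_cast Nat.lt_succ_self k)
      rw [NML] at hk1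
      simp only [iInf_lt_iff] at hk1
      obtain ⟨𝒰, h1, h2, h3⟩ := hk1
      refine ⟨𝒰, h1, h2, ?_⟩
      have : 𝒰.card < k + 1 := by exact_mod_cast h3
      omega
    set A : Set X := Set.univ \ V with hA
    have hAmeas : MeasurableSet A := MeasurableSet.univ.diff hVmeas
    set Z : ℕ → Ω → ℝ := fun t ω => if Xp t ω ∈ A then 1 else 0 with hZ
    set cf : ℕ → Ω → ℝ := fun t ω => (μa t ω A).toReal with hcf
    have hZmeas : ∀ t, 2 ≤ t → Measurable[ℱ t] (Z t) := by
      intro t ht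
      have hpre : MeasurableSet[ℱ t] (Xp t ⁻¹' A) := (hadapt t (by omega)) hAmeas
      exact Measurable.ite hpre measurable_const measurable_const
    have hZ01 : ∀ t ω, Z t ω = 0 ∨ Z t ω = 1 := by
      intro t ω
      by_cases h : Xp t ω ∈ A <;> simp [hZ, h]
    have hcmeas : ∀ t, 2 ≤ t → Measurable[ℱ (t - 1)] (cf t) :=
      fun t ht => (hmeas t (by omega) A hAmeas).ennreal_toReal
    have hc01 : ∀ t ω, 0 ≤ cf t ω ∧ cf t ω ≤ 1 := by
      intro t ω
      refine ⟨ENNReal.toReal_nonneg, ?_⟩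
      haveI := hprob t ω
      have h1 : μa t ω A ≤ 1 := prob_le_one
      have := ENNReal.toReal_mono (by simp) h1
      simpa using this
    have hadj : ∀ t, 2 ≤ t → ∀ f : Ω → ℝ, Measurable[ℱ (t - 1)] f →
        (∃ C, ∀ ω, |f ω| ≤ C) → ∫ ω, f ω * Z t ω ∂P = ∫ ω, f ω * cf t ω ∂P := by
      rintro t ht f hfm ⟨C, hC⟩
      have h1t : 1 ≤ t := by omega
      have hm : ℱ (t - 1) ≤ mΩ := ℱ.le (t - 1)
      have hfm0 : Measurable f := hfm.mono hm le_rfl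
      set ind : Ω → ℝ := (Xp t ⁻¹' A).indicator (fun _ => (1:ℝ)) with hind
      have hpre0 : MeasurableSet (Xp t ⁻¹' A) :=
        ((hadapt t h1t).mono (ℱ.le t) le_rfl) hAmeas
      have hindmeas : Measurable ind := measurable_const.indicator hpre0
      have hindbd : ∀ ω, |ind ω| ≤ 1 := by
        intro ω
        rw [hind, Set.indicator_apply]
        split <;> norm_num
      have hind_int : Integrable ind P := integrable_of_bdd hindmeas 1 hindbd
      have hfind_int : Integrable (fun ω => f ω * ind ω) P := by
        refine integrable_of_bdd (hfm0.mul hindmeas) C ?_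
        intro ω
        rw [abs_mul]
        calc |f ω| * |ind ω| ≤ |f ω| * 1 :=
              mul_le_mul_of_nonneg_left (hindbd ω) (abs_nonneg _)
          _ ≤ C := by rw [mul_one]; exact hC ω
      have hZeq : ∀ ω, Z t ω = ind ω := by
        intro ω
        rw [hZ, hind, Set.indicator_apply]
        simp [Set.mem_preimage]
      have hcnd := hcond t h1t A hAmeas
      calc ∫ ω, f ω * Z t ω ∂P = ∫ ω, f ω * ind ω ∂P := by
            refine integral_congr_ae (Filter.Eventually.of_forall fun ω => ?_)
            show f ω * Z t ω = f ω * ind ω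
            rw [hZeq]
        _ = ∫ ω, (MeasureTheory.condExp (ℱ (t - 1)) P (fun ω => f ω * ind ω)) ω ∂P :=
            (integral_condExp hm).symm
        _ = ∫ ω, f ω * (MeasureTheory.condExp (ℱ (t - 1)) P ind) ω ∂P :=
            integral_congr_ae (condExp_mul_of_stronglyMeasurable_left hfm.stronglyMeasurable
              hfind_int hind_int)
        _ = ∫ ω, f ω * cf t ω ∂P := by
            refine integral_congr_ae ?_
            filter_upwards [hcnd] with ω hω
            rw [← hω]
    have hgood : ∀ᵐ ω ∂P, ∀ t, t ∈ Finset.Icc 2 T → μa t ω A ≤ eps (ν A) := by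
      rw [MeasureTheory.ae_all_iff]
      intro t
      by_cases ht : t ∈ Finset.Icc 2 T
      · have h1t : 1 ≤ t := by
          rw [Finset.mem_Icc] at ht; omega
        filter_upwards [hsmooth A hAmeas t h1t] with ω hω
        exact fun _ => hω
      · exact Filter.Eventually.of_forall fun ω h => absurd h ht
    have hsubF : {ω : Ω | ¬ ((({t : ℕ | 2 ≤ t ∧ t ≤ T ∧
          NNMistake c (fun s => Xp s ω) t}).ncard : ℝ≥0∞) ≤
          (k : ℝ≥0∞) + (T : ℝ≥0∞) * E + ENNReal.ofReal a)}
          ∩ {ω : Ω | ∀ t, t ∈ Finset.Icc 2 T → μa t ω A ≤ eps (ν A)}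
        ⊆ {ω : Ω | a - T * δ ≤ zSum Z cf T ω} := by
      rintro ω ⟨hωF, hωg⟩
      set M : ℕ := ({t : ℕ | 2 ≤ t ∧ t ≤ T ∧ NNMistake c (fun s => Xp s ω) t}).ncard with hM
      have hlt2 : (k : ℝ≥0∞) + (T : ℝ≥0∞) * E + ENNReal.ofReal a < (M : ℝ≥0∞) :=
        not_le.mp hωF
      have hTE_ne : (T : ℝ≥0∞) * E ≠ ⊤ := ENNReal.mul_ne_top (ENNReal.natCast_ne_top T) hEtop
      have hL_ne : (k : ℝ≥0∞) + (T : ℝ≥0∞) * E + ENNReal.ofReal a ≠ ⊤ := by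
        apply ENNReal.add_ne_top.mpr
        exact ⟨ENNReal.add_ne_top.mpr ⟨ENNReal.natCast_ne_top k, hTE_ne⟩, ENNReal.ofReal_ne_top⟩
      have hMreal : (k : ℝ) + (T:ℝ) * E.toReal + a < (M : ℝ) := by
        have h1 := (ENNReal.toReal_lt_toReal hL_ne (ENNReal.natCast_ne_top M)).mpr hlt2
        rw [ENNReal.toReal_add (ENNReal.add_ne_top.mpr ⟨ENNReal.natCast_ne_top k, hTE_ne⟩)
          ENNReal.ofReal_ne_top,
          ENNReal.toReal_add (ENNReal.natCast_ne_top k) hTE_ne,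
          ENNReal.toReal_mul, ENNReal.toReal_ofReal ha0.le] at h1
        simpa using h1
      have hpath : M ≤ k + ({t : ℕ | 2 ≤ t ∧ t ≤ T ∧ Xp t ω ∉ V}).ncard := by
        have h1 := NN_pathwise c (fun s => Xp s ω) V 𝒰 hUml hUcov T
        have h2 : 𝒰.card + ({t : ℕ | 2 ≤ t ∧ t ≤ T ∧ Xp t ω ∉ V}).ncard
            ≤ k + ({t : ℕ | 2 ≤ t ∧ t ≤ T ∧ Xp t ω ∉ V}).ncard := by omega
        exact le_trans h1 h2
      have hNout : (({t : ℕ | 2 ≤ t ∧ t ≤ T ∧ Xp t ω ∉ V}).ncard : ℝ)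
          = ∑ t ∈ Finset.Icc 2 T, Z t ω := by
        have hseteq : {t : ℕ | 2 ≤ t ∧ t ≤ T ∧ Xp t ω ∉ V}
            = ↑((Finset.Icc 2 T).filter (fun t => Xp t ω ∈ A)) := by
          ext t
          simp only [Set.mem_setOf_eq, Finset.coe_filter, Finset.mem_Icc, hA, Set.mem_diff,
            Set.mem_univ, true_and]
          tauto
        rw [hseteq, Set.ncard_coe_finset]
        simp only [hZ]
        rw [Finset.sum_boole]
      have hcfb : ∀ t ∈ Finset.Icc 2 T, cf t ω ≤ E.toReal + δ := by
        intro t ht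
        have h1 : μa t ω A ≤ eps (ν A) := hωg t ht
        have h3 : μa t ω A ≤ E + ENNReal.ofReal δ := le_trans h1 hVe.le
        calc cf t ω ≤ (E + ENNReal.ofReal δ).toReal :=
              ENNReal.toReal_mono (ENNReal.add_ne_top.mpr ⟨hEtop, ENNReal.ofReal_ne_top⟩) h3
          _ = E.toReal + δ := by
              rw [ENNReal.toReal_add hEtop ENNReal.ofReal_ne_top,
                ENNReal.toReal_ofReal hδ.le]
      have hsum_cf : ∑ t ∈ Finset.Icc 2 T, cf t ω
          ≤ (T:ℝ) * E.toReal - E.toReal + (T:ℝ) * δ := by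
        have h1 : ∑ t ∈ Finset.Icc 2 T, cf t ω ≤ ((T - 1 : ℕ) : ℝ) * (E.toReal + δ) := by
          calc ∑ t ∈ Finset.Icc 2 T, cf t ω ≤ ∑ _t ∈ Finset.Icc 2 T, (E.toReal + δ) :=
                Finset.sum_le_sum hcfb
            _ = ((T - 1 : ℕ) : ℝ) * (E.toReal + δ) := by
                rw [Finset.sum_const, nsmul_eq_mul, Nat.card_Icc]
                have hcc : T + 1 - 2 = T - 1 := by omega
                rw [hcc]
        have h2 : ((T - 1 : ℕ) : ℝ) = (T:ℝ) - 1 := by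
          rw [Nat.cast_sub (by omega)]; norm_num
        rw [h2] at h1
        nlinarith [ENNReal.toReal_nonneg (a := E)]
      have hMk : (M : ℝ) ≤ (k : ℝ) + ∑ t ∈ Finset.Icc 2 T, Z t ω := by
        rw [← hNout]
        exact_mod_cast hpath
      have hE0 : (0:ℝ) ≤ E.toReal := ENNReal.toReal_nonneg
      show a - T * δ ≤ zSum Z cf T ω
      rw [zSum, Finset.sum_sub_distrib]
      linarith
    have hb0 : 0 ≤ a - T * δ := by linarith
    have hbadnull : P {ω : Ω | ¬ ∀ t, t ∈ Finset.Icc 2 T → μa t ω A ≤ eps (ν A)} = 0 :=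
      ae_iff.mp hgood
    calc P {ω : Ω | ¬ ((({t : ℕ | 2 ≤ t ∧ t ≤ T ∧
            NNMistake c (fun s => Xp s ω) t}).ncard : ℝ≥0∞) ≤
            (k : ℝ≥0∞) + (T : ℝ≥0∞) * E + ENNReal.ofReal a)}
        ≤ P ({ω : Ω | a - T * δ ≤ zSum Z cf T ω}
            ∪ {ω : Ω | ¬ ∀ t, t ∈ Finset.Icc 2 T → μa t ω A ≤ eps (ν A)}) := by
          apply measure_mono
          intro ω hω
          by_cases hg : ∀ t, t ∈ Finset.Icc 2 T → μa t ω A ≤ eps (ν A)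
          · exact Or.inl (hsubF ⟨hω, hg⟩)
          · exact Or.inr hg
      _ ≤ P {ω : Ω | a - T * δ ≤ zSum Z cf T ω}
          + P {ω : Ω | ¬ ∀ t, t ∈ Finset.Icc 2 T → μa t ω A ≤ eps (ν A)} :=
          measure_union_le _ _
      _ = P {ω : Ω | a - T * δ ≤ zSum Z cf T ω} := by rw [hbadnull, add_zero]
      _ ≤ ENNReal.ofReal (Real.exp (-(2 * (a - T * δ) ^ 2 / ((T:ℝ) - 1)))) :=
          azuma_tail P ℱ Z cf hZmeas hZ01 hcmeas hc01 hadj T hT (a - T * δ) hb0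
  -- pass to the limit δ → 0
  have htend0 : Filter.Tendsto (fun n : ℕ => (T:ℝ) * (1 / ((n:ℝ) + 1))) atTop (nhds 0) := by
    have h0 : Filter.Tendsto (fun n : ℕ => 1 / ((n:ℝ) + 1)) atTop (nhds 0) :=
      tendsto_one_div_add_atTop_nhds_zero_nat
    simpa using h0.const_mul (T:ℝ)
  have htendre : Filter.Tendsto (fun n : ℕ => a - (T:ℝ) * (1 / ((n:ℝ) + 1))) atTop (nhds a) := by
    have hc : Filter.Tendsto (fun _ : ℕ => a) atTop (nhds a) := tendsto_const_nhds
    simpa using hc.sub htend0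
  have hcont : Continuous (fun x : ℝ => ENNReal.ofReal (Real.exp (-(2 * x ^ 2 / ((T:ℝ) - 1))))) := by
    refine ENNReal.continuous_ofReal.comp (Real.continuous_exp.comp ?_)
    exact ((continuous_const.mul (continuous_pow 2)).div_const ((T:ℝ) - 1)).neg
  have htend : Filter.Tendsto
      (fun n : ℕ => ENNReal.ofReal (Real.exp (-(2 * (a - (T:ℝ) * (1 / ((n:ℝ) + 1))) ^ 2 / ((T:ℝ) - 1)))))
      atTop (nhds (ENNReal.ofReal (Real.exp (-(2 * a ^ 2 / ((T:ℝ) - 1)))))) :=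
    (hcont.tendsto a).comp htendre
  have hev : ∀ᶠ (n : ℕ) in atTop, P {ω : Ω | ¬ ((({t : ℕ | 2 ≤ t ∧ t ≤ T ∧
      NNMistake c (fun s => Xp s ω) t}).ncard : ℝ≥0∞) ≤
      (k : ℝ≥0∞) + (T : ℝ≥0∞) * E + ENNReal.ofReal a)}
      ≤ ENNReal.ofReal (Real.exp (-(2 * (a - (T:ℝ) * (1 / ((n:ℝ) + 1))) ^ 2 / ((T:ℝ) - 1)))) := by
    have h1 : ∀ᶠ n : ℕ in atTop, (T:ℝ) * (1 / ((n:ℝ) + 1)) < a :=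
      htend0.eventually_lt_const ha0
    filter_upwards [h1] with n hn
    exact key (1 / ((n:ℝ) + 1)) (by positivity) hn.le
  have hlim : P {ω : Ω | ¬ ((({t : ℕ | 2 ≤ t ∧ t ≤ T ∧
      NNMistake c (fun s => Xp s ω) t}).ncard : ℝ≥0∞) ≤
      (k : ℝ≥0∞) + (T : ℝ≥0∞) * E + ENNReal.ofReal a)}
      ≤ ENNReal.ofReal (Real.exp (-(2 * a ^ 2 / ((T:ℝ) - 1)))) :=
    ge_of_tendsto htend hev
  refine hlim.trans (ENNReal.ofReal_le_ofReal ?_)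
  -- real estimate
  have hstep1 : Real.exp (-(2 * a ^ 2 / ((T:ℝ) - 1)))
      ≤ Real.exp (-(4 * Real.log (2 * T / p))) := by
    rw [Real.exp_le_exp, neg_le_neg_iff]
    calc (4:ℝ) * Real.log (2 * T / p) = 2 * a ^ 2 / (T:ℝ) := by
          rw [hsq]; field_simp; ring
      _ ≤ 2 * a ^ 2 / ((T:ℝ) - 1) :=
          div_le_div_of_nonneg_left (by positivity) (by linarith) (by linarith)
  refine hstep1.trans ?_
  have hx0 : (0:ℝ) < 2 * T / p := by positivity
  have hexp4 : Real.exp (-(4 * Real.log (2 * T / p))) = ((2 * (T:ℝ) / p) ^ (4:ℕ))⁻¹ := by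
    rw [Real.exp_neg]
    congr 1
    rw [show (4:ℝ) * Real.log (2 * T / p) = ((4:ℕ):ℝ) * Real.log (2 * T / p) by norm_num,
      Real.exp_nat_mul, Real.exp_log hx0]
  rw [hexp4]
  rw [show ((2 * (T:ℝ) / p) ^ (4:ℕ))⁻¹ = p ^ 4 / (16 * (T:ℝ) ^ 4) by
    field_simp; ring]

/-- High-probability mistake bound for the 1-nearest neighbor rule against an adversary
with smoothness rate `ε`, for a Borel concept with `ν`-null boundary: with probability
at least `1 - p`, simultaneously for all `T ≥ 1` the number `M_T` of mistakes up to time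
`T` is at most `min { T , inf_V [ N_ML(V) + T·ε(ν(X \ V)) + √(2T log(2T/p)) ] }`. -/
theorem nearestNeighbor_mistake_bound
    {X Y Ω : Type*} [MetricSpace X] [TopologicalSpace.SeparableSpace X]
    [MeasurableSpace X] [BorelSpace X]
    [Countable Y] [MeasurableSpace Y] [MeasurableSingletonClass Y]
    {mΩ : MeasurableSpace Ω} (P : Measure Ω) [IsProbabilityMeasure P]
    (ℱ : Filtration ℕ mΩ)
    (ν : Measure X) [IsFiniteMeasure ν]
    (c : X → Y) (hc : Measurable c)
    -- the boundary set is `ν`-null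
    (hbd : ν {x : X | margin c x = 0} = 0)
    -- the adapted process of instances
    (Xp : ℕ → Ω → X) (hadapt : ∀ t, 1 ≤ t → Measurable[ℱ t] (Xp t))
    -- the adversary: `μa t ω` is the conditional law of `Xp t` given `ℱ (t-1)`
    (μa : ℕ → Ω → Measure X) (hprob : ∀ t ω, IsProbabilityMeasure (μa t ω))
    (hmeas : ∀ t, 1 ≤ t → ∀ A : Set X, MeasurableSet A →
      Measurable[ℱ (t - 1)] fun ω => μa t ω A)
    (hcond : ∀ t, 1 ≤ t → ∀ A : Set X, MeasurableSet A →
      (fun ω => (μa t ω A).toReal) =ᵐ[P]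
        MeasureTheory.condExp (ℱ (t - 1)) P
          ((Xp t ⁻¹' A).indicator fun _ => (1 : ℝ)))
    -- the adversary has smoothness rate `eps : [0,∞) → [0,1]`
    (eps : ℝ≥0∞ → ℝ≥0∞) (heps : ∀ v, eps v ≤ 1)
    (hsmooth : ∀ A : Set X, MeasurableSet A → ∀ t, 1 ≤ t →
      ∀ᵐ ω ∂P, μa t ω A ≤ eps (ν A)) :
    ∀ p : ℝ, 0 < p → p < 1 →
      ENNReal.ofReal (1 - p) ≤
        P {ω : Ω | ∀ T : ℕ, 1 ≤ T →
          (({t : ℕ | 2 ≤ t ∧ t ≤ T ∧ NNMistake c (fun s => Xp s ω) t}).ncard : ℝ≥0∞) ≤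
            min (T : ℝ≥0∞)
              (⨅ (V : Set X) (_ : MeasurableSet V),
                NML c V + (T : ℝ≥0∞) * eps (ν (Set.univ \ V)) +
                  ENNReal.ofReal (Real.sqrt (2 * T * Real.log (2 * T / p))))} := by
  intro p hp0 hp1
  classical
  set Q : ℕ → ℕ → Ω → Prop := fun T k ω =>
    ((({t : ℕ | 2 ≤ t ∧ t ≤ T ∧ NNMistake c (fun s => Xp s ω) t}).ncard : ℝ≥0∞) ≤
      (k : ℝ≥0∞) + (T : ℝ≥0∞) * (⨅ (V : Set X) (_ : MeasurableSet V)
        (_ : NML c V ≤ (k : ℝ≥0∞)), eps (ν (Set.univ \ V))) +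
      ENNReal.ofReal (Real.sqrt (2 * T * Real.log (2 * T / p)))) with hQ
  set G : Set Ω := {ω : Ω | ∀ T k : ℕ, 2 ≤ T → k + 1 ≤ T → Q T k ω} with hG
  -- Step A : P Gᶜ ≤ ofReal p
  have hstepA : P Gᶜ ≤ ENNReal.ofReal p := by
    set Fset : ℕ → ℕ → Set Ω := fun T k =>
      if 2 ≤ T ∧ k + 1 ≤ T then {ω : Ω | ¬ Q T k ω} else ∅ with hFset
    have hGc : Gᶜ ⊆ ⋃ (T : ℕ) (k : ℕ), Fset T k := by
      intro ω hω
      simp only [hG, Set.mem_compl_iff, Set.mem_setOf_eq, not_forall] at hω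
      obtain ⟨T, k, hT, hk, hno⟩ := hω
      have hmem : ω ∈ Fset T k := by
        simp only [hFset]
        rw [if_pos (⟨hT, hk⟩ : 2 ≤ T ∧ k + 1 ≤ T)]
        exact hno
      exact Set.mem_iUnion.mpr ⟨T, Set.mem_iUnion.mpr ⟨k, hmem⟩⟩
    have hFb : ∀ T k : ℕ, P (Fset T k) ≤
        (if 2 ≤ T ∧ k + 1 ≤ T then ENNReal.ofReal (p ^ 4 / (16 * (T:ℝ) ^ 4)) else 0) := by
      intro T k
      by_cases h : 2 ≤ T ∧ k + 1 ≤ T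
      · rw [hFset]
        simp only [if_pos h]
        exact NN_core P ℱ ν c Xp hadapt μa hprob hmeas hcond eps heps hsmooth
          p hp0 hp1 T k h.1
      · rw [hFset]
        simp only [if_neg h]
        simp
    have hinner : ∀ T : ℕ, ∑' k : ℕ, P (Fset T k) ≤
        (if 2 ≤ T then ENNReal.ofReal (p * (1/((T:ℝ)-1) - 1/(T:ℝ))) else 0) := by
      intro T
      by_cases hT : 2 ≤ T
      · rw [if_pos hT]
        have hTR : (2:ℝ) ≤ (T:ℝ) := by exact_mod_cast hT
        have h1 : ∑' k : ℕ, P (Fset T k) ≤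
            ∑' k : ℕ, (if k + 1 ≤ T then ENNReal.ofReal (p ^ 4 / (16 * (T:ℝ) ^ 4)) else 0) := by
          refine ENNReal.tsum_le_tsum fun k => ?_
          refine (hFb T k).trans ?_
          by_cases hk : k + 1 ≤ T
          · rw [if_pos ⟨hT, hk⟩, if_pos hk]
          · rw [if_neg (fun hh => hk hh.2), if_neg hk]
        refine h1.trans ?_
        have h2 : ∑' k : ℕ, (if k + 1 ≤ T then ENNReal.ofReal (p ^ 4 / (16 * (T:ℝ) ^ 4)) else 0)
            = ∑ k ∈ Finset.range T, (if k + 1 ≤ T then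
                ENNReal.ofReal (p ^ 4 / (16 * (T:ℝ) ^ 4)) else 0) := by
          refine tsum_eq_sum fun k hk => ?_
          rw [Finset.mem_range, not_lt] at hk
          rw [if_neg (by omega)]
        rw [h2]
        have h3 : ∑ k ∈ Finset.range T, (if k + 1 ≤ T then
            ENNReal.ofReal (p ^ 4 / (16 * (T:ℝ) ^ 4)) else 0)
            ≤ ∑ _k ∈ Finset.range T, ENNReal.ofReal (p ^ 4 / (16 * (T:ℝ) ^ 4)) := by
          refine Finset.sum_le_sum fun k _ => ?_
          split <;> simp
        refine h3.trans ?_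
        rw [Finset.sum_const, Finset.card_range, nsmul_eq_mul]
        rw [show ((T:ℕ):ℝ≥0∞) = ENNReal.ofReal ((T:ℕ):ℝ) by
          rw [ENNReal.ofReal_natCast]]
        rw [← ENNReal.ofReal_mul (by positivity)]
        refine ENNReal.ofReal_le_ofReal ?_
        have hp4 : p ^ 4 ≤ p := by nlinarith [pow_le_one₀ (n := 3) hp0.le hp1.le, hp0]
        have hTpos : (0:ℝ) < (T:ℝ) := by linarith
        have e1 : (T:ℝ) * (p ^ 4 / (16 * (T:ℝ) ^ 4)) = p ^ 4 / (16 * (T:ℝ) ^ 3) := by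
          field_simp
        have e2 : p * (1/((T:ℝ)-1) - 1/(T:ℝ)) = p / (((T:ℝ)-1) * (T:ℝ)) := by
          have hh1 : ((T:ℝ)-1) ≠ 0 := by linarith
          have hh2 : (T:ℝ) ≠ 0 := by linarith
          field_simp
          ring
        rw [e1, e2]
        rw [div_le_div_iff₀ (by positivity)
          (mul_pos (by linarith : (0:ℝ) < (T:ℝ)-1) (by linarith : (0:ℝ) < (T:ℝ)))]
        calc p ^ 4 * (((T:ℝ)-1) * (T:ℝ)) ≤ p * (((T:ℝ)-1) * (T:ℝ)) :=
              mul_le_mul_of_nonneg_right hp4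
                (mul_nonneg (by linarith) (by linarith))
          _ ≤ p * (16 * (T:ℝ) ^ 3) := by
              refine mul_le_mul_of_nonneg_left ?_ hp0.le
              nlinarith [hTR, hTpos, sq_nonneg ((T:ℝ) - 1), pow_pos hTpos 3]
      · rw [if_neg hT]
        have : ∀ k : ℕ, P (Fset T k) = 0 := by
          intro k
          have := hFb T k
          rw [if_neg (fun hh => hT hh.1)] at this
          exact le_antisymm this zero_le
        simp [this]
    calc P Gᶜ ≤ P (⋃ (T : ℕ) (k : ℕ), Fset T k) := measure_mono hGc
      _ ≤ ∑' T : ℕ, P (⋃ k : ℕ, Fset T k) := measure_iUnion_le _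
      _ ≤ ∑' T : ℕ, ∑' k : ℕ, P (Fset T k) :=
          ENNReal.tsum_le_tsum fun T => measure_iUnion_le _
      _ ≤ ∑' T : ℕ, (if 2 ≤ T then ENNReal.ofReal (p * (1/((T:ℝ)-1) - 1/(T:ℝ))) else 0) :=
          ENNReal.tsum_le_tsum hinner
      _ ≤ ENNReal.ofReal p := by
          rw [ENNReal.tsum_eq_iSup_sum]
          refine iSup_le fun s => ?_
          set N : ℕ := s.sup id + 1 with hN
          have hsub : s ⊆ Finset.range N := by
            intro t ht
            rw [Finset.mem_range, hN]
            exact Nat.lt_succ_of_le (Finset.le_sup (f := id) ht)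
          have hmono : ∑ T ∈ s, (if 2 ≤ T then
              ENNReal.ofReal (p * (1/((T:ℝ)-1) - 1/(T:ℝ))) else 0)
              ≤ ∑ T ∈ Finset.range N, (if 2 ≤ T then
                ENNReal.ofReal (p * (1/((T:ℝ)-1) - 1/(T:ℝ))) else 0) :=
            Finset.sum_le_sum_of_subset_of_nonneg hsub (fun _ _ _ => zero_le)
          refine hmono.trans ?_
          have hterm : ∀ T : ℕ, (if 2 ≤ T then
              ENNReal.ofReal (p * (1/((T:ℝ)-1) - 1/(T:ℝ))) else 0)
              = ENNReal.ofReal (if 2 ≤ T then p * (1/((T:ℝ)-1) - 1/(T:ℝ)) else 0) := by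
            intro T
            split <;> simp
          simp only [hterm]
          rw [← ENNReal.ofReal_sum_of_nonneg]
          · refine ENNReal.ofReal_le_ofReal ?_
            have hfac : ∀ T : ℕ, (if 2 ≤ T then p * (1/((T:ℝ)-1) - 1/(T:ℝ)) else 0)
                = p * (if 2 ≤ T then (1/((T:ℝ)-1) - 1/(T:ℝ)) else 0) := by
              intro T
              split <;> simp
            simp only [hfac]
            rw [← Finset.mul_sum]
            by_cases hN2 : 2 ≤ N
            · rw [NN_tele_eq N hN2]
              have hNR : (2:ℝ) ≤ (N:ℝ) := by exact_mod_cast hN2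
              have : 1 - 1/((N:ℝ)-1) ≤ 1 := by
                have : 0 < (N:ℝ) - 1 := by linarith
                have := one_div_pos.mpr this
                linarith
              nlinarith
            · interval_cases N <;> simp [Finset.sum_range_succ] <;> positivity
          · intro T _
            split
            · rename_i hT2
              have hTR : (2:ℝ) ≤ (T:ℝ) := by exact_mod_cast hT2
              have h1 : 1/(T:ℝ) ≤ 1/((T:ℝ)-1) := by
                apply one_div_le_one_div_of_le <;> linarith
              nlinarith
            · exact le_rfl
  -- Step B : G is contained in the target event
  have hstepB : G ⊆ {ω : Ω | ∀ T : ℕ, 1 ≤ T →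
      (({t : ℕ | 2 ≤ t ∧ t ≤ T ∧ NNMistake c (fun s => Xp s ω) t}).ncard : ℝ≥0∞) ≤
        min (T : ℝ≥0∞) (⨅ (V : Set X) (_ : MeasurableSet V),
          NML c V + (T : ℝ≥0∞) * eps (ν (Set.univ \ V)) +
            ENNReal.ofReal (Real.sqrt (2 * T * Real.log (2 * T / p))))} := by
    intro ω hω T hT1
    have hcard : ({t : ℕ | 2 ≤ t ∧ t ≤ T ∧ NNMistake c (fun s => Xp s ω) t}).ncard ≤ T - 1 :=
      NN_mistakes_card_le c (fun s => Xp s ω) T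
    refine le_min ?_ ?_
    · calc (({t : ℕ | 2 ≤ t ∧ t ≤ T ∧ NNMistake c (fun s => Xp s ω) t}).ncard : ℝ≥0∞)
          ≤ ((T - 1 : ℕ) : ℝ≥0∞) := Nat.cast_le.mpr hcard
        _ ≤ (T : ℝ≥0∞) := Nat.cast_le.mpr (Nat.sub_le T 1)
    · refine le_iInf fun V => le_iInf fun hV => ?_
      by_cases hbig : ((T - 1 : ℕ) : ℝ≥0∞) ≤ NML c V
      · have h1 : (({t : ℕ | 2 ≤ t ∧ t ≤ T ∧
            NNMistake c (fun s => Xp s ω) t}).ncard : ℝ≥0∞) ≤ NML c V :=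
          le_trans (Nat.cast_le.mpr hcard) hbig
        exact h1.trans (le_add_right (le_add_right le_rfl))
      · push_neg at hbig
        obtain ⟨k, hkT, hkeq⟩ := NML_attained c V (T - 1) hbig
        have hT2 : 2 ≤ T := by omega
        have hk1 : k + 1 ≤ T := by omega
        have hQk := hω T k hT2 hk1
        simp only [hQ] at hQk
        have hEk_le : (⨅ (V' : Set X) (_ : MeasurableSet V') (_ : NML c V' ≤ (k:ℝ≥0∞)),
            eps (ν (Set.univ \ V'))) ≤ eps (ν (Set.univ \ V)) :=
          iInf_le_of_le V (iInf_le_of_le hV (iInf_le_of_le (le_of_eq hkeq) le_rfl))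
        calc (({t : ℕ | 2 ≤ t ∧ t ≤ T ∧
            NNMistake c (fun s => Xp s ω) t}).ncard : ℝ≥0∞)
            ≤ (k : ℝ≥0∞) + (T : ℝ≥0∞) * (⨅ (V' : Set X) (_ : MeasurableSet V')
                (_ : NML c V' ≤ (k : ℝ≥0∞)), eps (ν (Set.univ \ V'))) +
              ENNReal.ofReal (Real.sqrt (2 * T * Real.log (2 * T / p))) := hQk
          _ ≤ NML c V + (T : ℝ≥0∞) * eps (ν (Set.univ \ V)) +
              ENNReal.ofReal (Real.sqrt (2 * T * Real.log (2 * T / p))) := by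
              refine add_le_add (add_le_add (le_of_eq hkeq.symm) ?_) le_rfl
              exact mul_le_mul_right hEk_le _
  -- conclusion
  have h2 : (1 : ℝ≥0∞) ≤ P G + P Gᶜ := by
    rw [← measure_univ (μ := P), ← Set.union_compl_self G]
    exact measure_union_le _ _
  have h3 : ENNReal.ofReal (1 - p) ≤ P G := by
    rw [ENNReal.ofReal_sub 1 hp0.le, ENNReal.ofReal_one]
    refine tsub_le_iff_right.mpr ?_
    calc (1:ℝ≥0∞) ≤ P G + P Gᶜ := h2
      _ ≤ P G + ENNReal.ofReal p := add_le_add_right hstepA _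
  exact h3.trans (measure_mono hstepB)
end
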